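/- If Γ ⊢ A : K in declarative Fω.. kinding and A →β B (one-step β-reduction of types), then Γ ⊢ A = B : K (declarative type equality); similarly if Γ ⊢ J kd and J →β K then Γ ⊢ J = K. Consequently kinding is preserved by β-reduction: Γ ⊢ A : K and A →β* B imply Γ ⊢ B : K. -/
import Mathlib


set_option autoImplicit true
set_option maxHeartbeats 1000000
set_option linter.unusedVariables false

/-- Shapes (simple kinds): `k ::= ∗ | k → k`. -/
inductive SKind : Type
  | star
  | arr (j k : SKind)
/-! ## Ordinary (direct) syntax of Fω.., de Bruijn representation.
A single namespace of variables is used for both term and type variables;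
contexts record which bindings are term bindings and which are type bindings. -/

mutual
/-- Types of Fω..: `A ::= X | ⊤ | ⊥ | A → B | ∀X:K.A | λX:K.A | A B`. -/
inductive Ty : Type
  | var (x : ℕ)
  | top
  | bot
  | arr (a b : Ty)
  | all (k : Kd) (a : Ty)
  | lam (k : Kd) (a : Ty)
  | app (a b : Ty)

/-- Kinds of Fω..: `K ::= A..B | (X:J)→K`. -/
inductive Kd : Type
  | intv (a b : Ty)
  | pi (j : Kd) (k : Kd)
end

/-- Terms of Fω..: `t ::= x | λx:A.t | s t | ΛX:K.t | t A`. -/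
inductive Tm : Type
  | var (x : ℕ)
  | lam (a : Ty) (t : Tm)
  | app (s t : Tm)
  | tlam (k : Kd) (t : Tm)
  | tapp (t : Tm) (a : Ty)

mutual
/-- Shift (weakening): increment all variables `≥ c` by one. -/
def Ty.shift (c : ℕ) : Ty → Ty
  | .var x => if x < c then .var x else .var (x + 1)
  | .top => .top
  | .bot => .bot
  | .arr a b => .arr (a.shift c) (b.shift c)
  | .all k a => .all (k.shift c) (a.shift (c + 1))
  | .lam k a => .lam (k.shift c) (a.shift (c + 1))
  | .app a b => .app (a.shift c) (b.shift c)

def Kd.shift (c : ℕ) : Kd → Kd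
  | .intv a b => .intv (a.shift c) (b.shift c)
  | .pi j k => .pi (j.shift c) (k.shift (c + 1))
end

mutual
/-- Capture-avoiding substitution of the type `v` for type variable `x` in a type. -/
def Ty.subst : Ty → ℕ → Ty → Ty
  | .var y, x, v => if y = x then v else if x < y then .var (y - 1) else .var y
  | .top, _, _ => .top
  | .bot, _, _ => .bot
  | .arr a b, x, v => .arr (a.subst x v) (b.subst x v)
  | .all k a, x, v => .all (k.subst x v) (a.subst (x + 1) (v.shift 0))
  | .lam k a, x, v => .lam (k.subst x v) (a.subst (x + 1) (v.shift 0))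
  | .app a b, x, v => .app (a.subst x v) (b.subst x v)

/-- Capture-avoiding substitution of the type `v` for type variable `x` in a kind. -/
def Kd.subst : Kd → ℕ → Ty → Kd
  | .intv a b, x, v => .intv (a.subst x v) (b.subst x v)
  | .pi j k, x, v => .pi (j.subst x v) (k.subst (x + 1) (v.shift 0))
end

/-- Shift on terms (single variable namespace: every binder shifts). -/
def Tm.shift (c : ℕ) : Tm → Tm
  | .var x => if x < c then .var x else .var (x + 1)
  | .lam a t => .lam (a.shift c) (t.shift (c + 1))
  | .app s t => .app (s.shift c) (t.shift c)
  | .tlam k t => .tlam (k.shift c) (t.shift (c + 1))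
  | .tapp t a => .tapp (t.shift c) (a.shift c)

/-- Capture-avoiding substitution of the type `v` for type variable `x` in a term. -/
def Tm.substTy : Tm → ℕ → Ty → Tm
  | .var y, x, _ => if x < y then .var (y - 1) else .var y
  | .lam a t, x, v => .lam (a.subst x v) (t.substTy (x + 1) (v.shift 0))
  | .app s t, x, v => .app (s.substTy x v) (t.substTy x v)
  | .tlam k t, x, v => .tlam (k.subst x v) (t.substTy (x + 1) (v.shift 0))
  | .tapp t a, x, v => .tapp (t.substTy x v) (a.subst x v)

mutual
/-- Strengthening used when substituting a *term* for a variable: type variables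
cannot be hit, only renumbered. -/
def Ty.strTm (x : ℕ) : Ty → Ty
  | .var y => if x < y then .var (y - 1) else .var y
  | .top => .top
  | .bot => .bot
  | .arr a b => .arr (a.strTm x) (b.strTm x)
  | .all k a => .all (k.strTm x) (a.strTm (x + 1))
  | .lam k a => .lam (k.strTm x) (a.strTm (x + 1))
  | .app a b => .app (a.strTm x) (b.strTm x)

def Kd.strTm (x : ℕ) : Kd → Kd
  | .intv a b => .intv (a.strTm x) (b.strTm x)
  | .pi j k => .pi (j.strTm x) (k.strTm (x + 1))
end

/-- Capture-avoiding substitution of the term `v` for term variable `x` in a term. -/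
def Tm.subst : Tm → ℕ → Tm → Tm
  | .var y, x, v => if y = x then v else if x < y then .var (y - 1) else .var y
  | .lam a t, x, v => .lam (a.strTm x) (t.subst (x + 1) (v.shift 0))
  | .app s t, x, v => .app (s.subst x v) (t.subst x v)
  | .tlam k t, x, v => .tlam (k.strTm x) (t.subst (x + 1) (v.shift 0))
  | .tapp t a, x, v => .tapp (t.subst x v) (a.strTm x)

/-- Shape (simple-kind) erasure of kinds: `|A..B| = ∗`, `|(X:J)→K| = |J| → |K|`. -/
def Kd.shape : Kd → SKind
  | .intv _ _ => .star
  | .pi j k => .arr j.shape k.shape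
/-! ## The declarative system of Fω.. -/

/-- Context bindings: type-variable bindings `X : K` and term-variable
bindings `x : A`. -/
inductive OBind : Type
  | ty (k : Kd)
  | tm (a : Ty)

/-- Typing contexts (innermost binding first, de Bruijn style). -/
abbrev Ctx := List OBind

/-- The kind `∗` of proper types: `∗ := ⊥..⊤`. -/
def Kd.star : Kd := .intv .bot .top

/-- Weakening by `n` innermost variables. -/
def Kd.weaken (n : ℕ) (k : Kd) : Kd := (Kd.shift 0)^[n] k

/-- Weakening by `n` innermost variables. -/
def Ty.weaken (n : ℕ) (a : Ty) : Ty := (Ty.shift 0)^[n] a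

mutual
/-- Context formation `Γ ctx`. -/
inductive CtxWf : Ctx → Prop
  | nil : CtxWf []
  | ty : CtxWf Γ → KdWf Γ K → CtxWf (.ty K :: Γ)
  | tm : CtxWf Γ → Kinding Γ A Kd.star → CtxWf (.tm A :: Γ)

/-- Kind formation `Γ ⊢ K kd`. -/
inductive KdWf : Ctx → Kd → Prop
  | intv : Kinding Γ A Kd.star → Kinding Γ B Kd.star → KdWf Γ (.intv A B)
  | pi : KdWf Γ J → KdWf (.ty J :: Γ) K → KdWf Γ (.pi J K)

/-- Kinding `Γ ⊢ A : K`. -/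
inductive Kinding : Ctx → Ty → Kd → Prop
  | var : CtxWf Γ → Γ[x]? = some (.ty K) → Kinding Γ (.var x) (K.weaken (x + 1))
  | top : CtxWf Γ → Kinding Γ .top Kd.star
  | bot : CtxWf Γ → Kinding Γ .bot Kd.star
  | arr : Kinding Γ A Kd.star → Kinding Γ B Kd.star → Kinding Γ (.arr A B) Kd.star
  | abs : KdWf Γ J → Kinding (.ty J :: Γ) A K → Kinding Γ (.lam J A) (.pi J K)
  | sing : Kinding Γ A (.intv B C) → Kinding Γ A (.intv A A)
  | all : KdWf Γ K → Kinding (.ty K :: Γ) A Kd.star → Kinding Γ (.all K A) Kd.star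
  | app : Kinding Γ A (.pi J K) → Kinding Γ B J → Kinding Γ (.app A B) (K.subst 0 B)
  | sub : Kinding Γ A J → SubKd Γ J K → Kinding Γ A K

/-- Typing `Γ ⊢ t : A`. -/
inductive Typing : Ctx → Tm → Ty → Prop
  | var : CtxWf Γ → Γ[x]? = some (.tm A) → Typing Γ (.var x) (A.weaken (x + 1))
  | abs : Kinding Γ A Kd.star → Kinding Γ B Kd.star →
      Typing (.tm A :: Γ) t (B.shift 0) → Typing Γ (.lam A t) (.arr A B)
  | app : Typing Γ s (.arr A B) → Typing Γ t A → Typing Γ (.app s t) B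
  | tabs : KdWf Γ K → Typing (.ty K :: Γ) t A → Typing Γ (.tlam K t) (.all K A)
  | tapp : Typing Γ t (.all K A) → Kinding Γ B K → Typing Γ (.tapp t B) (A.subst 0 B)
  | sub : Typing Γ t A → SubTy Γ A B Kd.star → Typing Γ t B

/-- Subkinding `Γ ⊢ J ≤ K`. -/
inductive SubKd : Ctx → Kd → Kd → Prop
  | intv : SubTy Γ A₂ A₁ Kd.star → SubTy Γ B₁ B₂ Kd.star →
      SubKd Γ (.intv A₁ B₁) (.intv A₂ B₂)
  | pi : KdWf Γ (.pi J₁ K₁) → SubKd Γ J₂ J₁ → SubKd (.ty J₂ :: Γ) K₁ K₂ →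
      SubKd Γ (.pi J₁ K₁) (.pi J₂ K₂)

/-- Subtyping `Γ ⊢ A ≤ B : K`. -/
inductive SubTy : Ctx → Ty → Ty → Kd → Prop
  | refl : Kinding Γ A K → SubTy Γ A A K
  | trans : SubTy Γ A B K → SubTy Γ B C K → SubTy Γ A C K
  | top : Kinding Γ A (.intv B C) → SubTy Γ A .top Kd.star
  | bot : Kinding Γ A (.intv B C) → SubTy Γ .bot A Kd.star
  | beta₁ : Kinding (.ty J :: Γ) A K → Kinding Γ B J →
      SubTy Γ (.app (.lam J A) B) (A.subst 0 B) (K.subst 0 B)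
  | beta₂ : Kinding (.ty J :: Γ) A K → Kinding Γ B J →
      SubTy Γ (A.subst 0 B) (.app (.lam J A) B) (K.subst 0 B)
  | eta₁ : Kinding Γ A (.pi J K) →
      SubTy Γ (.lam J (.app (A.shift 0) (.var 0))) A (.pi J K)
  | eta₂ : Kinding Γ A (.pi J K) →
      SubTy Γ A (.lam J (.app (A.shift 0) (.var 0))) (.pi J K)
  | arr : SubTy Γ A₂ A₁ Kd.star → SubTy Γ B₁ B₂ Kd.star →
      SubTy Γ (.arr A₁ B₁) (.arr A₂ B₂) Kd.star
  | abs : Kinding Γ (.lam J₁ A₁) (.pi J K) → Kinding Γ (.lam J₂ A₂) (.pi J K) →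
      SubTy (.ty J :: Γ) A₁ A₂ K → SubTy Γ (.lam J₁ A₁) (.lam J₂ A₂) (.pi J K)
  | all : Kinding Γ (.all K₁ A₁) Kd.star → SubKd Γ K₂ K₁ →
      SubTy (.ty K₂ :: Γ) A₁ A₂ Kd.star →
      SubTy Γ (.all K₁ A₁) (.all K₂ A₂) Kd.star
  | app : SubTy Γ A₁ A₂ (.pi J K) → TyEq Γ B₁ B₂ J →
      SubTy Γ (.app A₁ B₁) (.app A₂ B₂) (K.subst 0 B₁)
  | bnd₁ : Kinding Γ A (.intv B₁ B₂) → SubTy Γ B₁ A Kd.star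
  | bnd₂ : Kinding Γ A (.intv B₁ B₂) → SubTy Γ A B₂ Kd.star
  | intv : SubTy Γ A₁ A₂ (.intv B C) → SubTy Γ A₁ A₂ (.intv A₁ A₂)
  | sub : SubTy Γ A₁ A₂ J → SubKd Γ J K → SubTy Γ A₁ A₂ K

/-- Kind equality `Γ ⊢ J = K`, defined by antisymmetry of subkinding. -/
inductive KdEq : Ctx → Kd → Kd → Prop
  | antisym : SubKd Γ J K → SubKd Γ K J → KdEq Γ J K

/-- Type equality `Γ ⊢ A = B : K`, defined by antisymmetry of subtyping. -/
inductive TyEq : Ctx → Ty → Ty → Kd → Prop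
  | antisym : SubTy Γ A B K → SubTy Γ B A K → TyEq Γ A B K
end
/-! ## One-step β-reduction on (ordinary) types and kinds: the compatible
closure of `(λX:J.A) B →β A[X:=B]`. -/

mutual
inductive TyStep : Ty → Ty → Prop
  | beta : TyStep (.app (.lam J A) B) (A.subst 0 B)
  | arr₁ : TyStep A A' → TyStep (.arr A B) (.arr A' B)
  | arr₂ : TyStep B B' → TyStep (.arr A B) (.arr A B')
  | all₁ : KdStep K K' → TyStep (.all K A) (.all K' A)
  | all₂ : TyStep A A' → TyStep (.all K A) (.all K A')
  | lam₁ : KdStep K K' → TyStep (.lam K A) (.lam K' A)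
  | lam₂ : TyStep A A' → TyStep (.lam K A) (.lam K A')
  | app₁ : TyStep A A' → TyStep (.app A B) (.app A' B)
  | app₂ : TyStep B B' → TyStep (.app A B) (.app A B')

inductive KdStep : Kd → Kd → Prop
  | intv₁ : TyStep A A' → KdStep (.intv A B) (.intv A' B)
  | intv₂ : TyStep B B' → KdStep (.intv A B) (.intv A B')
  | pi₁ : KdStep J J' → KdStep (.pi J K) (.pi J' K)
  | pi₂ : KdStep K K' → KdStep (.pi J K) (.pi J K')
end
/-! ### Sigma-calculus: parallel renaming and substitution -/

def upr (ρ : ℕ → ℕ) : ℕ → ℕ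
  | 0 => 0
  | x+1 => ρ x + 1

mutual
def Ty.ren (ρ : ℕ → ℕ) : Ty → Ty
  | .var x => .var (ρ x)
  | .top => .top
  | .bot => .bot
  | .arr a b => .arr (a.ren ρ) (b.ren ρ)
  | .all k a => .all (k.ren ρ) (a.ren (upr ρ))
  | .lam k a => .lam (k.ren ρ) (a.ren (upr ρ))
  | .app a b => .app (a.ren ρ) (b.ren ρ)
def Kd.ren (ρ : ℕ → ℕ) : Kd → Kd
  | .intv a b => .intv (a.ren ρ) (b.ren ρ)
  | .pi j k => .pi (j.ren ρ) (k.ren (upr ρ))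
end

def ups (σ : ℕ → Ty) : ℕ → Ty
  | 0 => .var 0
  | x+1 => (σ x).ren (· + 1)

mutual
def Ty.sub (σ : ℕ → Ty) : Ty → Ty
  | .var x => σ x
  | .top => .top
  | .bot => .bot
  | .arr a b => .arr (a.sub σ) (b.sub σ)
  | .all k a => .all (k.sub σ) (a.sub (ups σ))
  | .lam k a => .lam (k.sub σ) (a.sub (ups σ))
  | .app a b => .app (a.sub σ) (b.sub σ)
def Kd.sub (σ : ℕ → Ty) : Kd → Kd
  | .intv a b => .intv (a.sub σ) (b.sub σ)
  | .pi j k => .pi (j.sub σ) (k.sub (ups σ))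
end

theorem upr_congr {ρ ρ' : ℕ → ℕ} (h : ∀ x, ρ x = ρ' x) : ∀ x, upr ρ x = upr ρ' x
  | 0 => rfl
  | x+1 => by simp [upr, h]

mutual
theorem Ty.ren_congr : ∀ (A : Ty) {ρ ρ' : ℕ → ℕ}, (∀ x, ρ x = ρ' x) → A.ren ρ = A.ren ρ'
  | .var x, _, _, h => by simp [Ty.ren, h]
  | .top, _, _, h => rfl
  | .bot, _, _, h => rfl
  | .arr a b, _, _, h => by simp [Ty.ren, a.ren_congr h, b.ren_congr h]
  | .all k a, _, _, h => by simp [Ty.ren, k.ren_congr h, a.ren_congr (upr_congr h)]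
  | .lam k a, _, _, h => by simp [Ty.ren, k.ren_congr h, a.ren_congr (upr_congr h)]
  | .app a b, _, _, h => by simp [Ty.ren, a.ren_congr h, b.ren_congr h]
theorem Kd.ren_congr : ∀ (K : Kd) {ρ ρ' : ℕ → ℕ}, (∀ x, ρ x = ρ' x) → K.ren ρ = K.ren ρ'
  | .intv a b, _, _, h => by simp [Kd.ren, a.ren_congr h, b.ren_congr h]
  | .pi j k, _, _, h => by simp [Kd.ren, j.ren_congr h, k.ren_congr (upr_congr h)]
end

theorem ups_congr {σ σ' : ℕ → Ty} (h : ∀ x, σ x = σ' x) : ∀ x, ups σ x = ups σ' x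
  | 0 => rfl
  | x+1 => by simp [ups, h]

mutual
theorem Ty.sub_congr : ∀ (A : Ty) {σ σ' : ℕ → Ty}, (∀ x, σ x = σ' x) → A.sub σ = A.sub σ'
  | .var x, _, _, h => h x
  | .top, _, _, h => rfl
  | .bot, _, _, h => rfl
  | .arr a b, _, _, h => by simp [Ty.sub, a.sub_congr h, b.sub_congr h]
  | .all k a, _, _, h => by simp [Ty.sub, k.sub_congr h, a.sub_congr (ups_congr h)]
  | .lam k a, _, _, h => by simp [Ty.sub, k.sub_congr h, a.sub_congr (ups_congr h)]
  | .app a b, _, _, h => by simp [Ty.sub, a.sub_congr h, b.sub_congr h]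
theorem Kd.sub_congr : ∀ (K : Kd) {σ σ' : ℕ → Ty}, (∀ x, σ x = σ' x) → K.sub σ = K.sub σ'
  | .intv a b, _, _, h => by simp [Kd.sub, a.sub_congr h, b.sub_congr h]
  | .pi j k, _, _, h => by simp [Kd.sub, j.sub_congr h, k.sub_congr (ups_congr h)]
end

theorem upr_comp (ρ ρ' : ℕ → ℕ) : ∀ x, upr ρ' (upr ρ x) = upr (fun y => ρ' (ρ y)) x
  | 0 => rfl
  | x+1 => rfl

mutual
theorem Ty.ren_ren : ∀ (A : Ty) (ρ ρ' : ℕ → ℕ), (A.ren ρ).ren ρ' = A.ren (fun x => ρ' (ρ x))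
  | .var x, _, _ => rfl
  | .top, _, _ => rfl
  | .bot, _, _ => rfl
  | .arr a b, _, _ => by simp [Ty.ren, a.ren_ren, b.ren_ren]
  | .all k a, ρ, ρ' => by
      simp [Ty.ren, k.ren_ren, a.ren_ren]; exact a.ren_congr (upr_comp ρ ρ')
  | .lam k a, ρ, ρ' => by
      simp [Ty.ren, k.ren_ren, a.ren_ren]; exact a.ren_congr (upr_comp ρ ρ')
  | .app a b, _, _ => by simp [Ty.ren, a.ren_ren, b.ren_ren]
theorem Kd.ren_ren : ∀ (K : Kd) (ρ ρ' : ℕ → ℕ), (K.ren ρ).ren ρ' = K.ren (fun x => ρ' (ρ x))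
  | .intv a b, _, _ => by simp [Kd.ren, a.ren_ren, b.ren_ren]
  | .pi j k, ρ, ρ' => by
      simp [Kd.ren, j.ren_ren, k.ren_ren]; exact k.ren_congr (upr_comp ρ ρ')
end

theorem ups_upr (σ : ℕ → Ty) (ρ : ℕ → ℕ) : ∀ x, ups σ (upr ρ x) = ups (fun y => σ (ρ y)) x
  | 0 => rfl
  | x+1 => rfl

mutual
theorem Ty.sub_ren : ∀ (A : Ty) (ρ : ℕ → ℕ) (σ : ℕ → Ty), (A.ren ρ).sub σ = A.sub (fun x => σ (ρ x))
  | .var x, _, _ => rfl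
  | .top, _, _ => rfl
  | .bot, _, _ => rfl
  | .arr a b, _, _ => by simp [Ty.ren, Ty.sub, a.sub_ren, b.sub_ren]
  | .all k a, ρ, σ => by
      simp [Ty.ren, Ty.sub, k.sub_ren, a.sub_ren]; exact a.sub_congr (ups_upr σ ρ)
  | .lam k a, ρ, σ => by
      simp [Ty.ren, Ty.sub, k.sub_ren, a.sub_ren]; exact a.sub_congr (ups_upr σ ρ)
  | .app a b, _, _ => by simp [Ty.ren, Ty.sub, a.sub_ren, b.sub_ren]
theorem Kd.sub_ren : ∀ (K : Kd) (ρ : ℕ → ℕ) (σ : ℕ → Ty), (K.ren ρ).sub σ = K.sub (fun x => σ (ρ x))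
  | .intv a b, _, _ => by simp [Kd.ren, Kd.sub, a.sub_ren, b.sub_ren]
  | .pi j k, ρ, σ => by
      simp [Kd.ren, Kd.sub, j.sub_ren, k.sub_ren]; exact k.sub_congr (ups_upr σ ρ)
end

theorem upr_ups (σ : ℕ → Ty) (ρ : ℕ → ℕ) :
    ∀ x, (ups σ x).ren (upr ρ) = ups (fun y => (σ y).ren ρ) x
  | 0 => rfl
  | x+1 => by
      simp only [ups, Ty.ren_ren]
      exact (σ x).ren_congr (fun y => rfl)

mutual
theorem Ty.ren_sub : ∀ (A : Ty) (σ : ℕ → Ty) (ρ : ℕ → ℕ), (A.sub σ).ren ρ = A.sub (fun x => (σ x).ren ρ)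
  | .var x, _, _ => rfl
  | .top, _, _ => rfl
  | .bot, _, _ => rfl
  | .arr a b, _, _ => by simp [Ty.ren, Ty.sub, a.ren_sub, b.ren_sub]
  | .all k a, σ, ρ => by
      simp [Ty.ren, Ty.sub, k.ren_sub, a.ren_sub]; exact a.sub_congr (upr_ups σ ρ)
  | .lam k a, σ, ρ => by
      simp [Ty.ren, Ty.sub, k.ren_sub, a.ren_sub]; exact a.sub_congr (upr_ups σ ρ)
  | .app a b, _, _ => by simp [Ty.ren, Ty.sub, a.ren_sub, b.ren_sub]
theorem Kd.ren_sub : ∀ (K : Kd) (σ : ℕ → Ty) (ρ : ℕ → ℕ), (K.sub σ).ren ρ = K.sub (fun x => (σ x).ren ρ)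
  | .intv a b, _, _ => by simp [Kd.ren, Kd.sub, a.ren_sub, b.ren_sub]
  | .pi j k, σ, ρ => by
      simp [Kd.ren, Kd.sub, j.ren_sub, k.ren_sub]; exact k.sub_congr (upr_ups σ ρ)
end

theorem ups_ups (σ τ : ℕ → Ty) :
    ∀ x, (ups σ x).sub (ups τ) = ups (fun y => (σ y).sub τ) x
  | 0 => rfl
  | x+1 => by
      simp only [ups, Ty.sub_ren, Ty.ren_sub]

mutual
theorem Ty.sub_sub : ∀ (A : Ty) (σ τ : ℕ → Ty), (A.sub σ).sub τ = A.sub (fun x => (σ x).sub τ)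
  | .var x, _, _ => rfl
  | .top, _, _ => rfl
  | .bot, _, _ => rfl
  | .arr a b, _, _ => by simp [Ty.sub, a.sub_sub, b.sub_sub]
  | .all k a, σ, τ => by
      simp [Ty.sub, k.sub_sub, a.sub_sub]; exact a.sub_congr (ups_ups σ τ)
  | .lam k a, σ, τ => by
      simp [Ty.sub, k.sub_sub, a.sub_sub]; exact a.sub_congr (ups_ups σ τ)
  | .app a b, _, _ => by simp [Ty.sub, a.sub_sub, b.sub_sub]
theorem Kd.sub_sub : ∀ (K : Kd) (σ τ : ℕ → Ty), (K.sub σ).sub τ = K.sub (fun x => (σ x).sub τ)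
  | .intv a b, _, _ => by simp [Kd.sub, a.sub_sub, b.sub_sub]
  | .pi j k, σ, τ => by
      simp [Kd.sub, j.sub_sub, k.sub_sub]; exact k.sub_congr (ups_ups σ τ)
end

theorem ups_var : ∀ x, ups Ty.var x = Ty.var x
  | 0 => rfl
  | x+1 => rfl

mutual
theorem Ty.sub_id : ∀ (A : Ty), A.sub Ty.var = A
  | .var x => rfl
  | .top => rfl
  | .bot => rfl
  | .arr a b => by simp [Ty.sub, a.sub_id, b.sub_id]
  | .all k a => by
      simp [Ty.sub, k.sub_id]; rw [a.sub_congr ups_var, a.sub_id]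
  | .lam k a => by
      simp [Ty.sub, k.sub_id]; rw [a.sub_congr ups_var, a.sub_id]
  | .app a b => by simp [Ty.sub, a.sub_id, b.sub_id]
theorem Kd.sub_id : ∀ (K : Kd), K.sub Ty.var = K
  | .intv a b => by simp [Kd.sub, a.sub_id, b.sub_id]
  | .pi j k => by
      simp [Kd.sub, j.sub_id]; rw [k.sub_congr ups_var, k.sub_id]
end


theorem upr_id : ∀ x, upr (fun y => y) x = x
  | 0 => rfl
  | x+1 => rfl

mutual
theorem Ty.ren_id : ∀ (A : Ty), A.ren (fun x => x) = A
  | .var x => rfl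
  | .top => rfl
  | .bot => rfl
  | .arr a b => by simp [Ty.ren, a.ren_id, b.ren_id]
  | .all k a => by simp [Ty.ren, k.ren_id]; rw [a.ren_congr upr_id, a.ren_id]
  | .lam k a => by simp [Ty.ren, k.ren_id]; rw [a.ren_congr upr_id, a.ren_id]
  | .app a b => by simp [Ty.ren, a.ren_id, b.ren_id]
theorem Kd.ren_id : ∀ (K : Kd), K.ren (fun x => x) = K
  | .intv a b => by simp [Kd.ren, a.ren_id, b.ren_id]
  | .pi j k => by simp [Kd.ren, j.ren_id]; rw [k.ren_congr upr_id, k.ren_id]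
end

/-! Bridge lemmas relating `shift`, `subst`, `weaken` to `ren`, `sub`. -/

def insR (c : ℕ) : ℕ → ℕ := fun x => if x < c then x else x + 1

theorem upr_insR (c : ℕ) : ∀ x, upr (insR c) x = insR (c+1) x
  | 0 => by simp [upr, insR]
  | x+1 => by
      simp only [upr, insR]
      by_cases h : x < c <;> simp [h, Nat.succ_lt_succ_iff]

mutual
theorem Ty.shift_eq : ∀ (A : Ty) (c : ℕ), A.shift c = A.ren (insR c)
  | .var x, c => by by_cases h : x < c <;> simp [Ty.shift, Ty.ren, insR, h]
  | .top, _ => rfl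
  | .bot, _ => rfl
  | .arr a b, c => by simp [Ty.shift, Ty.ren, a.shift_eq, b.shift_eq]
  | .all k a, c => by
      simp [Ty.shift, Ty.ren, k.shift_eq, a.shift_eq]
      exact a.ren_congr (fun x => (upr_insR c x).symm)
  | .lam k a, c => by
      simp [Ty.shift, Ty.ren, k.shift_eq, a.shift_eq]
      exact a.ren_congr (fun x => (upr_insR c x).symm)
  | .app a b, c => by simp [Ty.shift, Ty.ren, a.shift_eq, b.shift_eq]
theorem Kd.shift_eq : ∀ (K : Kd) (c : ℕ), K.shift c = K.ren (insR c)
  | .intv a b, c => by simp [Kd.shift, Kd.ren, a.shift_eq, b.shift_eq]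
  | .pi j k, c => by
      simp [Kd.shift, Kd.ren, j.shift_eq, k.shift_eq]
      exact k.ren_congr (fun x => (upr_insR c x).symm)
end

theorem insR_zero : ∀ x, insR 0 x = x + 1 := fun x => by simp [insR]

theorem ty_shift0_eq (A : Ty) : A.shift 0 = A.ren (· + 1) := by
  rw [A.shift_eq]; exact A.ren_congr insR_zero

theorem kd_shift0_eq (K : Kd) : K.shift 0 = K.ren (· + 1) := by
  rw [K.shift_eq]; exact K.ren_congr insR_zero

def sgl (x : ℕ) (v : Ty) : ℕ → Ty := fun y =>
  if y = x then v else if x < y then .var (y - 1) else .var y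

theorem ups_sgl (x : ℕ) (v : Ty) : ∀ y, ups (sgl x v) y = sgl (x+1) (v.shift 0) y
  | 0 => by simp [ups, sgl]
  | y+1 => by
      by_cases h : y = x
      · subst h; simp [ups, sgl, ty_shift0_eq]
      · by_cases h2 : x < y
        · have h3 : ¬ (y+1 = x+1) := by omega
          have h4 : x+1 < y+1 := by omega
          have h5 : y - 1 + 1 = y := by omega
          simp [ups, sgl, h, h2, h3, h4, Ty.ren, h5]
        · have h3 : ¬ (y+1 = x+1) := by omega
          have h4 : ¬ (x+1 < y+1) := by omega
          simp [ups, sgl, h, h2, h3, h4, Ty.ren]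

mutual
theorem Ty.subst_eq : ∀ (A : Ty) (x : ℕ) (v : Ty), A.subst x v = A.sub (sgl x v)
  | .var y, x, v => by simp [Ty.subst, Ty.sub, sgl]
  | .top, _, _ => rfl
  | .bot, _, _ => rfl
  | .arr a b, x, v => by simp [Ty.subst, Ty.sub, a.subst_eq, b.subst_eq]
  | .all k a, x, v => by
      simp [Ty.subst, Ty.sub, k.subst_eq, a.subst_eq]
      exact a.sub_congr (fun y => (ups_sgl x v y).symm)
  | .lam k a, x, v => by
      simp [Ty.subst, Ty.sub, k.subst_eq, a.subst_eq]
      exact a.sub_congr (fun y => (ups_sgl x v y).symm)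
  | .app a b, x, v => by simp [Ty.subst, Ty.sub, a.subst_eq, b.subst_eq]
theorem Kd.subst_eq : ∀ (K : Kd) (x : ℕ) (v : Ty), K.subst x v = K.sub (sgl x v)
  | .intv a b, x, v => by simp [Kd.subst, Kd.sub, a.subst_eq, b.subst_eq]
  | .pi j k, x, v => by
      simp [Kd.subst, Kd.sub, j.subst_eq, k.subst_eq]
      exact k.sub_congr (fun y => (ups_sgl x v y).symm)
end

theorem kd_weaken_eq (K : Kd) : ∀ n, K.weaken n = K.ren (· + n) := by
  intro n; induction n with
  | zero =>
      show (Kd.shift 0)^[0] K = _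
      show K = K.ren (· + 0)
      rw [show K.ren (· + 0) = K.ren (fun y => y) from K.ren_congr (fun x => rfl), K.ren_id]
  | succ n ih =>
      show (Kd.shift 0)^[n+1] K = _
      rw [Function.iterate_succ_apply', show (Kd.shift 0)^[n] K = K.weaken n from rfl, ih,
        kd_shift0_eq, Kd.ren_ren]
      exact K.ren_congr (fun x => rfl)

theorem ty_weaken_eq (A : Ty) : ∀ n, A.weaken n = A.ren (· + n) := by
  intro n; induction n with
  | zero =>
      show (Ty.shift 0)^[0] A = _
      show A = A.ren (· + 0)
      rw [show A.ren (· + 0) = A.ren (fun y => y) from A.ren_congr (fun x => rfl), A.ren_id]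
  | succ n ih =>
      show (Ty.shift 0)^[n+1] A = _
      rw [Function.iterate_succ_apply', show (Ty.shift 0)^[n] A = A.weaken n from rfl, ih,
        ty_shift0_eq, Ty.ren_ren]
      exact A.ren_congr (fun x => rfl)

/-! Derived commutation corollaries used by the substitution lemmas. -/

/-- `(A[0:=B]) ⟨σ⟩ = (A ⟨⇑σ⟩)[0 := B⟨σ⟩]`. -/
theorem ty_subst0_sub (A B : Ty) (σ : ℕ → Ty) :
    (A.subst 0 B).sub σ = (A.sub (ups σ)).subst 0 (B.sub σ) := by
  rw [Ty.subst_eq, Ty.sub_sub, Ty.subst_eq, Ty.sub_sub]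
  apply Ty.sub_congr
  intro x
  cases x with
  | zero => simp [ups, Ty.sub, sgl]
  | succ x =>
      show (sgl 0 B (x+1)).sub σ = (ups σ (x+1)).sub (sgl 0 (B.sub σ))
      simp only [sgl, ups]
      have : ¬ (x + 1 = 0) := by omega
      simp only [this, if_false, show (0:ℕ) < x + 1 by omega, if_true, Ty.sub_ren]
      show (Ty.var x).sub σ = (σ x).sub fun y => sgl 0 (B.sub σ) (y+1)
      have : (σ x).sub (fun y => sgl 0 (B.sub σ) (y+1)) = (σ x).sub Ty.var := by
        apply Ty.sub_congr; intro y; simp [sgl]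
      rw [this, Ty.sub_id]; rfl

theorem kd_subst0_sub (K : Kd) (B : Ty) (σ : ℕ → Ty) :
    (K.subst 0 B).sub σ = (K.sub (ups σ)).subst 0 (B.sub σ) := by
  rw [Kd.subst_eq, Kd.sub_sub, Kd.subst_eq, Kd.sub_sub]
  apply Kd.sub_congr
  intro x
  cases x with
  | zero => simp [ups, Ty.sub, sgl]
  | succ x =>
      show (sgl 0 B (x+1)).sub σ = (ups σ (x+1)).sub (sgl 0 (B.sub σ))
      simp only [sgl, ups]
      have : ¬ (x + 1 = 0) := by omega
      simp only [this, if_false, show (0:ℕ) < x + 1 by omega, if_true, Ty.sub_ren]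
      show (Ty.var x).sub σ = (σ x).sub fun y => sgl 0 (B.sub σ) (y+1)
      have : (σ x).sub (fun y => sgl 0 (B.sub σ) (y+1)) = (σ x).sub Ty.var := by
        apply Ty.sub_congr; intro y; simp [sgl]
      rw [this, Ty.sub_id]; rfl

/-- `(A⁺ ⟨⇑σ⟩) = (A⟨σ⟩)⁺`. -/
theorem ty_shift0_sub (A : Ty) (σ : ℕ → Ty) :
    (A.shift 0).sub (ups σ) = (A.sub σ).shift 0 := by
  rw [ty_shift0_eq, Ty.sub_ren, ty_shift0_eq, Ty.ren_sub]
  exact A.sub_congr (fun x => rfl)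

theorem kd_shift0_sub (K : Kd) (σ : ℕ → Ty) :
    (K.shift 0).sub (ups σ) = (K.sub σ).shift 0 := by
  rw [kd_shift0_eq, Kd.sub_ren, kd_shift0_eq, Kd.ren_sub]
  exact K.sub_congr (fun x => rfl)

theorem kd_weaken_succ_sub (K : Kd) (x : ℕ) (σ : ℕ → Ty) :
    (K.weaken (x+2)).sub (ups σ) = ((K.weaken (x+1)).sub σ).shift 0 := by
  rw [kd_weaken_eq, kd_weaken_eq, Kd.sub_ren, Kd.sub_ren, kd_shift0_eq, Kd.ren_sub]
  exact K.sub_congr (fun y => rfl)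

/-- kind of an eta-expansion body: `(K⁺¹)[0 := var 0] = K` where `⁺¹` shifts at cutoff 1. -/
theorem kd_eta (K : Kd) : (K.shift 1).subst 0 (.var 0) = K := by
  rw [Kd.shift_eq, Kd.subst_eq, Kd.sub_ren]
  have : K.sub (fun x => sgl 0 (Ty.var 0) (insR 1 x)) = K.sub Ty.var := by
    apply Kd.sub_congr; intro x
    cases x with
    | zero => simp [insR, sgl]
    | succ x => simp [insR, sgl]
  rw [this, Kd.sub_id]

mutual
theorem Ty.shape_ren : ∀ (A : Ty) (ρ : ℕ → ℕ), True
  | _, _ => trivial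
theorem Kd.shape_ren : ∀ (K : Kd) (ρ : ℕ → ℕ), (K.ren ρ).shape = K.shape
  | .intv a b, _ => rfl
  | .pi j k, ρ => by simp [Kd.ren, Kd.shape, j.shape_ren, k.shape_ren]
end

mutual
theorem Ty.shape_sub : ∀ (A : Ty) (σ : ℕ → Ty), True
  | _, _ => trivial
theorem Kd.shape_sub : ∀ (K : Kd) (σ : ℕ → Ty), (K.sub σ).shape = K.shape
  | .intv a b, _ => rfl
  | .pi j k, σ => by simp [Kd.sub, Kd.shape, j.shape_sub, k.shape_sub]
end

theorem kd_shape_subst (K : Kd) (x : ℕ) (v : Ty) : (K.subst x v).shape = K.shape := by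
  rw [Kd.subst_eq]; exact K.shape_sub _

theorem kd_star_sub (σ : ℕ → Ty) : Kd.star.sub σ = Kd.star := rfl
theorem kd_star_ren (ρ : ℕ → ℕ) : Kd.star.ren ρ = Kd.star := rfl

theorem ty_subst0_ren (A B : Ty) (ρ : ℕ → ℕ) :
    (A.subst 0 B).ren ρ = (A.ren (upr ρ)).subst 0 (B.ren ρ) := by
  rw [Ty.subst_eq, Ty.ren_sub, Ty.subst_eq, Ty.sub_ren]
  apply Ty.sub_congr; intro x
  cases x with
  | zero => simp [sgl, upr]
  | succ x =>
      simp only [sgl, upr]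
      have h1 : ¬ (x + 1 = 0) := by omega
      have h2 : (0:ℕ) < x + 1 := by omega
      have h3 : ¬ (ρ x + 1 = 0) := by omega
      have h4 : (0:ℕ) < ρ x + 1 := by omega
      simp [h1, h2, h3, h4, Ty.ren]

theorem kd_subst0_ren (K : Kd) (B : Ty) (ρ : ℕ → ℕ) :
    (K.subst 0 B).ren ρ = (K.ren (upr ρ)).subst 0 (B.ren ρ) := by
  rw [Kd.subst_eq, Kd.ren_sub, Kd.subst_eq, Kd.sub_ren]
  apply Kd.sub_congr; intro x
  cases x with
  | zero => simp [sgl, upr]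
  | succ x =>
      simp only [sgl, upr]
      have h1 : ¬ (x + 1 = 0) := by omega
      have h2 : (0:ℕ) < x + 1 := by omega
      have h3 : ¬ (ρ x + 1 = 0) := by omega
      have h4 : (0:ℕ) < ρ x + 1 := by omega
      simp [h1, h2, h3, h4, Ty.ren]

theorem ty_shift0_ren (A : Ty) (ρ : ℕ → ℕ) :
    (A.shift 0).ren (upr ρ) = (A.ren ρ).shift 0 := by
  rw [ty_shift0_eq, Ty.ren_ren, ty_shift0_eq, Ty.ren_ren]
  exact A.ren_congr (fun x => rfl)

theorem kd_shift0_ren (K : Kd) (ρ : ℕ → ℕ) :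
    (K.shift 0).ren (upr ρ) = (K.ren ρ).shift 0 := by
  rw [kd_shift0_eq, Kd.ren_ren, kd_shift0_eq, Kd.ren_ren]
  exact K.ren_congr (fun x => rfl)

theorem kd_weaken_succ (K : Kd) (n : ℕ) : K.weaken (n+1) = (K.weaken n).shift 0 := by
  rw [kd_weaken_eq, kd_weaken_eq, kd_shift0_eq, Kd.ren_ren]
  exact K.ren_congr (fun x => rfl)

theorem kd_wk1_sgl0 (J B : Ty → Ty) : True := trivial

theorem kd_weaken1_sgl0 (J : Kd) (B : Ty) : (J.weaken 1).sub (sgl 0 B) = J := by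
  rw [kd_weaken_eq, Kd.sub_ren]
  have : J.sub (fun x => sgl 0 B (x+1)) = J.sub Ty.var := by
    apply Kd.sub_congr; intro x; simp [sgl]
  rw [this, Kd.sub_id]

theorem kd_weaken_succ_sgl0 (K : Kd) (x : ℕ) (B : Ty) :
    (K.weaken (x+2)).sub (sgl 0 B) = K.weaken (x+1) := by
  rw [kd_weaken_eq, Kd.sub_ren, kd_weaken_eq]
  have : K.sub (fun y => sgl 0 B (y+(x+2))) = K.sub (fun y => Ty.var (y+(x+1))) := by
    apply Kd.sub_congr; intro y
    have h1 : ¬ (y + (x+2) = 0) := by omega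
    have h2 : (0:ℕ) < y + (x+2) := by omega
    simp only [sgl, h1, if_false, h2, if_true]
    have h3 : y + (x+2) - 1 = y + (x+1) := by omega
    rw [h3]
  rw [this]
  have := K.sub_ren (fun y => y + (x+1)) Ty.var
  rw [show K.ren (fun y => y + (x+1)) = (K.ren (fun y => y + (x+1))).sub Ty.var from (Kd.sub_id _).symm, Kd.sub_ren]
/-! ### Thinnings and renaming preservation -/

def OBind.renB (ρ : ℕ → ℕ) : OBind → OBind
  | .ty K => .ty (K.ren ρ)
  | .tm A => .tm (A.ren ρ)

def WfB (Γ : Ctx) : OBind → Prop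
  | .ty K => KdWf Γ K
  | .tm A => Kinding Γ A Kd.star

inductive Thin : Ctx → Ctx → (ℕ → ℕ) → Prop
  | refl : Thin Γ Γ (fun x => x)
  | skip : Thin Ξ Γ' ρ → WfB Γ' b → Thin Ξ (b :: Γ') (fun x => ρ x + 1)
  | keep : Thin Ξ Γ' ρ → Thin (b :: Ξ) (b.renB ρ :: Γ') (upr ρ)

theorem upr_eq_succ (ρ : ℕ → ℕ) (n : ℕ) : upr ρ (n + 1) = ρ n + 1 := rfl

theorem thin_lookup {Ξ Γ' ρ} (h : Thin Ξ Γ' ρ) :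
    ∀ x K, Ξ[x]? = some (.ty K) →
      ∃ K', Γ'[ρ x]? = some (.ty K') ∧ (K.weaken (x+1)).ren ρ = K'.weaken (ρ x + 1) := by
  induction h with
  | refl =>
      intro x K hx
      exact ⟨K, hx, Kd.ren_id _⟩
  | @skip Ξ Γ' ρ b ht hb ih =>
      intro x K hx
      obtain ⟨K', lk, eq⟩ := ih x K hx
      refine ⟨K', by simpa using lk, ?_⟩
      have h2 := congrArg (Kd.ren (fun y => y + 1)) eq
      simp only [kd_weaken_eq, Kd.ren_ren] at h2 ⊢
      exact h2.trans (K'.ren_congr (fun y => by omega))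
  | @keep Ξ Γ' ρ b ht ih =>
      intro x K hx
      cases x with
      | zero =>
          cases b with
          | ty J =>
              have hK : J = K := by simpa using hx
              subst hK
              refine ⟨J.ren ρ, by simp [OBind.renB, upr], ?_⟩
              rw [kd_weaken_eq, kd_weaken_eq, Kd.ren_ren, Kd.ren_ren]
              exact J.ren_congr (fun y => rfl)
          | tm A => simp at hx
      | succ x =>
          have hx' : Ξ[x]? = some (.ty K) := by simpa using hx
          obtain ⟨K', lk, eq⟩ := ih x K hx'
          refine ⟨K', by simpa [upr_eq_succ] using lk, ?_⟩
          have h2 := congrArg (Kd.ren (fun y => y + 1)) eq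
          simp only [upr_eq_succ, kd_weaken_eq, Kd.ren_ren] at h2 ⊢
          refine Eq.trans (K.ren_congr (fun y => ?_)) (h2.trans (K'.ren_congr (fun y => by omega)))
          show upr ρ (y + (x+2)) = ρ (y + (x+1)) + 1
          have h3 : y + (x+2) = (y + (x+1)) + 1 := by omega
          rw [h3, upr_eq_succ]
/-! ### Renaming preserves all judgments -/

inductive CtxOK : Ctx → Prop
  | nil : CtxOK []
  | ty : CtxOK Γ → (∀ Γ' ρ, Thin Γ Γ' ρ → KdWf Γ' (K.ren ρ)) → CtxOK (.ty K :: Γ)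
  | tm : CtxOK Γ → (∀ Γ' ρ, Thin Γ Γ' ρ → Kinding Γ' (A.ren ρ) Kd.star) → CtxOK (.tm A :: Γ)

theorem ctxok_thin : ∀ {Ξ Γ' ρ}, Thin Ξ Γ' ρ → CtxOK Ξ → CtxWf Γ' := by
  intro Ξ Γ' ρ h
  induction h with
  | refl =>
      intro hc
      induction hc with
      | nil => exact CtxWf.nil
      | @ty Γ K hc hr ih => exact CtxWf.ty ih (by have := hr Γ (fun x => x) Thin.refl; rwa [Kd.ren_id] at this)
      | @tm Γ A hc hr ih => exact CtxWf.tm ih (by have := hr Γ (fun x => x) Thin.refl; rwa [Ty.ren_id] at this)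
  | @skip Ξ Γ' ρ b ht hb ih =>
      intro hc
      cases b with
      | ty K => exact CtxWf.ty (ih hc) hb
      | tm A => exact CtxWf.tm (ih hc) hb
  | @keep Ξ Γ' ρ b ht ih =>
      intro hc
      cases b with
      | ty K =>
          cases hc with
          | ty hc hr => exact CtxWf.ty (ih hc) (hr _ _ ht)
      | tm A =>
          cases hc with
          | tm hc hr => exact CtxWf.tm (ih hc) (hr _ _ ht)

abbrev MR1 : ∀ (Γ : Ctx), CtxWf Γ → Prop := fun Ξ _ => CtxOK Ξ
abbrev MR2 : ∀ (Γ : Ctx) (K : Kd), KdWf Γ K → Prop :=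
  fun Ξ K _ => ∀ Γ' ρ, Thin Ξ Γ' ρ → KdWf Γ' (K.ren ρ)
abbrev MR3 : ∀ (Γ : Ctx) (A : Ty) (K : Kd), Kinding Γ A K → Prop :=
  fun Ξ A K _ => ∀ Γ' ρ, Thin Ξ Γ' ρ → Kinding Γ' (A.ren ρ) (K.ren ρ)
abbrev MR4 : ∀ (Γ : Ctx) (t : Tm) (A : Ty), Typing Γ t A → Prop := fun _ _ _ _ => True
abbrev MR5 : ∀ (Γ : Ctx) (J K : Kd), SubKd Γ J K → Prop :=
  fun Ξ J K _ => ∀ Γ' ρ, Thin Ξ Γ' ρ → SubKd Γ' (J.ren ρ) (K.ren ρ)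
abbrev MR6 : ∀ (Γ : Ctx) (A B : Ty) (K : Kd), SubTy Γ A B K → Prop :=
  fun Ξ A B K _ => ∀ Γ' ρ, Thin Ξ Γ' ρ → SubTy Γ' (A.ren ρ) (B.ren ρ) (K.ren ρ)
abbrev MR7 : ∀ (Γ : Ctx) (J K : Kd), KdEq Γ J K → Prop := fun _ _ _ _ => True
abbrev MR8 : ∀ (Γ : Ctx) (A B : Ty) (K : Kd), TyEq Γ A B K → Prop :=
  fun Ξ A B K _ => ∀ Γ' ρ, Thin Ξ Γ' ρ → TyEq Γ' (A.ren ρ) (B.ren ρ) (K.ren ρ)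

section RenCases
set_option hygiene false

theorem rn1 : MR1 [] CtxWf.nil := CtxOK.nil

theorem rn2 : ∀ {Γ : Ctx} {K : Kd} (a : CtxWf Γ) (a1 : KdWf Γ K),
    MR1 Γ a → MR2 Γ K a1 → MR1 (.ty K :: Γ) (CtxWf.ty a a1) :=
  fun _ _ ih ih1 => CtxOK.ty ih ih1

theorem rn3 : ∀ {Γ : Ctx} {A : Ty} (a : CtxWf Γ) (a1 : Kinding Γ A Kd.star),
    MR1 Γ a → MR3 Γ A Kd.star a1 → MR1 (.tm A :: Γ) (CtxWf.tm a a1) :=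
  fun _ _ ih ih1 => CtxOK.tm ih ih1

theorem rn4 : ∀ {Γ : Ctx} {A B : Ty} (a : Kinding Γ A Kd.star) (a1 : Kinding Γ B Kd.star),
    MR3 Γ A Kd.star a → MR3 Γ B Kd.star a1 → MR2 Γ (.intv A B) (KdWf.intv a a1) :=
  fun _ _ ih1 ih2 Γ' ρ ht => KdWf.intv (ih1 Γ' ρ ht) (ih2 Γ' ρ ht)

theorem rn5 : ∀ {Γ : Ctx} {J K : Kd} (a : KdWf Γ J) (a1 : KdWf (.ty J :: Γ) K),
    MR2 Γ J a → MR2 (.ty J :: Γ) K a1 → MR2 Γ (.pi J K) (KdWf.pi a a1) :=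
  fun _ _ ih1 ih2 Γ' ρ ht => KdWf.pi (ih1 Γ' ρ ht) (ih2 _ (upr ρ) (Thin.keep ht))

theorem rn6 : ∀ {Γ : Ctx} {x : ℕ} {K : Kd} (a : CtxWf Γ) (a1 : Γ[x]? = some (.ty K)),
    MR1 Γ a → MR3 Γ (.var x) (K.weaken (x+1)) (Kinding.var a a1) := by
  intro Γ x K a a1 ihc Γ' ρ ht
  obtain ⟨K', lk, eq⟩ := thin_lookup ht x K a1
  show Kinding Γ' (.var (ρ x)) ((K.weaken (x+1)).ren ρ)
  rw [eq]
  exact Kinding.var (ctxok_thin ht ihc) lk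

theorem rn7 : ∀ {Γ : Ctx} (a : CtxWf Γ), MR1 Γ a → MR3 Γ .top Kd.star (Kinding.top a) :=
  fun _ ihc Γ' ρ ht => Kinding.top (ctxok_thin ht ihc)

theorem rn8 : ∀ {Γ : Ctx} (a : CtxWf Γ), MR1 Γ a → MR3 Γ .bot Kd.star (Kinding.bot a) :=
  fun _ ihc Γ' ρ ht => Kinding.bot (ctxok_thin ht ihc)

theorem rn9 : ∀ {Γ : Ctx} {A B : Ty} (a : Kinding Γ A Kd.star) (a1 : Kinding Γ B Kd.star),
    MR3 Γ A Kd.star a → MR3 Γ B Kd.star a1 → MR3 Γ (.arr A B) Kd.star (Kinding.arr a a1) :=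
  fun _ _ ih1 ih2 Γ' ρ ht => Kinding.arr (ih1 Γ' ρ ht) (ih2 Γ' ρ ht)

theorem rn10 : ∀ {Γ : Ctx} {J : Kd} {A : Ty} {K : Kd} (a : KdWf Γ J) (a1 : Kinding (.ty J :: Γ) A K),
    MR2 Γ J a → MR3 (.ty J :: Γ) A K a1 → MR3 Γ (.lam J A) (.pi J K) (Kinding.abs a a1) :=
  fun _ _ ih1 ih2 Γ' ρ ht => Kinding.abs (ih1 Γ' ρ ht) (ih2 _ (upr ρ) (Thin.keep ht))

theorem rn11 : ∀ {Γ : Ctx} {A B C : Ty} (a : Kinding Γ A (.intv B C)),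
    MR3 Γ A (.intv B C) a → MR3 Γ A (.intv A A) (Kinding.sing a) :=
  fun _ ih Γ' ρ ht => Kinding.sing (ih Γ' ρ ht)

theorem rn12 : ∀ {Γ : Ctx} {K : Kd} {A : Ty} (a : KdWf Γ K) (a1 : Kinding (.ty K :: Γ) A Kd.star),
    MR2 Γ K a → MR3 (.ty K :: Γ) A Kd.star a1 → MR3 Γ (.all K A) Kd.star (Kinding.all a a1) :=
  fun _ _ ih1 ih2 Γ' ρ ht => Kinding.all (ih1 Γ' ρ ht) (ih2 _ (upr ρ) (Thin.keep ht))

theorem rn13 : ∀ {Γ : Ctx} {A : Ty} {J K : Kd} {B : Ty} (a : Kinding Γ A (.pi J K)) (a1 : Kinding Γ B J),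
    MR3 Γ A (.pi J K) a → MR3 Γ B J a1 → MR3 Γ (.app A B) (K.subst 0 B) (Kinding.app a a1) := by
  intro Γ A J K B a a1 ih1 ih2 Γ' ρ ht
  show Kinding Γ' (.app (A.ren ρ) (B.ren ρ)) ((K.subst 0 B).ren ρ)
  rw [kd_subst0_ren]
  exact Kinding.app (ih1 Γ' ρ ht) (ih2 Γ' ρ ht)

theorem rn14 : ∀ {Γ : Ctx} {A : Ty} {J K : Kd} (a : Kinding Γ A J) (a1 : SubKd Γ J K),
    MR3 Γ A J a → MR5 Γ J K a1 → MR3 Γ A K (Kinding.sub a a1) :=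
  fun _ _ ih1 ih2 Γ' ρ ht => Kinding.sub (ih1 Γ' ρ ht) (ih2 Γ' ρ ht)

theorem rn15 : ∀ {Γ : Ctx} {x : ℕ} {A : Ty} (a : CtxWf Γ) (a1 : Γ[x]? = some (.tm A)),
    MR1 Γ a → MR4 Γ (.var x) (A.weaken (x+1)) (Typing.var a a1) := fun _ _ _ => trivial

theorem rn16 : ∀ {Γ : Ctx} {A B : Ty} {t : Tm} (a : Kinding Γ A Kd.star) (a1 : Kinding Γ B Kd.star)
    (a2 : Typing (.tm A :: Γ) t (B.shift 0)), MR3 Γ A Kd.star a → MR3 Γ B Kd.star a1 →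
    MR4 (.tm A :: Γ) t (B.shift 0) a2 → MR4 Γ (.lam A t) (.arr A B) (Typing.abs a a1 a2) :=
  fun _ _ _ _ _ _ => trivial

theorem rn17 : ∀ {Γ : Ctx} {s : Tm} {A B : Ty} {t : Tm} (a : Typing Γ s (.arr A B)) (a1 : Typing Γ t A),
    MR4 Γ s (.arr A B) a → MR4 Γ t A a1 → MR4 Γ (.app s t) B (Typing.app a a1) := fun _ _ _ _ => trivial

theorem rn18 : ∀ {Γ : Ctx} {K : Kd} {t : Tm} {A : Ty} (a : KdWf Γ K) (a1 : Typing (.ty K :: Γ) t A),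
    MR2 Γ K a → MR4 (.ty K :: Γ) t A a1 → MR4 Γ (.tlam K t) (.all K A) (Typing.tabs a a1) :=
  fun _ _ _ _ => trivial

theorem rn19 : ∀ {Γ : Ctx} {t : Tm} {K : Kd} {A B : Ty} (a : Typing Γ t (.all K A)) (a1 : Kinding Γ B K),
    MR4 Γ t (.all K A) a → MR3 Γ B K a1 → MR4 Γ (.tapp t B) (A.subst 0 B) (Typing.tapp a a1) :=
  fun _ _ _ _ => trivial

theorem rn20 : ∀ {Γ : Ctx} {t : Tm} {A B : Ty} (a : Typing Γ t A) (a1 : SubTy Γ A B Kd.star),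
    MR4 Γ t A a → MR6 Γ A B Kd.star a1 → MR4 Γ t B (Typing.sub a a1) := fun _ _ _ _ => trivial

theorem rn21 : ∀ {Γ : Ctx} {A₂ A₁ B₁ B₂ : Ty} (a : SubTy Γ A₂ A₁ Kd.star) (a1 : SubTy Γ B₁ B₂ Kd.star),
    MR6 Γ A₂ A₁ Kd.star a → MR6 Γ B₁ B₂ Kd.star a1 →
    MR5 Γ (.intv A₁ B₁) (.intv A₂ B₂) (SubKd.intv a a1) :=
  fun _ _ ih1 ih2 Γ' ρ ht => SubKd.intv (ih1 Γ' ρ ht) (ih2 Γ' ρ ht)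

theorem rn22 : ∀ {Γ : Ctx} {J₁ K₁ J₂ K₂ : Kd} (a : KdWf Γ (.pi J₁ K₁)) (a1 : SubKd Γ J₂ J₁)
    (a2 : SubKd (.ty J₂ :: Γ) K₁ K₂), MR2 Γ (.pi J₁ K₁) a → MR5 Γ J₂ J₁ a1 →
    MR5 (.ty J₂ :: Γ) K₁ K₂ a2 → MR5 Γ (.pi J₁ K₁) (.pi J₂ K₂) (SubKd.pi a a1 a2) :=
  fun _ _ _ ih1 ih2 ih3 Γ' ρ ht => SubKd.pi (ih1 Γ' ρ ht) (ih2 Γ' ρ ht) (ih3 _ (upr ρ) (Thin.keep ht))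

theorem rn23 : ∀ {Γ : Ctx} {A : Ty} {K : Kd} (a : Kinding Γ A K),
    MR3 Γ A K a → MR6 Γ A A K (SubTy.refl a) :=
  fun _ ih Γ' ρ ht => SubTy.refl (ih Γ' ρ ht)

theorem rn24 : ∀ {Γ : Ctx} {A B : Ty} {K : Kd} {C : Ty} (a : SubTy Γ A B K) (a1 : SubTy Γ B C K),
    MR6 Γ A B K a → MR6 Γ B C K a1 → MR6 Γ A C K (SubTy.trans a a1) :=
  fun _ _ ih1 ih2 Γ' ρ ht => SubTy.trans (ih1 Γ' ρ ht) (ih2 Γ' ρ ht)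

theorem rn25 : ∀ {Γ : Ctx} {A B C : Ty} (a : Kinding Γ A (.intv B C)),
    MR3 Γ A (.intv B C) a → MR6 Γ A .top Kd.star (SubTy.top a) :=
  fun _ ih Γ' ρ ht => SubTy.top (ih Γ' ρ ht)

theorem rn26 : ∀ {Γ : Ctx} {A B C : Ty} (a : Kinding Γ A (.intv B C)),
    MR3 Γ A (.intv B C) a → MR6 Γ .bot A Kd.star (SubTy.bot a) :=
  fun _ ih Γ' ρ ht => SubTy.bot (ih Γ' ρ ht)

theorem rn27 : ∀ {J : Kd} {Γ : Ctx} {A : Ty} {K : Kd} {B : Ty}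
    (a : Kinding (.ty J :: Γ) A K) (a1 : Kinding Γ B J),
    MR3 (.ty J :: Γ) A K a → MR3 Γ B J a1 →
    MR6 Γ (.app (.lam J A) B) (A.subst 0 B) (K.subst 0 B) (SubTy.beta₁ a a1) := by
  intro J Γ A K B a a1 ih1 ih2 Γ' ρ ht
  show SubTy Γ' (.app (.lam (J.ren ρ) (A.ren (upr ρ))) (B.ren ρ)) ((A.subst 0 B).ren ρ) ((K.subst 0 B).ren ρ)
  rw [ty_subst0_ren, kd_subst0_ren]
  exact SubTy.beta₁ (ih1 _ (upr ρ) (Thin.keep ht)) (ih2 Γ' ρ ht)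

theorem rn28 : ∀ {J : Kd} {Γ : Ctx} {A : Ty} {K : Kd} {B : Ty}
    (a : Kinding (.ty J :: Γ) A K) (a1 : Kinding Γ B J),
    MR3 (.ty J :: Γ) A K a → MR3 Γ B J a1 →
    MR6 Γ (A.subst 0 B) (.app (.lam J A) B) (K.subst 0 B) (SubTy.beta₂ a a1) := by
  intro J Γ A K B a a1 ih1 ih2 Γ' ρ ht
  show SubTy Γ' ((A.subst 0 B).ren ρ) (.app (.lam (J.ren ρ) (A.ren (upr ρ))) (B.ren ρ)) ((K.subst 0 B).ren ρ)
  rw [ty_subst0_ren, kd_subst0_ren]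
  exact SubTy.beta₂ (ih1 _ (upr ρ) (Thin.keep ht)) (ih2 Γ' ρ ht)

theorem rn29 : ∀ {Γ : Ctx} {A : Ty} {J K : Kd} (a : Kinding Γ A (.pi J K)),
    MR3 Γ A (.pi J K) a →
    MR6 Γ (.lam J (.app (A.shift 0) (.var 0))) A (.pi J K) (SubTy.eta₁ a) := by
  intro Γ A J K a ih Γ' ρ ht
  show SubTy Γ' (.lam (J.ren ρ) (.app ((A.shift 0).ren (upr ρ)) (.var 0))) (A.ren ρ) ((Kd.pi J K).ren ρ)
  rw [ty_shift0_ren]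
  exact SubTy.eta₁ (ih Γ' ρ ht)

theorem rn30 : ∀ {Γ : Ctx} {A : Ty} {J K : Kd} (a : Kinding Γ A (.pi J K)),
    MR3 Γ A (.pi J K) a →
    MR6 Γ A (.lam J (.app (A.shift 0) (.var 0))) (.pi J K) (SubTy.eta₂ a) := by
  intro Γ A J K a ih Γ' ρ ht
  show SubTy Γ' (A.ren ρ) (.lam (J.ren ρ) (.app ((A.shift 0).ren (upr ρ)) (.var 0))) ((Kd.pi J K).ren ρ)
  rw [ty_shift0_ren]
  exact SubTy.eta₂ (ih Γ' ρ ht)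

theorem rn31 : ∀ {Γ : Ctx} {A₂ A₁ B₁ B₂ : Ty} (a : SubTy Γ A₂ A₁ Kd.star) (a1 : SubTy Γ B₁ B₂ Kd.star),
    MR6 Γ A₂ A₁ Kd.star a → MR6 Γ B₁ B₂ Kd.star a1 →
    MR6 Γ (.arr A₁ B₁) (.arr A₂ B₂) Kd.star (SubTy.arr a a1) :=
  fun _ _ ih1 ih2 Γ' ρ ht => SubTy.arr (ih1 Γ' ρ ht) (ih2 Γ' ρ ht)

theorem rn32 : ∀ {Γ : Ctx} {J₁ : Kd} {A₁ : Ty} {J K J₂ : Kd} {A₂ : Ty}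
    (a : Kinding Γ (.lam J₁ A₁) (.pi J K)) (a1 : Kinding Γ (.lam J₂ A₂) (.pi J K))
    (a2 : SubTy (.ty J :: Γ) A₁ A₂ K),
    MR3 Γ (.lam J₁ A₁) (.pi J K) a → MR3 Γ (.lam J₂ A₂) (.pi J K) a1 →
    MR6 (.ty J :: Γ) A₁ A₂ K a2 →
    MR6 Γ (.lam J₁ A₁) (.lam J₂ A₂) (.pi J K) (SubTy.abs a a1 a2) :=
  fun _ _ _ ih1 ih2 ih3 Γ' ρ ht =>
    SubTy.abs (ih1 Γ' ρ ht) (ih2 Γ' ρ ht) (ih3 _ (upr ρ) (Thin.keep ht))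

theorem rn33 : ∀ {Γ : Ctx} {K₁ : Kd} {A₁ : Ty} {K₂ : Kd} {A₂ : Ty}
    (a : Kinding Γ (.all K₁ A₁) Kd.star) (a1 : SubKd Γ K₂ K₁)
    (a2 : SubTy (.ty K₂ :: Γ) A₁ A₂ Kd.star),
    MR3 Γ (.all K₁ A₁) Kd.star a → MR5 Γ K₂ K₁ a1 → MR6 (.ty K₂ :: Γ) A₁ A₂ Kd.star a2 →
    MR6 Γ (.all K₁ A₁) (.all K₂ A₂) Kd.star (SubTy.all a a1 a2) :=
  fun _ _ _ ih1 ih2 ih3 Γ' ρ ht =>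
    SubTy.all (ih1 Γ' ρ ht) (ih2 Γ' ρ ht) (ih3 _ (upr ρ) (Thin.keep ht))

theorem rn34 : ∀ {Γ : Ctx} {A₁ A₂ : Ty} {J K : Kd} {B₁ B₂ : Ty}
    (a : SubTy Γ A₁ A₂ (.pi J K)) (a1 : TyEq Γ B₁ B₂ J),
    MR6 Γ A₁ A₂ (.pi J K) a → MR8 Γ B₁ B₂ J a1 →
    MR6 Γ (.app A₁ B₁) (.app A₂ B₂) (K.subst 0 B₁) (SubTy.app a a1) := by
  intro Γ A₁ A₂ J K B₁ B₂ a a1 ih1 ih2 Γ' ρ ht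
  show SubTy Γ' (.app (A₁.ren ρ) (B₁.ren ρ)) (.app (A₂.ren ρ) (B₂.ren ρ)) ((K.subst 0 B₁).ren ρ)
  rw [kd_subst0_ren]
  exact SubTy.app (ih1 Γ' ρ ht) (ih2 Γ' ρ ht)

theorem rn35 : ∀ {Γ : Ctx} {A B₁ B₂ : Ty} (a : Kinding Γ A (.intv B₁ B₂)),
    MR3 Γ A (.intv B₁ B₂) a → MR6 Γ B₁ A Kd.star (SubTy.bnd₁ a) :=
  fun _ ih Γ' ρ ht => SubTy.bnd₁ (ih Γ' ρ ht)

theorem rn36 : ∀ {Γ : Ctx} {A B₁ B₂ : Ty} (a : Kinding Γ A (.intv B₁ B₂)),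
    MR3 Γ A (.intv B₁ B₂) a → MR6 Γ A B₂ Kd.star (SubTy.bnd₂ a) :=
  fun _ ih Γ' ρ ht => SubTy.bnd₂ (ih Γ' ρ ht)

theorem rn37 : ∀ {Γ : Ctx} {A₁ A₂ : Ty} {B C : Ty} (a : SubTy Γ A₁ A₂ (.intv B C)),
    MR6 Γ A₁ A₂ (.intv B C) a → MR6 Γ A₁ A₂ (.intv A₁ A₂) (SubTy.intv a) :=
  fun _ ih Γ' ρ ht => SubTy.intv (ih Γ' ρ ht)

theorem rn38 : ∀ {Γ : Ctx} {A₁ A₂ : Ty} {J K : Kd} (a : SubTy Γ A₁ A₂ J) (a1 : SubKd Γ J K),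
    MR6 Γ A₁ A₂ J a → MR5 Γ J K a1 → MR6 Γ A₁ A₂ K (SubTy.sub a a1) :=
  fun _ _ ih1 ih2 Γ' ρ ht => SubTy.sub (ih1 Γ' ρ ht) (ih2 Γ' ρ ht)

theorem rn39 : ∀ {Γ : Ctx} {J K : Kd} (a : SubKd Γ J K) (a1 : SubKd Γ K J),
    MR5 Γ J K a → MR5 Γ K J a1 → MR7 Γ J K (KdEq.antisym a a1) := fun _ _ _ _ => trivial

theorem rn40 : ∀ {Γ : Ctx} {A B : Ty} {K : Kd} (a : SubTy Γ A B K) (a1 : SubTy Γ B A K),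
    MR6 Γ A B K a → MR6 Γ B A K a1 → MR8 Γ A B K (TyEq.antisym a a1) :=
  fun _ _ ih1 ih2 Γ' ρ ht => TyEq.antisym (ih1 Γ' ρ ht) (ih2 Γ' ρ ht)

end RenCases

theorem kdwf_ren {Ξ : Ctx} {K : Kd} (h : KdWf Ξ K) : ∀ {Γ' ρ}, Thin Ξ Γ' ρ → KdWf Γ' (K.ren ρ) :=
  fun {Γ' ρ} ht =>
    KdWf.rec (motive_1 := MR1) (motive_2 := MR2) (motive_3 := MR3) (motive_4 := MR4)
      (motive_5 := MR5) (motive_6 := MR6) (motive_7 := MR7) (motive_8 := MR8)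
      rn1 rn2 rn3 rn4 rn5 rn6 rn7 rn8 rn9 rn10 rn11 rn12 rn13 rn14 rn15 rn16 rn17 rn18 rn19 rn20
      rn21 rn22 rn23 rn24 rn25 rn26 rn27 rn28 rn29 rn30 rn31 rn32 rn33 rn34 rn35 rn36 rn37 rn38
      rn39 rn40 h Γ' ρ ht

theorem kinding_ren {Ξ : Ctx} {A : Ty} {K : Kd} (h : Kinding Ξ A K) :
    ∀ {Γ' ρ}, Thin Ξ Γ' ρ → Kinding Γ' (A.ren ρ) (K.ren ρ) :=
  fun {Γ' ρ} ht =>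
    Kinding.rec (motive_1 := MR1) (motive_2 := MR2) (motive_3 := MR3) (motive_4 := MR4)
      (motive_5 := MR5) (motive_6 := MR6) (motive_7 := MR7) (motive_8 := MR8)
      rn1 rn2 rn3 rn4 rn5 rn6 rn7 rn8 rn9 rn10 rn11 rn12 rn13 rn14 rn15 rn16 rn17 rn18 rn19 rn20
      rn21 rn22 rn23 rn24 rn25 rn26 rn27 rn28 rn29 rn30 rn31 rn32 rn33 rn34 rn35 rn36 rn37 rn38
      rn39 rn40 h Γ' ρ ht

theorem subkd_ren {Ξ : Ctx} {J K : Kd} (h : SubKd Ξ J K) :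
    ∀ {Γ' ρ}, Thin Ξ Γ' ρ → SubKd Γ' (J.ren ρ) (K.ren ρ) :=
  fun {Γ' ρ} ht =>
    SubKd.rec (motive_1 := MR1) (motive_2 := MR2) (motive_3 := MR3) (motive_4 := MR4)
      (motive_5 := MR5) (motive_6 := MR6) (motive_7 := MR7) (motive_8 := MR8)
      rn1 rn2 rn3 rn4 rn5 rn6 rn7 rn8 rn9 rn10 rn11 rn12 rn13 rn14 rn15 rn16 rn17 rn18 rn19 rn20
      rn21 rn22 rn23 rn24 rn25 rn26 rn27 rn28 rn29 rn30 rn31 rn32 rn33 rn34 rn35 rn36 rn37 rn38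
      rn39 rn40 h Γ' ρ ht

theorem subty_ren {Ξ : Ctx} {A B : Ty} {K : Kd} (h : SubTy Ξ A B K) :
    ∀ {Γ' ρ}, Thin Ξ Γ' ρ → SubTy Γ' (A.ren ρ) (B.ren ρ) (K.ren ρ) :=
  fun {Γ' ρ} ht =>
    SubTy.rec (motive_1 := MR1) (motive_2 := MR2) (motive_3 := MR3) (motive_4 := MR4)
      (motive_5 := MR5) (motive_6 := MR6) (motive_7 := MR7) (motive_8 := MR8)
      rn1 rn2 rn3 rn4 rn5 rn6 rn7 rn8 rn9 rn10 rn11 rn12 rn13 rn14 rn15 rn16 rn17 rn18 rn19 rn20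
      rn21 rn22 rn23 rn24 rn25 rn26 rn27 rn28 rn29 rn30 rn31 rn32 rn33 rn34 rn35 rn36 rn37 rn38
      rn39 rn40 h Γ' ρ ht

theorem tyeq_ren {Ξ : Ctx} {A B : Ty} {K : Kd} (h : TyEq Ξ A B K) :
    ∀ {Γ' ρ}, Thin Ξ Γ' ρ → TyEq Γ' (A.ren ρ) (B.ren ρ) (K.ren ρ) :=
  fun {Γ' ρ} ht =>
    TyEq.rec (motive_1 := MR1) (motive_2 := MR2) (motive_3 := MR3) (motive_4 := MR4)
      (motive_5 := MR5) (motive_6 := MR6) (motive_7 := MR7) (motive_8 := MR8)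
      rn1 rn2 rn3 rn4 rn5 rn6 rn7 rn8 rn9 rn10 rn11 rn12 rn13 rn14 rn15 rn16 rn17 rn18 rn19 rn20
      rn21 rn22 rn23 rn24 rn25 rn26 rn27 rn28 rn29 rn30 rn31 rn32 rn33 rn34 rn35 rn36 rn37 rn38
      rn39 rn40 h Γ' ρ ht
/-! ### Weakening corollaries -/

theorem thin_wk1 {Γ : Ctx} {b : OBind} (hb : WfB Γ b) : Thin Γ (b :: Γ) (fun x => x + 1) :=
  Thin.skip Thin.refl hb

theorem kinding_wk1 {Γ A K} (h : Kinding Γ A K) {b} (hb : WfB Γ b) :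
    Kinding (b :: Γ) (A.shift 0) (K.shift 0) := by
  rw [ty_shift0_eq, kd_shift0_eq]; exact kinding_ren h (thin_wk1 hb)

theorem kdwf_wk1 {Γ K} (h : KdWf Γ K) {b} (hb : WfB Γ b) : KdWf (b :: Γ) (K.shift 0) := by
  rw [kd_shift0_eq]; exact kdwf_ren h (thin_wk1 hb)

theorem subkd_wk1 {Γ J K} (h : SubKd Γ J K) {b} (hb : WfB Γ b) :
    SubKd (b :: Γ) (J.shift 0) (K.shift 0) := by
  rw [kd_shift0_eq, kd_shift0_eq]; exact subkd_ren h (thin_wk1 hb)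

theorem subty_wk1 {Γ A B K} (h : SubTy Γ A B K) {b} (hb : WfB Γ b) :
    SubTy (b :: Γ) (A.shift 0) (B.shift 0) (K.shift 0) := by
  rw [ty_shift0_eq, ty_shift0_eq, kd_shift0_eq]; exact subty_ren h (thin_wk1 hb)

theorem tyeq_wk1 {Γ A B K} (h : TyEq Γ A B K) {b} (hb : WfB Γ b) :
    TyEq (b :: Γ) (A.shift 0) (B.shift 0) (K.shift 0) := by
  rw [ty_shift0_eq, ty_shift0_eq, kd_shift0_eq]; exact tyeq_ren h (thin_wk1 hb)

theorem kd_weaken_one (K : Kd) : K.weaken 1 = K.shift 0 := by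
  rw [kd_weaken_eq, kd_shift0_eq]

theorem kd_weaken1_sub (J : Kd) (σ : ℕ → Ty) : (J.weaken 1).sub (ups σ) = (J.sub σ).weaken 1 := by
  rw [kd_weaken_one, kd_weaken_one, kd_shift0_sub]

/-! ### Parallel substitution preserves all judgments -/

inductive SOk : Ctx → Ctx → (ℕ → Ty) → Prop
  | single : CtxWf Γ → Kinding Γ B J → SOk (.ty J :: Γ) Γ (sgl 0 B)
  | narrow : CtxWf (.ty J' :: Γ) → SubKd Γ J' J → SOk (.ty J :: Γ) (.ty J' :: Γ) Ty.var
  | lift : SOk Ξ Γ' σ → SOk (.ty J :: Ξ) (.ty (J.sub σ) :: Γ') (ups σ)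

inductive CtxSOK : Ctx → Prop
  | nil : CtxSOK []
  | ty : CtxSOK Γ → (∀ Γ' σ, SOk Γ Γ' σ → KdWf Γ' (K.sub σ)) → CtxSOK (.ty K :: Γ)
  | tm : CtxSOK Γ → (∀ Γ' σ, SOk Γ Γ' σ → Kinding Γ' (A.sub σ) Kd.star) → CtxSOK (.tm A :: Γ)

theorem ctxsok_wf : ∀ {Ξ Γ' σ}, SOk Ξ Γ' σ → CtxSOK Ξ → CtxWf Γ' := by
  intro Ξ Γ' σ h
  induction h with
  | single hw _ => intro _; exact hw
  | narrow hw _ => intro _; exact hw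
  | @lift Ξ Γ' σ J hs ih =>
      intro hc
      cases hc with
      | ty hc hr => exact CtxWf.ty (ih hc) (hr _ _ hs)

theorem sok_lookup : ∀ {Ξ Γ' σ}, SOk Ξ Γ' σ → CtxWf Γ' →
    ∀ x K, Ξ[x]? = some (.ty K) → Kinding Γ' (σ x) ((K.weaken (x+1)).sub σ) := by
  intro Ξ Γ' σ h
  induction h with
  | @single Γ B J hw hB =>
      intro _ x K hx
      cases x with
      | zero =>
          have hK : J = K := by simpa using hx
          subst hK
          rw [kd_weaken1_sgl0]
          exact hB
      | succ x =>
          have hx' : Γ[x]? = some (.ty K) := by simpa using hx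
          rw [kd_weaken_succ_sgl0]
          show Kinding Γ (sgl 0 B (x+1)) (K.weaken (x+1))
          have : sgl 0 B (x+1) = Ty.var x := by simp [sgl]
          rw [this]
          exact Kinding.var hw hx'
  | @narrow J' Γ J hw hsub =>
      intro _ x K hx
      cases x with
      | zero =>
          have hK : J = K := by simpa using hx
          subst hK
          show Kinding (.ty J' :: Γ) (.var 0) ((J.weaken 1).sub Ty.var)
          rw [Kd.sub_id]
          have hv : Kinding (.ty J' :: Γ) (.var 0) (J'.weaken 1) := Kinding.var hw (by simp)
          have hJ' : KdWf Γ J' := by cases hw with | ty _ h => exact h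
          have hsub' : SubKd (.ty J' :: Γ) (J'.shift 0) (J.shift 0) := subkd_wk1 hsub hJ'
          rw [kd_weaken_one]
          exact Kinding.sub (by rwa [kd_weaken_one] at hv) hsub'
      | succ x =>
          have hx' : Γ[x]? = some (.ty K) := by simpa using hx
          show Kinding (.ty J' :: Γ) (.var (x+1)) ((K.weaken (x+2)).sub Ty.var)
          rw [Kd.sub_id]
          exact Kinding.var hw (by simpa using hx')
  | @lift Ξ Γ' σ J hs ih =>
      intro hw x K hx
      have hJσ : KdWf Γ' (J.sub σ) := by cases hw with | ty _ h => exact h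
      have hw' : CtxWf Γ' := by cases hw with | ty h _ => exact h
      cases x with
      | zero =>
          have hK : J = K := by simpa using hx
          subst hK
          rw [kd_weaken1_sub, kd_weaken_one]
          exact Kinding.var hw (by simp)
      | succ x =>
          have hx' : Ξ[x]? = some (.ty K) := by simpa using hx
          rw [kd_weaken_succ_sub]
          show Kinding (.ty (J.sub σ) :: Γ') ((σ x).ren (· + 1)) (((K.weaken (x+1)).sub σ).shift 0)
          rw [← ty_shift0_eq]
          exact kinding_wk1 (ih hw' x K hx') hJσ

abbrev MS1 : ∀ (Γ : Ctx), CtxWf Γ → Prop := fun Ξ _ => CtxSOK Ξ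
abbrev MS2 : ∀ (Γ : Ctx) (K : Kd), KdWf Γ K → Prop :=
  fun Ξ K _ => ∀ Γ' σ, SOk Ξ Γ' σ → KdWf Γ' (K.sub σ)
abbrev MS3 : ∀ (Γ : Ctx) (A : Ty) (K : Kd), Kinding Γ A K → Prop :=
  fun Ξ A K _ => ∀ Γ' σ, SOk Ξ Γ' σ → Kinding Γ' (A.sub σ) (K.sub σ)
abbrev MS4 : ∀ (Γ : Ctx) (t : Tm) (A : Ty), Typing Γ t A → Prop := fun _ _ _ _ => True
abbrev MS5 : ∀ (Γ : Ctx) (J K : Kd), SubKd Γ J K → Prop :=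
  fun Ξ J K _ => ∀ Γ' σ, SOk Ξ Γ' σ → SubKd Γ' (J.sub σ) (K.sub σ)
abbrev MS6 : ∀ (Γ : Ctx) (A B : Ty) (K : Kd), SubTy Γ A B K → Prop :=
  fun Ξ A B K _ => ∀ Γ' σ, SOk Ξ Γ' σ → SubTy Γ' (A.sub σ) (B.sub σ) (K.sub σ)
abbrev MS7 : ∀ (Γ : Ctx) (J K : Kd), KdEq Γ J K → Prop := fun _ _ _ _ => True
abbrev MS8 : ∀ (Γ : Ctx) (A B : Ty) (K : Kd), TyEq Γ A B K → Prop :=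
  fun Ξ A B K _ => ∀ Γ' σ, SOk Ξ Γ' σ → TyEq Γ' (A.sub σ) (B.sub σ) (K.sub σ)

section SubCases
theorem sn1 : MS1 [] CtxWf.nil := CtxSOK.nil
theorem sn2 : ∀ {Γ : Ctx} {K : Kd} (a : CtxWf Γ) (a1 : KdWf Γ K),
    MS1 Γ a → MS2 Γ K a1 → MS1 (.ty K :: Γ) (CtxWf.ty a a1) :=
  fun _ _ ih ih1 => CtxSOK.ty ih ih1
theorem sn3 : ∀ {Γ : Ctx} {A : Ty} (a : CtxWf Γ) (a1 : Kinding Γ A Kd.star),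
    MS1 Γ a → MS3 Γ A Kd.star a1 → MS1 (.tm A :: Γ) (CtxWf.tm a a1) :=
  fun _ _ ih ih1 => CtxSOK.tm ih ih1
theorem sn4 : ∀ {Γ : Ctx} {A B : Ty} (a : Kinding Γ A Kd.star) (a1 : Kinding Γ B Kd.star),
    MS3 Γ A Kd.star a → MS3 Γ B Kd.star a1 → MS2 Γ (.intv A B) (KdWf.intv a a1) :=
  fun _ _ ih1 ih2 Γ' σ hs => KdWf.intv (ih1 Γ' σ hs) (ih2 Γ' σ hs)
theorem sn5 : ∀ {Γ : Ctx} {J K : Kd} (a : KdWf Γ J) (a1 : KdWf (.ty J :: Γ) K),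
    MS2 Γ J a → MS2 (.ty J :: Γ) K a1 → MS2 Γ (.pi J K) (KdWf.pi a a1) :=
  fun _ _ ih1 ih2 Γ' σ hs => KdWf.pi (ih1 Γ' σ hs) (ih2 _ (ups σ) (SOk.lift hs))
theorem sn6 : ∀ {Γ : Ctx} {x : ℕ} {K : Kd} (a : CtxWf Γ) (a1 : Γ[x]? = some (.ty K)),
    MS1 Γ a → MS3 Γ (.var x) (K.weaken (x+1)) (Kinding.var a a1) := by
  intro Γ x K a a1 ihc Γ' σ hs
  exact sok_lookup hs (ctxsok_wf hs ihc) x K a1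
theorem sn7 : ∀ {Γ : Ctx} (a : CtxWf Γ), MS1 Γ a → MS3 Γ .top Kd.star (Kinding.top a) :=
  fun hs ihc Γ' σ h => Kinding.top (ctxsok_wf h ihc)
theorem sn8 : ∀ {Γ : Ctx} (a : CtxWf Γ), MS1 Γ a → MS3 Γ .bot Kd.star (Kinding.bot a) :=
  fun hs ihc Γ' σ h => Kinding.bot (ctxsok_wf h ihc)
theorem sn9 : ∀ {Γ : Ctx} {A B : Ty} (a : Kinding Γ A Kd.star) (a1 : Kinding Γ B Kd.star),
    MS3 Γ A Kd.star a → MS3 Γ B Kd.star a1 → MS3 Γ (.arr A B) Kd.star (Kinding.arr a a1) :=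
  fun _ _ ih1 ih2 Γ' σ hs => Kinding.arr (ih1 Γ' σ hs) (ih2 Γ' σ hs)
theorem sn10 : ∀ {Γ : Ctx} {J : Kd} {A : Ty} {K : Kd} (a : KdWf Γ J) (a1 : Kinding (.ty J :: Γ) A K),
    MS2 Γ J a → MS3 (.ty J :: Γ) A K a1 → MS3 Γ (.lam J A) (.pi J K) (Kinding.abs a a1) :=
  fun _ _ ih1 ih2 Γ' σ hs => Kinding.abs (ih1 Γ' σ hs) (ih2 _ (ups σ) (SOk.lift hs))
theorem sn11 : ∀ {Γ : Ctx} {A B C : Ty} (a : Kinding Γ A (.intv B C)),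
    MS3 Γ A (.intv B C) a → MS3 Γ A (.intv A A) (Kinding.sing a) :=
  fun _ ih Γ' σ hs => Kinding.sing (ih Γ' σ hs)
theorem sn12 : ∀ {Γ : Ctx} {K : Kd} {A : Ty} (a : KdWf Γ K) (a1 : Kinding (.ty K :: Γ) A Kd.star),
    MS2 Γ K a → MS3 (.ty K :: Γ) A Kd.star a1 → MS3 Γ (.all K A) Kd.star (Kinding.all a a1) :=
  fun _ _ ih1 ih2 Γ' σ hs => Kinding.all (ih1 Γ' σ hs) (ih2 _ (ups σ) (SOk.lift hs))
theorem sn13 : ∀ {Γ : Ctx} {A : Ty} {J K : Kd} {B : Ty} (a : Kinding Γ A (.pi J K)) (a1 : Kinding Γ B J),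
    MS3 Γ A (.pi J K) a → MS3 Γ B J a1 → MS3 Γ (.app A B) (K.subst 0 B) (Kinding.app a a1) := by
  intro Γ A J K B a a1 ih1 ih2 Γ' σ hs
  show Kinding Γ' (.app (A.sub σ) (B.sub σ)) ((K.subst 0 B).sub σ)
  rw [kd_subst0_sub]
  exact Kinding.app (ih1 Γ' σ hs) (ih2 Γ' σ hs)
theorem sn14 : ∀ {Γ : Ctx} {A : Ty} {J K : Kd} (a : Kinding Γ A J) (a1 : SubKd Γ J K),
    MS3 Γ A J a → MS5 Γ J K a1 → MS3 Γ A K (Kinding.sub a a1) :=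
  fun _ _ ih1 ih2 Γ' σ hs => Kinding.sub (ih1 Γ' σ hs) (ih2 Γ' σ hs)
theorem sn15 : ∀ {Γ : Ctx} {x : ℕ} {A : Ty} (a : CtxWf Γ) (a1 : Γ[x]? = some (.tm A)),
    MS1 Γ a → MS4 Γ (.var x) (A.weaken (x+1)) (Typing.var a a1) := fun _ _ _ => trivial
theorem sn16 : ∀ {Γ : Ctx} {A B : Ty} {t : Tm} (a : Kinding Γ A Kd.star) (a1 : Kinding Γ B Kd.star)
    (a2 : Typing (.tm A :: Γ) t (B.shift 0)), MS3 Γ A Kd.star a → MS3 Γ B Kd.star a1 →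
    MS4 (.tm A :: Γ) t (B.shift 0) a2 → MS4 Γ (.lam A t) (.arr A B) (Typing.abs a a1 a2) :=
  fun _ _ _ _ _ _ => trivial
theorem sn17 : ∀ {Γ : Ctx} {s : Tm} {A B : Ty} {t : Tm} (a : Typing Γ s (.arr A B)) (a1 : Typing Γ t A),
    MS4 Γ s (.arr A B) a → MS4 Γ t A a1 → MS4 Γ (.app s t) B (Typing.app a a1) := fun _ _ _ _ => trivial
theorem sn18 : ∀ {Γ : Ctx} {K : Kd} {t : Tm} {A : Ty} (a : KdWf Γ K) (a1 : Typing (.ty K :: Γ) t A),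
    MS2 Γ K a → MS4 (.ty K :: Γ) t A a1 → MS4 Γ (.tlam K t) (.all K A) (Typing.tabs a a1) :=
  fun _ _ _ _ => trivial
theorem sn19 : ∀ {Γ : Ctx} {t : Tm} {K : Kd} {A B : Ty} (a : Typing Γ t (.all K A)) (a1 : Kinding Γ B K),
    MS4 Γ t (.all K A) a → MS3 Γ B K a1 → MS4 Γ (.tapp t B) (A.subst 0 B) (Typing.tapp a a1) :=
  fun _ _ _ _ => trivial
theorem sn20 : ∀ {Γ : Ctx} {t : Tm} {A B : Ty} (a : Typing Γ t A) (a1 : SubTy Γ A B Kd.star),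
    MS4 Γ t A a → MS6 Γ A B Kd.star a1 → MS4 Γ t B (Typing.sub a a1) := fun _ _ _ _ => trivial
theorem sn21 : ∀ {Γ : Ctx} {A₂ A₁ B₁ B₂ : Ty} (a : SubTy Γ A₂ A₁ Kd.star) (a1 : SubTy Γ B₁ B₂ Kd.star),
    MS6 Γ A₂ A₁ Kd.star a → MS6 Γ B₁ B₂ Kd.star a1 →
    MS5 Γ (.intv A₁ B₁) (.intv A₂ B₂) (SubKd.intv a a1) :=
  fun _ _ ih1 ih2 Γ' σ hs => SubKd.intv (ih1 Γ' σ hs) (ih2 Γ' σ hs)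
theorem sn22 : ∀ {Γ : Ctx} {J₁ K₁ J₂ K₂ : Kd} (a : KdWf Γ (.pi J₁ K₁)) (a1 : SubKd Γ J₂ J₁)
    (a2 : SubKd (.ty J₂ :: Γ) K₁ K₂), MS2 Γ (.pi J₁ K₁) a → MS5 Γ J₂ J₁ a1 →
    MS5 (.ty J₂ :: Γ) K₁ K₂ a2 → MS5 Γ (.pi J₁ K₁) (.pi J₂ K₂) (SubKd.pi a a1 a2) :=
  fun _ _ _ ih1 ih2 ih3 Γ' σ hs => SubKd.pi (ih1 Γ' σ hs) (ih2 Γ' σ hs) (ih3 _ (ups σ) (SOk.lift hs))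
theorem sn23 : ∀ {Γ : Ctx} {A : Ty} {K : Kd} (a : Kinding Γ A K),
    MS3 Γ A K a → MS6 Γ A A K (SubTy.refl a) :=
  fun _ ih Γ' σ hs => SubTy.refl (ih Γ' σ hs)
theorem sn24 : ∀ {Γ : Ctx} {A B : Ty} {K : Kd} {C : Ty} (a : SubTy Γ A B K) (a1 : SubTy Γ B C K),
    MS6 Γ A B K a → MS6 Γ B C K a1 → MS6 Γ A C K (SubTy.trans a a1) :=
  fun _ _ ih1 ih2 Γ' σ hs => SubTy.trans (ih1 Γ' σ hs) (ih2 Γ' σ hs)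
theorem sn25 : ∀ {Γ : Ctx} {A B C : Ty} (a : Kinding Γ A (.intv B C)),
    MS3 Γ A (.intv B C) a → MS6 Γ A .top Kd.star (SubTy.top a) :=
  fun _ ih Γ' σ hs => SubTy.top (ih Γ' σ hs)
theorem sn26 : ∀ {Γ : Ctx} {A B C : Ty} (a : Kinding Γ A (.intv B C)),
    MS3 Γ A (.intv B C) a → MS6 Γ .bot A Kd.star (SubTy.bot a) :=
  fun _ ih Γ' σ hs => SubTy.bot (ih Γ' σ hs)
theorem sn27 : ∀ {J : Kd} {Γ : Ctx} {A : Ty} {K : Kd} {B : Ty}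
    (a : Kinding (.ty J :: Γ) A K) (a1 : Kinding Γ B J),
    MS3 (.ty J :: Γ) A K a → MS3 Γ B J a1 →
    MS6 Γ (.app (.lam J A) B) (A.subst 0 B) (K.subst 0 B) (SubTy.beta₁ a a1) := by
  intro J Γ A K B a a1 ih1 ih2 Γ' σ hs
  show SubTy Γ' (.app (.lam (J.sub σ) (A.sub (ups σ))) (B.sub σ)) ((A.subst 0 B).sub σ) ((K.subst 0 B).sub σ)
  rw [ty_subst0_sub, kd_subst0_sub]
  exact SubTy.beta₁ (ih1 _ (ups σ) (SOk.lift hs)) (ih2 Γ' σ hs)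
theorem sn28 : ∀ {J : Kd} {Γ : Ctx} {A : Ty} {K : Kd} {B : Ty}
    (a : Kinding (.ty J :: Γ) A K) (a1 : Kinding Γ B J),
    MS3 (.ty J :: Γ) A K a → MS3 Γ B J a1 →
    MS6 Γ (A.subst 0 B) (.app (.lam J A) B) (K.subst 0 B) (SubTy.beta₂ a a1) := by
  intro J Γ A K B a a1 ih1 ih2 Γ' σ hs
  show SubTy Γ' ((A.subst 0 B).sub σ) (.app (.lam (J.sub σ) (A.sub (ups σ))) (B.sub σ)) ((K.subst 0 B).sub σ)
  rw [ty_subst0_sub, kd_subst0_sub]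
  exact SubTy.beta₂ (ih1 _ (ups σ) (SOk.lift hs)) (ih2 Γ' σ hs)
theorem sn29 : ∀ {Γ : Ctx} {A : Ty} {J K : Kd} (a : Kinding Γ A (.pi J K)),
    MS3 Γ A (.pi J K) a →
    MS6 Γ (.lam J (.app (A.shift 0) (.var 0))) A (.pi J K) (SubTy.eta₁ a) := by
  intro Γ A J K a ih Γ' σ hs
  show SubTy Γ' (.lam (J.sub σ) (.app ((A.shift 0).sub (ups σ)) (.var 0))) (A.sub σ) ((Kd.pi J K).sub σ)
  rw [ty_shift0_sub]
  exact SubTy.eta₁ (ih Γ' σ hs)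
theorem sn30 : ∀ {Γ : Ctx} {A : Ty} {J K : Kd} (a : Kinding Γ A (.pi J K)),
    MS3 Γ A (.pi J K) a →
    MS6 Γ A (.lam J (.app (A.shift 0) (.var 0))) (.pi J K) (SubTy.eta₂ a) := by
  intro Γ A J K a ih Γ' σ hs
  show SubTy Γ' (A.sub σ) (.lam (J.sub σ) (.app ((A.shift 0).sub (ups σ)) (.var 0))) ((Kd.pi J K).sub σ)
  rw [ty_shift0_sub]
  exact SubTy.eta₂ (ih Γ' σ hs)
theorem sn31 : ∀ {Γ : Ctx} {A₂ A₁ B₁ B₂ : Ty} (a : SubTy Γ A₂ A₁ Kd.star) (a1 : SubTy Γ B₁ B₂ Kd.star),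
    MS6 Γ A₂ A₁ Kd.star a → MS6 Γ B₁ B₂ Kd.star a1 →
    MS6 Γ (.arr A₁ B₁) (.arr A₂ B₂) Kd.star (SubTy.arr a a1) :=
  fun _ _ ih1 ih2 Γ' σ hs => SubTy.arr (ih1 Γ' σ hs) (ih2 Γ' σ hs)
theorem sn32 : ∀ {Γ : Ctx} {J₁ : Kd} {A₁ : Ty} {J K J₂ : Kd} {A₂ : Ty}
    (a : Kinding Γ (.lam J₁ A₁) (.pi J K)) (a1 : Kinding Γ (.lam J₂ A₂) (.pi J K))
    (a2 : SubTy (.ty J :: Γ) A₁ A₂ K),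
    MS3 Γ (.lam J₁ A₁) (.pi J K) a → MS3 Γ (.lam J₂ A₂) (.pi J K) a1 →
    MS6 (.ty J :: Γ) A₁ A₂ K a2 →
    MS6 Γ (.lam J₁ A₁) (.lam J₂ A₂) (.pi J K) (SubTy.abs a a1 a2) :=
  fun _ _ _ ih1 ih2 ih3 Γ' σ hs =>
    SubTy.abs (ih1 Γ' σ hs) (ih2 Γ' σ hs) (ih3 _ (ups σ) (SOk.lift hs))
theorem sn33 : ∀ {Γ : Ctx} {K₁ : Kd} {A₁ : Ty} {K₂ : Kd} {A₂ : Ty}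
    (a : Kinding Γ (.all K₁ A₁) Kd.star) (a1 : SubKd Γ K₂ K₁)
    (a2 : SubTy (.ty K₂ :: Γ) A₁ A₂ Kd.star),
    MS3 Γ (.all K₁ A₁) Kd.star a → MS5 Γ K₂ K₁ a1 → MS6 (.ty K₂ :: Γ) A₁ A₂ Kd.star a2 →
    MS6 Γ (.all K₁ A₁) (.all K₂ A₂) Kd.star (SubTy.all a a1 a2) :=
  fun _ _ _ ih1 ih2 ih3 Γ' σ hs =>
    SubTy.all (ih1 Γ' σ hs) (ih2 Γ' σ hs) (ih3 _ (ups σ) (SOk.lift hs))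
theorem sn34 : ∀ {Γ : Ctx} {A₁ A₂ : Ty} {J K : Kd} {B₁ B₂ : Ty}
    (a : SubTy Γ A₁ A₂ (.pi J K)) (a1 : TyEq Γ B₁ B₂ J),
    MS6 Γ A₁ A₂ (.pi J K) a → MS8 Γ B₁ B₂ J a1 →
    MS6 Γ (.app A₁ B₁) (.app A₂ B₂) (K.subst 0 B₁) (SubTy.app a a1) := by
  intro Γ A₁ A₂ J K B₁ B₂ a a1 ih1 ih2 Γ' σ hs
  show SubTy Γ' (.app (A₁.sub σ) (B₁.sub σ)) (.app (A₂.sub σ) (B₂.sub σ)) ((K.subst 0 B₁).sub σ)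
  rw [kd_subst0_sub]
  exact SubTy.app (ih1 Γ' σ hs) (ih2 Γ' σ hs)
theorem sn35 : ∀ {Γ : Ctx} {A B₁ B₂ : Ty} (a : Kinding Γ A (.intv B₁ B₂)),
    MS3 Γ A (.intv B₁ B₂) a → MS6 Γ B₁ A Kd.star (SubTy.bnd₁ a) :=
  fun _ ih Γ' σ hs => SubTy.bnd₁ (ih Γ' σ hs)
theorem sn36 : ∀ {Γ : Ctx} {A B₁ B₂ : Ty} (a : Kinding Γ A (.intv B₁ B₂)),
    MS3 Γ A (.intv B₁ B₂) a → MS6 Γ A B₂ Kd.star (SubTy.bnd₂ a) :=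
  fun _ ih Γ' σ hs => SubTy.bnd₂ (ih Γ' σ hs)
theorem sn37 : ∀ {Γ : Ctx} {A₁ A₂ : Ty} {B C : Ty} (a : SubTy Γ A₁ A₂ (.intv B C)),
    MS6 Γ A₁ A₂ (.intv B C) a → MS6 Γ A₁ A₂ (.intv A₁ A₂) (SubTy.intv a) :=
  fun _ ih Γ' σ hs => SubTy.intv (ih Γ' σ hs)
theorem sn38 : ∀ {Γ : Ctx} {A₁ A₂ : Ty} {J K : Kd} (a : SubTy Γ A₁ A₂ J) (a1 : SubKd Γ J K),
    MS6 Γ A₁ A₂ J a → MS5 Γ J K a1 → MS6 Γ A₁ A₂ K (SubTy.sub a a1) :=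
  fun _ _ ih1 ih2 Γ' σ hs => SubTy.sub (ih1 Γ' σ hs) (ih2 Γ' σ hs)
theorem sn39 : ∀ {Γ : Ctx} {J K : Kd} (a : SubKd Γ J K) (a1 : SubKd Γ K J),
    MS5 Γ J K a → MS5 Γ K J a1 → MS7 Γ J K (KdEq.antisym a a1) := fun _ _ _ _ => trivial
theorem sn40 : ∀ {Γ : Ctx} {A B : Ty} {K : Kd} (a : SubTy Γ A B K) (a1 : SubTy Γ B A K),
    MS6 Γ A B K a → MS6 Γ B A K a1 → MS8 Γ A B K (TyEq.antisym a a1) :=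
  fun _ _ ih1 ih2 Γ' σ hs => TyEq.antisym (ih1 Γ' σ hs) (ih2 Γ' σ hs)
end SubCases

theorem kdwf_psub {Ξ : Ctx} {K : Kd} (h : KdWf Ξ K) : ∀ {Γ' σ}, SOk Ξ Γ' σ → KdWf Γ' (K.sub σ) :=
  fun {Γ' σ} hs =>
    KdWf.rec (motive_1 := MS1) (motive_2 := MS2) (motive_3 := MS3) (motive_4 := MS4)
      (motive_5 := MS5) (motive_6 := MS6) (motive_7 := MS7) (motive_8 := MS8)
      sn1 sn2 sn3 sn4 sn5 sn6 sn7 sn8 sn9 sn10 sn11 sn12 sn13 sn14 sn15 sn16 sn17 sn18 sn19 sn20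
      sn21 sn22 sn23 sn24 sn25 sn26 sn27 sn28 sn29 sn30 sn31 sn32 sn33 sn34 sn35 sn36 sn37 sn38
      sn39 sn40 h Γ' σ hs

theorem kinding_psub {Ξ : Ctx} {A : Ty} {K : Kd} (h : Kinding Ξ A K) :
    ∀ {Γ' σ}, SOk Ξ Γ' σ → Kinding Γ' (A.sub σ) (K.sub σ) :=
  fun {Γ' σ} hs =>
    Kinding.rec (motive_1 := MS1) (motive_2 := MS2) (motive_3 := MS3) (motive_4 := MS4)
      (motive_5 := MS5) (motive_6 := MS6) (motive_7 := MS7) (motive_8 := MS8)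
      sn1 sn2 sn3 sn4 sn5 sn6 sn7 sn8 sn9 sn10 sn11 sn12 sn13 sn14 sn15 sn16 sn17 sn18 sn19 sn20
      sn21 sn22 sn23 sn24 sn25 sn26 sn27 sn28 sn29 sn30 sn31 sn32 sn33 sn34 sn35 sn36 sn37 sn38
      sn39 sn40 h Γ' σ hs

theorem subkd_psub {Ξ : Ctx} {J K : Kd} (h : SubKd Ξ J K) :
    ∀ {Γ' σ}, SOk Ξ Γ' σ → SubKd Γ' (J.sub σ) (K.sub σ) :=
  fun {Γ' σ} hs =>
    SubKd.rec (motive_1 := MS1) (motive_2 := MS2) (motive_3 := MS3) (motive_4 := MS4)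
      (motive_5 := MS5) (motive_6 := MS6) (motive_7 := MS7) (motive_8 := MS8)
      sn1 sn2 sn3 sn4 sn5 sn6 sn7 sn8 sn9 sn10 sn11 sn12 sn13 sn14 sn15 sn16 sn17 sn18 sn19 sn20
      sn21 sn22 sn23 sn24 sn25 sn26 sn27 sn28 sn29 sn30 sn31 sn32 sn33 sn34 sn35 sn36 sn37 sn38
      sn39 sn40 h Γ' σ hs

theorem subty_psub {Ξ : Ctx} {A B : Ty} {K : Kd} (h : SubTy Ξ A B K) :
    ∀ {Γ' σ}, SOk Ξ Γ' σ → SubTy Γ' (A.sub σ) (B.sub σ) (K.sub σ) :=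
  fun {Γ' σ} hs =>
    SubTy.rec (motive_1 := MS1) (motive_2 := MS2) (motive_3 := MS3) (motive_4 := MS4)
      (motive_5 := MS5) (motive_6 := MS6) (motive_7 := MS7) (motive_8 := MS8)
      sn1 sn2 sn3 sn4 sn5 sn6 sn7 sn8 sn9 sn10 sn11 sn12 sn13 sn14 sn15 sn16 sn17 sn18 sn19 sn20
      sn21 sn22 sn23 sn24 sn25 sn26 sn27 sn28 sn29 sn30 sn31 sn32 sn33 sn34 sn35 sn36 sn37 sn38
      sn39 sn40 h Γ' σ hs

theorem tyeq_psub {Ξ : Ctx} {A B : Ty} {K : Kd} (h : TyEq Ξ A B K) :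
    ∀ {Γ' σ}, SOk Ξ Γ' σ → TyEq Γ' (A.sub σ) (B.sub σ) (K.sub σ) :=
  fun {Γ' σ} hs =>
    TyEq.rec (motive_1 := MS1) (motive_2 := MS2) (motive_3 := MS3) (motive_4 := MS4)
      (motive_5 := MS5) (motive_6 := MS6) (motive_7 := MS7) (motive_8 := MS8)
      sn1 sn2 sn3 sn4 sn5 sn6 sn7 sn8 sn9 sn10 sn11 sn12 sn13 sn14 sn15 sn16 sn17 sn18 sn19 sn20
      sn21 sn22 sn23 sn24 sn25 sn26 sn27 sn28 sn29 sn30 sn31 sn32 sn33 sn34 sn35 sn36 sn37 sn38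
      sn39 sn40 h Γ' σ hs
/-! ### Contexts of judgments are well-formed; substitution/narrowing corollaries -/

abbrev MW1 : ∀ (Γ : Ctx), CtxWf Γ → Prop := fun _ _ => True
abbrev MW2 : ∀ (Γ : Ctx) (K : Kd), KdWf Γ K → Prop := fun Γ _ _ => CtxWf Γ
abbrev MW3 : ∀ (Γ : Ctx) (A : Ty) (K : Kd), Kinding Γ A K → Prop := fun Γ _ _ _ => CtxWf Γ
abbrev MW4 : ∀ (Γ : Ctx) (t : Tm) (A : Ty), Typing Γ t A → Prop := fun _ _ _ _ => True
abbrev MW5 : ∀ (Γ : Ctx) (J K : Kd), SubKd Γ J K → Prop := fun Γ _ _ _ => CtxWf Γ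
abbrev MW6 : ∀ (Γ : Ctx) (A B : Ty) (K : Kd), SubTy Γ A B K → Prop := fun Γ _ _ _ _ => CtxWf Γ
abbrev MW7 : ∀ (Γ : Ctx) (J K : Kd), KdEq Γ J K → Prop := fun Γ _ _ _ => CtxWf Γ
abbrev MW8 : ∀ (Γ : Ctx) (A B : Ty) (K : Kd), TyEq Γ A B K → Prop := fun Γ _ _ _ _ => CtxWf Γ

section WfCtx
variable {Γ : Ctx}

theorem kinding_ctxwf {A K} (h : Kinding Γ A K) : CtxWf Γ :=
  Kinding.rec (motive_1 := MW1) (motive_2 := MW2) (motive_3 := MW3) (motive_4 := MW4)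
    (motive_5 := MW5) (motive_6 := MW6) (motive_7 := MW7) (motive_8 := MW8)
    trivial (fun _ _ _ _ => trivial) (fun _ _ _ _ => trivial)
    (fun _ _ ih _ => ih) (fun _ _ ih _ => ih)
    (fun a _ _ => a) (fun a _ => a) (fun a _ => a)
    (fun _ _ ih _ => ih) (fun _ _ ih _ => ih) (fun _ ih => ih) (fun _ _ ih _ => ih)
    (fun _ _ ih _ => ih) (fun _ _ ih _ => ih)
    (fun _ _ _ => trivial) (fun _ _ _ _ _ _ => trivial) (fun _ _ _ _ => trivial)
    (fun _ _ _ _ => trivial) (fun _ _ _ _ => trivial) (fun _ _ _ _ => trivial)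
    (fun _ _ ih _ => ih) (fun _ _ _ ih _ _ => ih)
    (fun _ ih => ih) (fun _ _ ih _ => ih) (fun _ ih => ih) (fun _ ih => ih)
    (fun _ _ _ ih => ih) (fun _ _ _ ih => ih) (fun _ ih => ih) (fun _ ih => ih)
    (fun _ _ ih _ => ih) (fun _ _ _ ih _ _ => ih) (fun _ _ _ ih _ _ => ih)
    (fun _ _ ih _ => ih) (fun _ ih => ih) (fun _ ih => ih) (fun _ ih => ih)
    (fun _ _ ih _ => ih) (fun _ _ ih _ => ih) (fun _ _ ih _ => ih) h

theorem kdwf_ctxwf {K} (h : KdWf Γ K) : CtxWf Γ :=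
  KdWf.rec (motive_1 := MW1) (motive_2 := MW2) (motive_3 := MW3) (motive_4 := MW4)
    (motive_5 := MW5) (motive_6 := MW6) (motive_7 := MW7) (motive_8 := MW8)
    trivial (fun _ _ _ _ => trivial) (fun _ _ _ _ => trivial)
    (fun _ _ ih _ => ih) (fun _ _ ih _ => ih)
    (fun a _ _ => a) (fun a _ => a) (fun a _ => a)
    (fun _ _ ih _ => ih) (fun _ _ ih _ => ih) (fun _ ih => ih) (fun _ _ ih _ => ih)
    (fun _ _ ih _ => ih) (fun _ _ ih _ => ih)
    (fun _ _ _ => trivial) (fun _ _ _ _ _ _ => trivial) (fun _ _ _ _ => trivial)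
    (fun _ _ _ _ => trivial) (fun _ _ _ _ => trivial) (fun _ _ _ _ => trivial)
    (fun _ _ ih _ => ih) (fun _ _ _ ih _ _ => ih)
    (fun _ ih => ih) (fun _ _ ih _ => ih) (fun _ ih => ih) (fun _ ih => ih)
    (fun _ _ _ ih => ih) (fun _ _ _ ih => ih) (fun _ ih => ih) (fun _ ih => ih)
    (fun _ _ ih _ => ih) (fun _ _ _ ih _ _ => ih) (fun _ _ _ ih _ _ => ih)
    (fun _ _ ih _ => ih) (fun _ ih => ih) (fun _ ih => ih) (fun _ ih => ih)
    (fun _ _ ih _ => ih) (fun _ _ ih _ => ih) (fun _ _ ih _ => ih) h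

theorem subkd_ctxwf {J K} (h : SubKd Γ J K) : CtxWf Γ :=
  SubKd.rec (motive_1 := MW1) (motive_2 := MW2) (motive_3 := MW3) (motive_4 := MW4)
    (motive_5 := MW5) (motive_6 := MW6) (motive_7 := MW7) (motive_8 := MW8)
    trivial (fun _ _ _ _ => trivial) (fun _ _ _ _ => trivial)
    (fun _ _ ih _ => ih) (fun _ _ ih _ => ih)
    (fun a _ _ => a) (fun a _ => a) (fun a _ => a)
    (fun _ _ ih _ => ih) (fun _ _ ih _ => ih) (fun _ ih => ih) (fun _ _ ih _ => ih)
    (fun _ _ ih _ => ih) (fun _ _ ih _ => ih)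
    (fun _ _ _ => trivial) (fun _ _ _ _ _ _ => trivial) (fun _ _ _ _ => trivial)
    (fun _ _ _ _ => trivial) (fun _ _ _ _ => trivial) (fun _ _ _ _ => trivial)
    (fun _ _ ih _ => ih) (fun _ _ _ ih _ _ => ih)
    (fun _ ih => ih) (fun _ _ ih _ => ih) (fun _ ih => ih) (fun _ ih => ih)
    (fun _ _ _ ih => ih) (fun _ _ _ ih => ih) (fun _ ih => ih) (fun _ ih => ih)
    (fun _ _ ih _ => ih) (fun _ _ _ ih _ _ => ih) (fun _ _ _ ih _ _ => ih)
    (fun _ _ ih _ => ih) (fun _ ih => ih) (fun _ ih => ih) (fun _ ih => ih)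
    (fun _ _ ih _ => ih) (fun _ _ ih _ => ih) (fun _ _ ih _ => ih) h

theorem subty_ctxwf {A B K} (h : SubTy Γ A B K) : CtxWf Γ :=
  SubTy.rec (motive_1 := MW1) (motive_2 := MW2) (motive_3 := MW3) (motive_4 := MW4)
    (motive_5 := MW5) (motive_6 := MW6) (motive_7 := MW7) (motive_8 := MW8)
    trivial (fun _ _ _ _ => trivial) (fun _ _ _ _ => trivial)
    (fun _ _ ih _ => ih) (fun _ _ ih _ => ih)
    (fun a _ _ => a) (fun a _ => a) (fun a _ => a)
    (fun _ _ ih _ => ih) (fun _ _ ih _ => ih) (fun _ ih => ih) (fun _ _ ih _ => ih)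
    (fun _ _ ih _ => ih) (fun _ _ ih _ => ih)
    (fun _ _ _ => trivial) (fun _ _ _ _ _ _ => trivial) (fun _ _ _ _ => trivial)
    (fun _ _ _ _ => trivial) (fun _ _ _ _ => trivial) (fun _ _ _ _ => trivial)
    (fun _ _ ih _ => ih) (fun _ _ _ ih _ _ => ih)
    (fun _ ih => ih) (fun _ _ ih _ => ih) (fun _ ih => ih) (fun _ ih => ih)
    (fun _ _ _ ih => ih) (fun _ _ _ ih => ih) (fun _ ih => ih) (fun _ ih => ih)
    (fun _ _ ih _ => ih) (fun _ _ _ ih _ _ => ih) (fun _ _ _ ih _ _ => ih)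
    (fun _ _ ih _ => ih) (fun _ ih => ih) (fun _ ih => ih) (fun _ ih => ih)
    (fun _ _ ih _ => ih) (fun _ _ ih _ => ih) (fun _ _ ih _ => ih) h

end WfCtx

/-! single substitution -/

theorem kinding_subst1 {Γ : Ctx} {J : Kd} {B A : Ty} {K : Kd}
    (hB : Kinding Γ B J) (h : Kinding (.ty J :: Γ) A K) :
    Kinding Γ (A.subst 0 B) (K.subst 0 B) := by
  rw [Ty.subst_eq, Kd.subst_eq]
  exact kinding_psub h (SOk.single (kinding_ctxwf hB) hB)

theorem kdwf_subst1 {Γ : Ctx} {J : Kd} {B : Ty} {K : Kd}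
    (hB : Kinding Γ B J) (h : KdWf (.ty J :: Γ) K) :
    KdWf Γ (K.subst 0 B) := by
  rw [Kd.subst_eq]
  exact kdwf_psub h (SOk.single (kinding_ctxwf hB) hB)

theorem subkd_subst1 {Γ : Ctx} {J : Kd} {B : Ty} {K₁ K₂ : Kd}
    (hB : Kinding Γ B J) (h : SubKd (.ty J :: Γ) K₁ K₂) :
    SubKd Γ (K₁.subst 0 B) (K₂.subst 0 B) := by
  rw [Kd.subst_eq, Kd.subst_eq]
  exact subkd_psub h (SOk.single (kinding_ctxwf hB) hB)

theorem subty_subst1 {Γ : Ctx} {J : Kd} {B A₁ A₂ : Ty} {K : Kd}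
    (hB : Kinding Γ B J) (h : SubTy (.ty J :: Γ) A₁ A₂ K) :
    SubTy Γ (A₁.subst 0 B) (A₂.subst 0 B) (K.subst 0 B) := by
  rw [Ty.subst_eq, Ty.subst_eq, Kd.subst_eq]
  exact subty_psub h (SOk.single (kinding_ctxwf hB) hB)

/-! narrowing at the head of the context -/

theorem kinding_narrow {Γ : Ctx} {J J' : Kd} {A : Ty} {K : Kd}
    (hJ' : KdWf Γ J') (hs : SubKd Γ J' J) (h : Kinding (.ty J :: Γ) A K) :
    Kinding (.ty J' :: Γ) A K := by
  have := kinding_psub h (SOk.narrow (CtxWf.ty (kdwf_ctxwf hJ') hJ') hs)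
  rwa [Ty.sub_id, Kd.sub_id] at this

theorem kdwf_narrow {Γ : Ctx} {J J' : Kd} {K : Kd}
    (hJ' : KdWf Γ J') (hs : SubKd Γ J' J) (h : KdWf (.ty J :: Γ) K) :
    KdWf (.ty J' :: Γ) K := by
  have := kdwf_psub h (SOk.narrow (CtxWf.ty (kdwf_ctxwf hJ') hJ') hs)
  rwa [Kd.sub_id] at this

theorem subkd_narrow {Γ : Ctx} {J J' : Kd} {K₁ K₂ : Kd}
    (hJ' : KdWf Γ J') (hs : SubKd Γ J' J) (h : SubKd (.ty J :: Γ) K₁ K₂) :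
    SubKd (.ty J' :: Γ) K₁ K₂ := by
  have := subkd_psub h (SOk.narrow (CtxWf.ty (kdwf_ctxwf hJ') hJ') hs)
  rwa [Kd.sub_id, Kd.sub_id] at this

theorem subty_narrow {Γ : Ctx} {J J' : Kd} {A₁ A₂ : Ty} {K : Kd}
    (hJ' : KdWf Γ J') (hs : SubKd Γ J' J) (h : SubTy (.ty J :: Γ) A₁ A₂ K) :
    SubTy (.ty J' :: Γ) A₁ A₂ K := by
  have := subty_psub h (SOk.narrow (CtxWf.ty (kdwf_ctxwf hJ') hJ') hs)
  rwa [Ty.sub_id, Ty.sub_id, Kd.sub_id] at this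

/-! reflexivity and transitivity of subkinding -/

theorem subkd_refl : ∀ (K : Kd) {Γ : Ctx}, KdWf Γ K → SubKd Γ K K
  | .intv A B, Γ, h => by
      cases h with
      | intv h1 h2 => exact SubKd.intv (SubTy.refl h1) (SubTy.refl h2)
  | .pi J K, Γ, h => by
      cases h with
      | pi h1 h2 => exact SubKd.pi (KdWf.pi h1 h2) (subkd_refl J h1) (subkd_refl K h2)

theorem subkd_trans : ∀ (K : Kd) {Γ J L}, SubKd Γ J K → SubKd Γ K L → KdWf Γ L → SubKd Γ J L
  | .intv A B, Γ, J, L, h1, h2, hL => by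
      cases h1 with
      | intv p1 q1 =>
          cases h2 with
          | intv p2 q2 => exact SubKd.intv (SubTy.trans p2 p1) (SubTy.trans q1 q2)
  | .pi J₂ K₂, Γ, J, L, h1, h2, hL => by
      cases h1 with
      | pi a a1 a2 =>
          cases h2 with
          | pi b b1 b2 =>
              cases hL with
              | pi c1 c2 =>
                  have hJ1 := (by cases a with | pi x y => exact x : KdWf Γ _)
                  refine SubKd.pi a (subkd_trans J₂ b1 a1 hJ1) ?_
                  exact subkd_trans K₂ (subkd_narrow c1 b1 a2) b2 c2
/-! ### The `Good` (hereditarily functional) predicate on kinds -/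

def Good : SKind → Ctx → Kd → Prop
  | .star, Γ, K => KdWf Γ K
  | .arr s₁ s₂, Γ, K =>
      KdWf Γ K ∧ ∃ J K', K = .pi J K' ∧ Good s₁ Γ J ∧
        (∀ Γ'' ρ, Thin Γ Γ'' ρ → ∀ C C',
          Kinding Γ'' C (J.ren ρ) → Kinding Γ'' C' (J.ren ρ) →
          SubTy Γ'' C C' (J.ren ρ) → SubTy Γ'' C' C (J.ren ρ) →
          SubKd Γ'' ((K'.ren (upr ρ)).sub (sgl 0 C)) ((K'.ren (upr ρ)).sub (sgl 0 C'))
          ∧ Good s₂ Γ'' ((K'.ren (upr ρ)).sub (sgl 0 C)))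

def GoodKd (Γ : Ctx) (K : Kd) : Prop := Good K.shape Γ K

theorem good_wf : ∀ {s Γ K}, Good s Γ K → KdWf Γ K := by
  intro s Γ K h
  cases s with
  | star => exact h
  | arr s₁ s₂ => exact h.1

theorem goodkd_wf {Γ K} (h : GoodKd Γ K) : KdWf Γ K := good_wf h

theorem obind_renB_comp (b : OBind) (ρ ρ₂ : ℕ → ℕ) :
    (b.renB ρ).renB ρ₂ = b.renB (fun x => ρ₂ (ρ x)) := by
  cases b with
  | ty K => simp [OBind.renB, Kd.ren_ren]
  | tm A => simp [OBind.renB, Ty.ren_ren]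

theorem wfb_ren {Γ Γ' : Ctx} {ρ} {b : OBind} (h : WfB Γ b) (ht : Thin Γ Γ' ρ) :
    WfB Γ' (b.renB ρ) := by
  cases b with
  | ty K => exact kdwf_ren h ht
  | tm A => exact kinding_ren h ht

theorem thin_trans : ∀ {Γ₂ Γ₃ ρ'}, Thin Γ₂ Γ₃ ρ' → ∀ {Γ₁ ρ}, Thin Γ₁ Γ₂ ρ →
    Thin Γ₁ Γ₃ (fun x => ρ' (ρ x)) := by
  intro Γ₂ Γ₃ ρ' h
  induction h with
  | refl => intro Γ₁ ρ ht; exact ht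
  | @skip Ξ Γ' ρ₀ b ht₀ hb ih =>
      intro Γ₁ ρ ht
      exact Thin.skip (ih ht) hb
  | @keep Ξ Γ' ρ₀ b ht₀ ih =>
      intro Γ₁ ρ ht
      cases ht with
      | refl => exact Thin.keep ht₀
      | skip ht₁ hb₁ =>
          exact Thin.skip (ih ht₁) (wfb_ren hb₁ ht₀)
      | @keep Ξ₁ _ ρ₁ b₁ ht₁ =>
          have h1 : Thin (b₁ :: Ξ₁) ((b₁.renB ρ₁).renB ρ₀ :: Γ') (upr (fun x => ρ₀ (ρ₁ x))) := by
            rw [obind_renB_comp]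
            exact Thin.keep (ih ht₁)
          have h2 : (upr (fun x => ρ₀ (ρ₁ x))) = (fun x => upr ρ₀ (upr ρ₁ x)) := by
            funext x; rw [upr_comp]
          rwa [h2] at h1

theorem kd_ren_upr_comp (K : Kd) (ρ ρ₂ : ℕ → ℕ) :
    (K.ren (upr ρ)).ren (upr ρ₂) = K.ren (upr (fun x => ρ₂ (ρ x))) := by
  rw [Kd.ren_ren]
  exact K.ren_congr (upr_comp ρ ρ₂)

theorem good_thin : ∀ (s : SKind) {K Γ Γ'' ρ}, Good s Γ K → Thin Γ Γ'' ρ → Good s Γ'' (K.ren ρ)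
  | .star, K, Γ, Γ'', ρ, h, ht => kdwf_ren h ht
  | .arr s₁ s₂, K, Γ, Γ'', ρ, h, ht => by
      obtain ⟨hwf, J, K', rfl, gJ, clause⟩ := h
      refine ⟨kdwf_ren hwf ht, J.ren ρ, K'.ren (upr ρ), rfl, good_thin s₁ gJ ht, ?_⟩
      intro Γ₃ ρ₂ ht₂ C C' k1 k2 st1 st2
      rw [Kd.ren_ren] at k1 k2 st1 st2
      rw [kd_ren_upr_comp]
      exact clause Γ₃ (fun x => ρ₂ (ρ x)) (thin_trans ht₂ ht) C C' k1 k2 st1 st2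

theorem goodkd_thin {Γ Γ'' ρ K} (h : GoodKd Γ K) (ht : Thin Γ Γ'' ρ) : GoodKd Γ'' (K.ren ρ) := by
  unfold GoodKd
  rw [Kd.shape_ren]
  exact good_thin K.shape h ht

theorem goodkd_pi_dom {Γ J K'} (h : GoodKd Γ (.pi J K')) : GoodKd Γ J := by
  obtain ⟨_, J₀, K₀, he, gJ, _⟩ := h
  cases he
  exact gJ

theorem kd_ren_upr_id (K : Kd) : K.ren (upr (fun x => x)) = K := by
  rw [K.ren_congr upr_id, Kd.ren_id]

theorem goodkd_pi_app {Γ J K' C C'} (h : GoodKd Γ (.pi J K'))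
    (k1 : Kinding Γ C J) (k2 : Kinding Γ C' J)
    (st1 : SubTy Γ C C' J) (st2 : SubTy Γ C' C J) :
    SubKd Γ (K'.subst 0 C) (K'.subst 0 C') ∧ GoodKd Γ (K'.subst 0 C) := by
  obtain ⟨_, J₀, K₀, he, gJ, clause⟩ := h
  cases he
  have := clause Γ (fun x => x) Thin.refl C C'
    (by rwa [Kd.ren_id]) (by rwa [Kd.ren_id]) (by rwa [Kd.ren_id]) (by rwa [Kd.ren_id])
  rw [kd_ren_upr_id] at this
  rw [Kd.subst_eq, Kd.subst_eq]
  refine ⟨this.1, ?_⟩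
  unfold GoodKd
  rw [← Kd.subst_eq, kd_shape_subst]
  have h2 := this.2
  rw [← Kd.subst_eq] at h2
  exact h2
/-! ### Packs of pairwise-equal well-kinded substitutions -/

def scons (C : Ty) (σ : ℕ → Ty) : ℕ → Ty
  | 0 => C
  | x+1 => σ x

theorem kd_weaken1_scons (J : Kd) (C : Ty) (σ : ℕ → Ty) :
    (J.weaken 1).sub (scons C σ) = J.sub σ := by
  rw [kd_weaken_eq, Kd.sub_ren]
  exact J.sub_congr (fun x => rfl)

theorem kd_weaken_succ_scons (K : Kd) (x : ℕ) (C : Ty) (σ : ℕ → Ty) :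
    (K.weaken (x+2)).sub (scons C σ) = (K.weaken (x+1)).sub σ := by
  rw [kd_weaken_eq, Kd.sub_ren, kd_weaken_eq, Kd.sub_ren]
  exact K.sub_congr (fun y => by
    show scons C σ (y + (x+2)) = σ (y + (x + 1))
    have h : y + (x+2) = (y + (x+1)) + 1 := by omega
    rw [h]; rfl)

theorem scons_ups (C : Ty) (σ : ℕ → Ty) : ∀ x, (ups σ x).sub (sgl 0 C) = scons C σ x
  | 0 => by simp [ups, Ty.sub, sgl, scons]
  | x+1 => by
      show ((σ x).ren (· + 1)).sub (sgl 0 C) = σ x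
      rw [Ty.sub_ren]
      have : (σ x).sub (fun y => sgl 0 C (y+1)) = (σ x).sub Ty.var := by
        apply Ty.sub_congr; intro y; simp [sgl]
      rw [this, Ty.sub_id]

theorem ty_ups_sgl (A : Ty) (C : Ty) (σ : ℕ → Ty) :
    (A.sub (ups σ)).subst 0 C = A.sub (scons C σ) := by
  rw [Ty.subst_eq, Ty.sub_sub]
  exact A.sub_congr (scons_ups C σ)

theorem kd_ups_sgl (K : Kd) (C : Ty) (σ : ℕ → Ty) :
    (K.sub (ups σ)).subst 0 C = K.sub (scons C σ) := by
  rw [Kd.subst_eq, Kd.sub_sub]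
  exact K.sub_congr (scons_ups C σ)

theorem ty_beta_sub (A B : Ty) (σ : ℕ → Ty) :
    (A.subst 0 B).sub σ = A.sub (scons (B.sub σ) σ) := by
  rw [ty_subst0_sub, ty_ups_sgl]

theorem kd_beta_sub (K : Kd) (B : Ty) (σ : ℕ → Ty) :
    (K.subst 0 B).sub σ = K.sub (scons (B.sub σ) σ) := by
  rw [kd_subst0_sub, kd_ups_sgl]

theorem kd_ups_ren_sgl (K : Kd) (σ : ℕ → Ty) (ρ : ℕ → ℕ) (C : Ty) :
    ((K.sub (ups σ)).ren (upr ρ)).subst 0 C = K.sub (scons C (fun x => (σ x).ren ρ)) := by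
  rw [Kd.ren_sub]
  have h1 : K.sub (fun x => (ups σ x).ren (upr ρ)) = K.sub (ups (fun x => (σ x).ren ρ)) :=
    K.sub_congr (upr_ups σ ρ)
  rw [h1, kd_ups_sgl]

/-- Pointwise data of an equal kinded pair. -/
structure MPe (Γ' : Ctx) (t t' : Ty) (Kσ Kσ' : Kd) : Prop where
  k1 : Kinding Γ' t Kσ
  k2 : Kinding Γ' t' Kσ'
  s12 : SubTy Γ' t t' Kσ
  s21 : SubTy Γ' t' t Kσ
  g1 : GoodKd Γ' Kσ
  g2 : GoodKd Γ' Kσ'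
  kk12 : SubKd Γ' Kσ Kσ'
  kk21 : SubKd Γ' Kσ' Kσ

def MPack (Ξ Γ' : Ctx) (σ σ' : ℕ → Ty) : Prop :=
  CtxWf Γ' ∧ ∀ x K, Ξ[x]? = some (.ty K) →
    MPe Γ' (σ x) (σ' x) ((K.weaken (x+1)).sub σ) ((K.weaken (x+1)).sub σ')

theorem mpack_swap {Ξ Γ' σ σ'} (p : MPack Ξ Γ' σ σ') : MPack Ξ Γ' σ' σ := by
  refine ⟨p.1, fun x K hx => ?_⟩
  obtain ⟨k1, k2, s12, s21, g1, g2, kk12, kk21⟩ := p.2 x K hx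
  exact ⟨k2, k1, SubTy.sub s21 kk12, SubTy.sub s12 kk12, g2, g1, kk21, kk12⟩

theorem mpack_diag {Ξ Γ' σ σ'} (p : MPack Ξ Γ' σ σ') : MPack Ξ Γ' σ σ := by
  refine ⟨p.1, fun x K hx => ?_⟩
  obtain ⟨k1, k2, s12, s21, g1, g2, kk12, kk21⟩ := p.2 x K hx
  exact ⟨k1, k1, SubTy.refl k1, SubTy.refl k1, g1, g1,
    subkd_refl _ (goodkd_wf g1), subkd_refl _ (goodkd_wf g1)⟩

theorem ctxwf_thin : ∀ {Γ Γ' ρ}, Thin Γ Γ' ρ → CtxWf Γ → CtxWf Γ' := by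
  intro Γ Γ' ρ h
  induction h with
  | refl => exact id
  | skip ht hb ih =>
      intro hc
      rename_i b
      cases b with
      | ty K => exact CtxWf.ty (ih hc) hb
      | tm A => exact CtxWf.tm (ih hc) hb
  | @keep Ξ Γ' ρ b ht ih =>
      intro hc
      cases b with
      | ty K =>
          cases hc with
          | ty hc hK => exact CtxWf.ty (ih hc) (kdwf_ren hK ht)
      | tm A =>
          cases hc with
          | tm hc hA => exact CtxWf.tm (ih hc) (kinding_ren hA ht)

theorem mpack_thin {Ξ Γ' σ σ' Γ'' ρ} (p : MPack Ξ Γ' σ σ') (ht : Thin Γ' Γ'' ρ) :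
    MPack Ξ Γ'' (fun x => (σ x).ren ρ) (fun x => (σ' x).ren ρ) := by
  refine ⟨ctxwf_thin ht p.1, fun x K hx => ?_⟩
  obtain ⟨k1, k2, s12, s21, g1, g2, kk12, kk21⟩ := p.2 x K hx
  have e1 : ((K.weaken (x+1)).sub σ).ren ρ = (K.weaken (x+1)).sub (fun x => (σ x).ren ρ) :=
    Kd.ren_sub _ _ _
  have e2 : ((K.weaken (x+1)).sub σ').ren ρ = (K.weaken (x+1)).sub (fun x => (σ' x).ren ρ) :=
    Kd.ren_sub _ _ _
  refine ⟨?_, ?_, ?_, ?_, ?_, ?_, ?_, ?_⟩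
  · rw [← e1]; exact kinding_ren k1 ht
  · rw [← e2]; exact kinding_ren k2 ht
  · rw [← e1]; exact subty_ren s12 ht
  · rw [← e1]; exact subty_ren s21 ht
  · rw [← e1]; exact goodkd_thin g1 ht
  · rw [← e2]; exact goodkd_thin g2 ht
  · rw [← e1, ← e2]; exact subkd_ren kk12 ht
  · rw [← e1, ← e2]; exact subkd_ren kk21 ht

theorem mpack_cons {Ξ Γ' σ σ'} (p : MPack Ξ Γ' σ σ') {J : Kd} {C C' : Ty}
    (e : MPe Γ' C C' (J.sub σ) (J.sub σ')) :
    MPack (.ty J :: Ξ) Γ' (scons C σ) (scons C' σ') := by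
  refine ⟨p.1, fun x K hx => ?_⟩
  cases x with
  | zero =>
      have hK : J = K := by simpa using hx
      subst hK
      rw [kd_weaken1_scons, kd_weaken1_scons]
      exact e
  | succ x =>
      have hx' : Ξ[x]? = some (.ty K) := by simpa using hx
      rw [kd_weaken_succ_scons, kd_weaken_succ_scons]
      exact p.2 x K hx'

theorem mpack_lift {Ξ Γ' σ σ'} (p : MPack Ξ Γ' σ σ') {J : Kd}
    (w1 : KdWf Γ' (J.sub σ)) (w2 : KdWf Γ' (J.sub σ'))
    (g1 : GoodKd Γ' (J.sub σ)) (g2 : GoodKd Γ' (J.sub σ'))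
    (kk12 : SubKd Γ' (J.sub σ) (J.sub σ')) (kk21 : SubKd Γ' (J.sub σ') (J.sub σ)) :
    MPack (.ty J :: Ξ) (.ty (J.sub σ) :: Γ') (ups σ) (ups σ') := by
  have hw : CtxWf (.ty (J.sub σ) :: Γ') := CtxWf.ty p.1 w1
  have wfb : WfB Γ' (.ty (J.sub σ)) := w1
  refine ⟨hw, fun x K hx => ?_⟩
  cases x with
  | zero =>
      have hK : J = K := by simpa using hx
      subst hK
      rw [kd_weaken1_sub, kd_weaken1_sub, kd_weaken_one, kd_weaken_one]
      have v0 : Kinding (.ty (J.sub σ) :: Γ') (.var 0) ((J.sub σ).shift 0) := by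
        have := Kinding.var (x := 0) (K := J.sub σ) hw (by simp)
        rwa [kd_weaken_one] at this
      have kkw : SubKd (.ty (J.sub σ) :: Γ') ((J.sub σ).shift 0) ((J.sub σ').shift 0) :=
        subkd_wk1 kk12 wfb
      have kkw' : SubKd (.ty (J.sub σ) :: Γ') ((J.sub σ').shift 0) ((J.sub σ).shift 0) :=
        subkd_wk1 kk21 wfb
      refine ⟨v0, Kinding.sub v0 kkw, SubTy.refl v0, SubTy.refl v0, ?_, ?_, kkw, kkw'⟩
      · rw [kd_shift0_eq]; exact goodkd_thin g1 (thin_wk1 wfb)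
      · rw [kd_shift0_eq]; exact goodkd_thin g2 (thin_wk1 wfb)
  | succ x =>
      have hx' : Ξ[x]? = some (.ty K) := by simpa using hx
      obtain ⟨k1, k2, s12, s21, gg1, gg2, kkk12, kkk21⟩ := p.2 x K hx'
      rw [kd_weaken_succ_sub, kd_weaken_succ_sub]
      show MPe _ ((σ x).ren (· + 1)) ((σ' x).ren (· + 1)) _ _
      rw [← ty_shift0_eq, ← ty_shift0_eq]
      refine ⟨kinding_wk1 k1 wfb, kinding_wk1 k2 wfb, subty_wk1 s12 wfb, subty_wk1 s21 wfb,
        ?_, ?_, subkd_wk1 kkk12 wfb, subkd_wk1 kkk21 wfb⟩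
      · rw [kd_shift0_eq]; exact goodkd_thin gg1 (thin_wk1 wfb)
      · rw [kd_shift0_eq]; exact goodkd_thin gg2 (thin_wk1 wfb)

/-! helpers about `star` and intervals -/

theorem kdwf_star {Γ : Ctx} (h : CtxWf Γ) : KdWf Γ Kd.star :=
  KdWf.intv (Kinding.bot h) (Kinding.top h)

theorem subkd_intv_star {Γ : Ctx} {A B : Ty} (hA : Kinding Γ A Kd.star) (hB : Kinding Γ B Kd.star) :
    SubKd Γ (.intv A B) Kd.star :=
  SubKd.intv (SubTy.bot hA) (SubTy.top hB)

theorem intv_le_star {Γ : Ctx} {A B : Ty} (h : KdWf Γ (.intv A B)) : SubKd Γ (.intv A B) Kd.star := by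
  cases h with
  | intv h1 h2 => exact subkd_intv_star h1 h2

theorem goodkd_intv {Γ : Ctx} {A B : Ty} (h : KdWf Γ (.intv A B)) : GoodKd Γ (.intv A B) := h

theorem goodkd_star {Γ : Ctx} (h : CtxWf Γ) : GoodKd Γ Kd.star := kdwf_star h

theorem goodkd_pi_intro {Γ : Ctx} {J K' : Kd}
    (wf : KdWf Γ (.pi J K')) (gJ : GoodKd Γ J)
    (clause : ∀ Γ'' ρ, Thin Γ Γ'' ρ → ∀ C C',
      Kinding Γ'' C (J.ren ρ) → Kinding Γ'' C' (J.ren ρ) →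
      SubTy Γ'' C C' (J.ren ρ) → SubTy Γ'' C' C (J.ren ρ) →
      SubKd Γ'' ((K'.ren (upr ρ)).subst 0 C) ((K'.ren (upr ρ)).subst 0 C')
      ∧ GoodKd Γ'' ((K'.ren (upr ρ)).subst 0 C)) :
    GoodKd Γ (.pi J K') := by
  refine ⟨wf, J, K', rfl, gJ, ?_⟩
  intro Γ'' ρ ht C C' c1 c2 c3 c4
  have h := clause Γ'' ρ ht C C' c1 c2 c3 c4
  constructor
  · have h1 := h.1
    rw [Kd.subst_eq, Kd.subst_eq] at h1
    exact h1
  · have h2 := h.2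
    unfold GoodKd at h2
    rw [kd_shape_subst, Kd.shape_ren, Kd.subst_eq] at h2
    exact h2

theorem goodkd_pi_wfdom {Γ : Ctx} {J K' : Kd} (h : KdWf Γ (.pi J K')) : KdWf Γ J := by
  cases h with | pi h1 _ => exact h1

theorem goodkd_pi_wfbody {Γ : Ctx} {J K' : Kd} (h : KdWf Γ (.pi J K')) :
    KdWf (.ty J :: Γ) K' := by
  cases h with | pi _ h2 => exact h2
/-! ### The combined functionality/validity lemma -/

abbrev KOut (Γ' : Ctx) (σ σ' : ℕ → Ty) (A : Ty) (K : Kd) : Prop :=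
  Kinding Γ' (A.sub σ) (K.sub σ) ∧ SubTy Γ' (A.sub σ) (A.sub σ') (K.sub σ) ∧
  SubKd Γ' (K.sub σ) (K.sub σ') ∧ GoodKd Γ' (K.sub σ)

abbrev WOut (Γ' : Ctx) (σ σ' : ℕ → Ty) (K : Kd) : Prop :=
  KdWf Γ' (K.sub σ) ∧ SubKd Γ' (K.sub σ) (K.sub σ') ∧ GoodKd Γ' (K.sub σ)

abbrev SKOut (Γ' : Ctx) (σ σ' : ℕ → Ty) (K₁ K₂ : Kd) : Prop :=
  SubKd Γ' (K₁.sub σ) (K₂.sub σ') ∧ SubKd Γ' (K₁.sub σ) (K₁.sub σ') ∧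
  SubKd Γ' (K₂.sub σ) (K₂.sub σ') ∧ GoodKd Γ' (K₁.sub σ) ∧ GoodKd Γ' (K₂.sub σ)

abbrev STOut (Γ' : Ctx) (σ σ' : ℕ → Ty) (X Y : Ty) (K : Kd) : Prop :=
  SubTy Γ' (X.sub σ) (Y.sub σ') (K.sub σ) ∧ SubTy Γ' (X.sub σ) (X.sub σ') (K.sub σ) ∧
  SubTy Γ' (Y.sub σ) (Y.sub σ') (K.sub σ) ∧ Kinding Γ' (X.sub σ) (K.sub σ) ∧
  Kinding Γ' (Y.sub σ) (K.sub σ) ∧ SubKd Γ' (K.sub σ) (K.sub σ') ∧ GoodKd Γ' (K.sub σ)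

abbrev EQOut (Γ' : Ctx) (σ σ' : ℕ → Ty) (X Y : Ty) (K : Kd) : Prop :=
  TyEq Γ' (X.sub σ) (Y.sub σ') (K.sub σ) ∧ SubTy Γ' (X.sub σ) (X.sub σ') (K.sub σ) ∧
  SubTy Γ' (Y.sub σ) (Y.sub σ') (K.sub σ) ∧ Kinding Γ' (X.sub σ) (K.sub σ) ∧
  Kinding Γ' (Y.sub σ) (K.sub σ) ∧ SubKd Γ' (K.sub σ) (K.sub σ') ∧ GoodKd Γ' (K.sub σ)

abbrev MG1 : ∀ (Γ : Ctx), CtxWf Γ → Prop := fun _ _ => True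
abbrev MG2 : ∀ (Γ : Ctx) (K : Kd), KdWf Γ K → Prop :=
  fun Ξ K _ => ∀ Γ' σ σ', MPack Ξ Γ' σ σ' → WOut Γ' σ σ' K
abbrev MG3 : ∀ (Γ : Ctx) (A : Ty) (K : Kd), Kinding Γ A K → Prop :=
  fun Ξ A K _ => ∀ Γ' σ σ', MPack Ξ Γ' σ σ' → KOut Γ' σ σ' A K
abbrev MG4 : ∀ (Γ : Ctx) (t : Tm) (A : Ty), Typing Γ t A → Prop := fun _ _ _ _ => True
abbrev MG5 : ∀ (Γ : Ctx) (J K : Kd), SubKd Γ J K → Prop :=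
  fun Ξ K₁ K₂ _ => ∀ Γ' σ σ', MPack Ξ Γ' σ σ' → SKOut Γ' σ σ' K₁ K₂
abbrev MG6 : ∀ (Γ : Ctx) (A B : Ty) (K : Kd), SubTy Γ A B K → Prop :=
  fun Ξ X Y K _ => ∀ Γ' σ σ', MPack Ξ Γ' σ σ' → STOut Γ' σ σ' X Y K
abbrev MG7 : ∀ (Γ : Ctx) (J K : Kd), KdEq Γ J K → Prop := fun _ _ _ _ => True
abbrev MG8 : ∀ (Γ : Ctx) (A B : Ty) (K : Kd), TyEq Γ A B K → Prop :=
  fun Ξ X Y K _ => ∀ Γ' σ σ', MPack Ξ Γ' σ σ' → EQOut Γ' σ σ' X Y K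

/-- Build `GoodKd ((pi J K).sub σ)` from the body's functionality motive. -/
theorem goodpi_from_body {Ξ Γ' : Ctx} {σ σ' : ℕ → Ty} {J K : Kd}
    (p : MPack Ξ Γ' σ σ')
    (wfP : KdWf Γ' ((Kd.pi J K).sub σ))
    (gJ : GoodKd Γ' (J.sub σ))
    (bodyKK : ∀ Γ₃ τ τ', MPack (.ty J :: Ξ) Γ₃ τ τ' →
      SubKd Γ₃ (K.sub τ) (K.sub τ') ∧ GoodKd Γ₃ (K.sub τ)) :
    GoodKd Γ' ((Kd.pi J K).sub σ) := by
  show GoodKd Γ' (.pi (J.sub σ) (K.sub (ups σ)))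
  refine goodkd_pi_intro (by exact wfP) ?_ ?_
  · exact gJ
  · intro Γ₃ ρ ht C C' c1 c2 c3 c4
    have eJ : (J.sub σ).ren ρ = J.sub (fun x => (σ x).ren ρ) := Kd.ren_sub _ _ _
    rw [eJ] at c1 c2 c3 c4
    have gJρ : GoodKd Γ₃ (J.sub (fun x => (σ x).ren ρ)) := by
      rw [← eJ]; exact goodkd_thin gJ ht
    have pk : MPack (.ty J :: Ξ) Γ₃ (scons C (fun x => (σ x).ren ρ))
        (scons C' (fun x => (σ x).ren ρ)) :=
      mpack_cons (mpack_diag (mpack_thin p ht))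
        ⟨c1, c2, c3, c4, gJρ, gJρ, subkd_refl _ (goodkd_wf gJρ), subkd_refl _ (goodkd_wf gJρ)⟩
    have h := bodyKK _ _ _ pk
    rw [kd_ups_ren_sgl, kd_ups_ren_sgl]
    exact ⟨h.1, h.2⟩

/-- σ'-annotated pack lift. -/
theorem mpack_lift' {Ξ Γ' σ σ'} (p : MPack Ξ Γ' σ σ') {J : Kd}
    (w1 : KdWf Γ' (J.sub σ)) (w2 : KdWf Γ' (J.sub σ'))
    (g1 : GoodKd Γ' (J.sub σ)) (g2 : GoodKd Γ' (J.sub σ'))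
    (kk12 : SubKd Γ' (J.sub σ) (J.sub σ')) (kk21 : SubKd Γ' (J.sub σ') (J.sub σ)) :
    MPack (.ty J :: Ξ) (.ty (J.sub σ') :: Γ') (ups σ) (ups σ') :=
  mpack_swap (mpack_lift (mpack_swap p) w2 w1 g2 g1 kk21 kk12)
section MegaCases

theorem kdwf_intv_inv {Γ A B} (h : KdWf Γ (.intv A B)) :
    Kinding Γ A Kd.star ∧ Kinding Γ B Kd.star := by
  cases h with | intv h1 h2 => exact ⟨h1, h2⟩

theorem gv1 : MG1 [] CtxWf.nil := trivial
theorem gv2 : ∀ {Γ : Ctx} {K : Kd} (a : CtxWf Γ) (a1 : KdWf Γ K),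
    MG1 Γ a → MG2 Γ K a1 → MG1 (.ty K :: Γ) (CtxWf.ty a a1) := fun _ _ _ _ => trivial
theorem gv3 : ∀ {Γ : Ctx} {A : Ty} (a : CtxWf Γ) (a1 : Kinding Γ A Kd.star),
    MG1 Γ a → MG3 Γ A Kd.star a1 → MG1 (.tm A :: Γ) (CtxWf.tm a a1) := fun _ _ _ _ => trivial

theorem gv4 : ∀ {Γ : Ctx} {A B : Ty} (a : Kinding Γ A Kd.star) (a1 : Kinding Γ B Kd.star),
    MG3 Γ A Kd.star a → MG3 Γ B Kd.star a1 → MG2 Γ (.intv A B) (KdWf.intv a a1) := by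
  intro Ξ A B a a1 ihA ihB Γ' σ σ' p
  have sw := mpack_swap p
  obtain ⟨tA, sA, _, _⟩ := ihA _ _ _ p
  obtain ⟨tB, sB, _, _⟩ := ihB _ _ _ p
  obtain ⟨tA', sA', _, _⟩ := ihA _ _ _ sw
  obtain ⟨tB', sB', _, _⟩ := ihB _ _ _ sw
  refine ⟨KdWf.intv tA tB, SubKd.intv sA' sB, ?_⟩
  show GoodKd Γ' (.intv (A.sub σ) (B.sub σ))
  exact goodkd_intv (KdWf.intv tA tB)

theorem gv5 : ∀ {Γ : Ctx} {J K : Kd} (a : KdWf Γ J) (a1 : KdWf (.ty J :: Γ) K),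
    MG2 Γ J a → MG2 (.ty J :: Γ) K a1 → MG2 Γ (.pi J K) (KdWf.pi a a1) := by
  intro Ξ J K a a1 ihJ ihK Γ' σ σ' p
  have sw := mpack_swap p
  obtain ⟨wJ, kkJ, gJ⟩ := ihJ _ _ _ p
  obtain ⟨wJ', kkJ', gJ'⟩ := ihJ _ _ _ sw
  have pL := mpack_lift p wJ wJ' gJ gJ' kkJ kkJ'
  have pL' := mpack_lift' p wJ wJ' gJ gJ' kkJ kkJ'
  obtain ⟨wK, kkK, gK⟩ := ihK _ _ _ pL
  obtain ⟨wK', kkK', gK'⟩ := ihK _ _ _ pL'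
  refine ⟨KdWf.pi wJ wK, SubKd.pi (KdWf.pi wJ wK) kkJ' kkK', ?_⟩
  exact goodpi_from_body p (KdWf.pi wJ wK) gJ
    (fun Γ₃ τ τ' pk => ⟨(ihK _ _ _ pk).2.1, (ihK _ _ _ pk).2.2⟩)

theorem gv6 : ∀ {Γ : Ctx} {x : ℕ} {K : Kd} (a : CtxWf Γ) (a1 : Γ[x]? = some (.ty K)),
    MG1 Γ a → MG3 Γ (.var x) (K.weaken (x+1)) (Kinding.var a a1) := by
  intro Ξ x K a a1 _ Γ' σ σ' p
  obtain ⟨k1, k2, s12, s21, g1, g2, kk12, kk21⟩ := p.2 x K a1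
  exact ⟨k1, s12, kk12, g1⟩

theorem gv7 : ∀ {Γ : Ctx} (a : CtxWf Γ), MG1 Γ a → MG3 Γ .top Kd.star (Kinding.top a) := by
  intro Ξ a _ Γ' σ σ' p
  exact ⟨Kinding.top p.1, SubTy.refl (Kinding.top p.1),
    subkd_refl _ (kdwf_star p.1), goodkd_star p.1⟩

theorem gv8 : ∀ {Γ : Ctx} (a : CtxWf Γ), MG1 Γ a → MG3 Γ .bot Kd.star (Kinding.bot a) := by
  intro Ξ a _ Γ' σ σ' p
  exact ⟨Kinding.bot p.1, SubTy.refl (Kinding.bot p.1),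
    subkd_refl _ (kdwf_star p.1), goodkd_star p.1⟩

theorem gv9 : ∀ {Γ : Ctx} {A B : Ty} (a : Kinding Γ A Kd.star) (a1 : Kinding Γ B Kd.star),
    MG3 Γ A Kd.star a → MG3 Γ B Kd.star a1 → MG3 Γ (.arr A B) Kd.star (Kinding.arr a a1) := by
  intro Ξ A B a a1 ihA ihB Γ' σ σ' p
  have sw := mpack_swap p
  obtain ⟨tA, sA, _, _⟩ := ihA _ _ _ p
  obtain ⟨tB, sB, _, _⟩ := ihB _ _ _ p
  obtain ⟨tA', sA', _, _⟩ := ihA _ _ _ sw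
  refine ⟨Kinding.arr tA tB, SubTy.arr sA' sB, subkd_refl _ (kdwf_star p.1), goodkd_star p.1⟩

theorem gv10 : ∀ {Γ : Ctx} {J : Kd} {A : Ty} {K : Kd} (a : KdWf Γ J) (a1 : Kinding (.ty J :: Γ) A K),
    MG2 Γ J a → MG3 (.ty J :: Γ) A K a1 → MG3 Γ (.lam J A) (.pi J K) (Kinding.abs a a1) := by
  intro Ξ J A K a a1 ihJ ihA Γ' σ σ' p
  have sw := mpack_swap p
  obtain ⟨wJ, kkJ, gJ⟩ := ihJ _ _ _ p
  obtain ⟨wJ', kkJ', gJ'⟩ := ihJ _ _ _ sw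
  have pL := mpack_lift p wJ wJ' gJ gJ' kkJ kkJ'
  have pL' := mpack_lift' p wJ wJ' gJ gJ' kkJ kkJ'
  obtain ⟨tA, sA, kkA, gA⟩ := ihA _ _ _ pL
  obtain ⟨tA2, sA2, kkA2, gA2⟩ := ihA _ _ _ (mpack_swap pL)
  obtain ⟨tA3, sA3, kkA3, gA3⟩ := ihA _ _ _ pL'
  obtain ⟨tA4, sA4, kkA4, gA4⟩ := ihA _ _ _ (mpack_swap pL')
  have t : Kinding Γ' ((Ty.lam J A).sub σ) ((Kd.pi J K).sub σ) := Kinding.abs wJ tA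
  have t' : Kinding Γ' ((Ty.lam J A).sub σ') ((Kd.pi J K).sub σ') := Kinding.abs wJ' tA4
  have wfP : KdWf Γ' ((Kd.pi J K).sub σ) := KdWf.pi wJ (goodkd_wf gA)
  have wfP' : KdWf Γ' ((Kd.pi J K).sub σ') := KdWf.pi wJ' (goodkd_wf gA4)
  have kkP : SubKd Γ' ((Kd.pi J K).sub σ) ((Kd.pi J K).sub σ') :=
    SubKd.pi wfP kkJ' kkA3
  have kkP' : SubKd Γ' ((Kd.pi J K).sub σ') ((Kd.pi J K).sub σ) :=
    SubKd.pi wfP' kkJ kkA2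
  refine ⟨t, ?_, kkP, ?_⟩
  · exact SubTy.abs t (Kinding.sub t' kkP') sA
  · exact goodpi_from_body p wfP gJ
      (fun Γ₃ τ τ' pk => ⟨(ihA _ _ _ pk).2.2.1, (ihA _ _ _ pk).2.2.2⟩)

theorem gv11 : ∀ {Γ : Ctx} {A B C : Ty} (a : Kinding Γ A (.intv B C)),
    MG3 Γ A (.intv B C) a → MG3 Γ A (.intv A A) (Kinding.sing a) := by
  intro Ξ A B C a ih Γ' σ σ' p
  have sw := mpack_swap p
  obtain ⟨t, s, kk, g⟩ := ih _ _ _ p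
  obtain ⟨t', s', kk', g'⟩ := ih _ _ _ sw
  have toStar : SubKd Γ' ((Kd.intv B C).sub σ) Kd.star := intv_le_star (goodkd_wf g)
  have toStar' : SubKd Γ' ((Kd.intv B C).sub σ') Kd.star := intv_le_star (goodkd_wf g')
  have tS : Kinding Γ' (A.sub σ) Kd.star := Kinding.sub t toStar
  have tS' : Kinding Γ' (A.sub σ') Kd.star := Kinding.sub t' toStar'
  have sS : SubTy Γ' (A.sub σ) (A.sub σ') Kd.star := SubTy.sub s toStar
  have sS' : SubTy Γ' (A.sub σ') (A.sub σ) Kd.star := SubTy.sub s' toStar'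
  refine ⟨Kinding.sing t, ?_, ?_, ?_⟩
  · exact SubTy.sub (SubTy.intv s)
      (SubKd.intv (SubTy.refl tS) sS')
  · exact SubKd.intv sS' sS
  · show GoodKd Γ' (.intv (A.sub σ) (A.sub σ))
    exact goodkd_intv (KdWf.intv tS tS)

theorem gv12 : ∀ {Γ : Ctx} {K : Kd} {A : Ty} (a : KdWf Γ K) (a1 : Kinding (.ty K :: Γ) A Kd.star),
    MG2 Γ K a → MG3 (.ty K :: Γ) A Kd.star a1 → MG3 Γ (.all K A) Kd.star (Kinding.all a a1) := by
  intro Ξ K A a a1 ihK ihA Γ' σ σ' p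
  have sw := mpack_swap p
  obtain ⟨wK, kkK, gK⟩ := ihK _ _ _ p
  obtain ⟨wK', kkK', gK'⟩ := ihK _ _ _ sw
  have pL := mpack_lift p wK wK' gK gK' kkK kkK'
  have pL' := mpack_lift' p wK wK' gK gK' kkK kkK'
  obtain ⟨tA, sA, _, _⟩ := ihA _ _ _ pL
  obtain ⟨tA3, sA3, _, _⟩ := ihA _ _ _ pL'
  have t : Kinding Γ' ((Ty.all K A).sub σ) Kd.star := Kinding.all wK tA
  refine ⟨t, ?_, subkd_refl _ (kdwf_star p.1), goodkd_star p.1⟩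
  exact SubTy.all t kkK' sA3

theorem gv13 : ∀ {Γ : Ctx} {A : Ty} {J K : Kd} {B : Ty} (a : Kinding Γ A (.pi J K)) (a1 : Kinding Γ B J),
    MG3 Γ A (.pi J K) a → MG3 Γ B J a1 → MG3 Γ (.app A B) (K.subst 0 B) (Kinding.app a a1) := by
  intro Ξ A J K B a a1 ihA ihB Γ' σ σ' p
  have sw := mpack_swap p
  obtain ⟨tA, sA, kkA, gA⟩ := ihA _ _ _ p
  obtain ⟨tA', sA', kkA', gA'⟩ := ihA _ _ _ sw
  obtain ⟨tB, sB, kkB, gB⟩ := ihB _ _ _ p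
  obtain ⟨tB', sB', kkB', gB'⟩ := ihB _ _ _ sw
  have gAp : GoodKd Γ' (.pi (J.sub σ) (K.sub (ups σ))) := gA
  have gAp' : GoodKd Γ' (.pi (J.sub σ') (K.sub (ups σ'))) := gA'
  have tB'σ : Kinding Γ' (B.sub σ') (J.sub σ) := Kinding.sub tB' kkB'
  have sB'σ : SubTy Γ' (B.sub σ') (B.sub σ) (J.sub σ) := SubTy.sub sB' kkB'
  -- step 1 : functionality of the Π-kind body in the argument
  have h1 := goodkd_pi_app gAp tB tB'σ sB sB'σ
  -- step 2 : from kkA, substitute B.sub σ'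
  have bodySub : SubKd (.ty (J.sub σ') :: Γ') (K.sub (ups σ)) (K.sub (ups σ')) := by
    cases kkA with | pi _ _ h => exact h
  have h2 : SubKd Γ' ((K.sub (ups σ)).subst 0 (B.sub σ')) ((K.sub (ups σ')).subst 0 (B.sub σ')) :=
    subkd_subst1 tB' bodySub
  have hwf2 : KdWf Γ' ((K.sub (ups σ')).subst 0 (B.sub σ')) :=
    goodkd_wf (goodkd_pi_app gAp' tB' tB' (SubTy.refl tB') (SubTy.refl tB')).2
  have kkfull : SubKd Γ' ((K.sub (ups σ)).subst 0 (B.sub σ)) ((K.sub (ups σ')).subst 0 (B.sub σ')) :=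
    subkd_trans _ h1.1 h2 hwf2
  have eσ : (K.subst 0 B).sub σ = (K.sub (ups σ)).subst 0 (B.sub σ) := kd_subst0_sub _ _ _
  have eσ' : (K.subst 0 B).sub σ' = (K.sub (ups σ')).subst 0 (B.sub σ') := kd_subst0_sub _ _ _
  refine ⟨?_, ?_, ?_, ?_⟩
  · rw [eσ]; exact Kinding.app tA tB
  · rw [eσ]; exact SubTy.app sA (TyEq.antisym sB sB'σ)
  · rw [eσ, eσ']; exact kkfull
  · rw [eσ]; exact (goodkd_pi_app gAp tB tB (SubTy.refl tB) (SubTy.refl tB)).2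

theorem gv14 : ∀ {Γ : Ctx} {A : Ty} {J K : Kd} (a : Kinding Γ A J) (a1 : SubKd Γ J K),
    MG3 Γ A J a → MG5 Γ J K a1 → MG3 Γ A K (Kinding.sub a a1) := by
  intro Ξ A J K a a1 ihA ihS Γ' σ σ' p
  obtain ⟨t, s, kk0, g0⟩ := ihA _ _ _ p
  obtain ⟨m, fnL, fnR, gL, gR⟩ := ihS _ _ _ p
  have mD : SubKd Γ' (J.sub σ) (K.sub σ) := (ihS _ _ _ (mpack_diag p)).1
  exact ⟨Kinding.sub t mD, SubTy.sub s mD, fnR, gR⟩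

end MegaCases
section MegaCases2

theorem gv15 : ∀ {Γ : Ctx} {x : ℕ} {A : Ty} (a : CtxWf Γ) (a1 : Γ[x]? = some (.tm A)),
    MG1 Γ a → MG4 Γ (.var x) (A.weaken (x+1)) (Typing.var a a1) := fun _ _ _ => trivial
theorem gv16 : ∀ {Γ : Ctx} {A B : Ty} {t : Tm} (a : Kinding Γ A Kd.star) (a1 : Kinding Γ B Kd.star)
    (a2 : Typing (.tm A :: Γ) t (B.shift 0)), MG3 Γ A Kd.star a → MG3 Γ B Kd.star a1 →
    MG4 (.tm A :: Γ) t (B.shift 0) a2 → MG4 Γ (.lam A t) (.arr A B) (Typing.abs a a1 a2) :=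
  fun _ _ _ _ _ _ => trivial
theorem gv17 : ∀ {Γ : Ctx} {s : Tm} {A B : Ty} {t : Tm} (a : Typing Γ s (.arr A B)) (a1 : Typing Γ t A),
    MG4 Γ s (.arr A B) a → MG4 Γ t A a1 → MG4 Γ (.app s t) B (Typing.app a a1) := fun _ _ _ _ => trivial
theorem gv18 : ∀ {Γ : Ctx} {K : Kd} {t : Tm} {A : Ty} (a : KdWf Γ K) (a1 : Typing (.ty K :: Γ) t A),
    MG2 Γ K a → MG4 (.ty K :: Γ) t A a1 → MG4 Γ (.tlam K t) (.all K A) (Typing.tabs a a1) :=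
  fun _ _ _ _ => trivial
theorem gv19 : ∀ {Γ : Ctx} {t : Tm} {K : Kd} {A B : Ty} (a : Typing Γ t (.all K A)) (a1 : Kinding Γ B K),
    MG4 Γ t (.all K A) a → MG3 Γ B K a1 → MG4 Γ (.tapp t B) (A.subst 0 B) (Typing.tapp a a1) :=
  fun _ _ _ _ => trivial
theorem gv20 : ∀ {Γ : Ctx} {t : Tm} {A B : Ty} (a : Typing Γ t A) (a1 : SubTy Γ A B Kd.star),
    MG4 Γ t A a → MG6 Γ A B Kd.star a1 → MG4 Γ t B (Typing.sub a a1) := fun _ _ _ _ => trivial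

theorem gv21 : ∀ {Γ : Ctx} {A₂ A₁ B₁ B₂ : Ty} (a : SubTy Γ A₂ A₁ Kd.star) (a1 : SubTy Γ B₁ B₂ Kd.star),
    MG6 Γ A₂ A₁ Kd.star a → MG6 Γ B₁ B₂ Kd.star a1 →
    MG5 Γ (.intv A₁ B₁) (.intv A₂ B₂) (SubKd.intv a a1) := by
  intro Ξ A₂ A₁ B₁ B₂ a a1 ih1 ih2 Γ' σ σ' p
  have sw := mpack_swap p
  obtain ⟨stm1, fnX1, fnY1, vX1, vY1, _, _⟩ := ih1 _ _ _ p
  obtain ⟨stm2, fnX2, fnY2, vX2, vY2, _, _⟩ := ih2 _ _ _ p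
  obtain ⟨stm1', fnX1', fnY1', vX1', vY1', _, _⟩ := ih1 _ _ _ sw
  obtain ⟨stm2', fnX2', fnY2', vX2', vY2', _, _⟩ := ih2 _ _ _ sw
  refine ⟨SubKd.intv stm1' stm2, SubKd.intv fnY1' fnX2, SubKd.intv fnX1' fnY2, ?_, ?_⟩
  · show GoodKd Γ' (.intv (A₁.sub σ) (B₁.sub σ))
    exact goodkd_intv (KdWf.intv vY1 vX2)
  · show GoodKd Γ' (.intv (A₂.sub σ) (B₂.sub σ))
    exact goodkd_intv (KdWf.intv vX1 vY2)

theorem gv22 : ∀ {Γ : Ctx} {J₁ K₁ J₂ K₂ : Kd} (a : KdWf Γ (.pi J₁ K₁)) (a1 : SubKd Γ J₂ J₁)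
    (a2 : SubKd (.ty J₂ :: Γ) K₁ K₂), MG2 Γ (.pi J₁ K₁) a → MG5 Γ J₂ J₁ a1 →
    MG5 (.ty J₂ :: Γ) K₁ K₂ a2 → MG5 Γ (.pi J₁ K₁) (.pi J₂ K₂) (SubKd.pi a a1 a2) := by
  intro Ξ J₁ K₁ J₂ K₂ a a1 a2 ihw ih1 ih2 Γ' σ σ' p
  have sw := mpack_swap p
  obtain ⟨wP, kkP, gP⟩ := ihw _ _ _ p
  obtain ⟨m1, fn1L, fn1R, g1L, g1R⟩ := ih1 _ _ _ p
  obtain ⟨m1', fn1L', fn1R', g1L', g1R'⟩ := ih1 _ _ _ sw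
  have pL := mpack_lift p (goodkd_wf g1L) (goodkd_wf g1L') g1L g1L' fn1L fn1L'
  have pL' := mpack_lift' p (goodkd_wf g1L) (goodkd_wf g1L') g1L g1L' fn1L fn1L'
  obtain ⟨m2, fn2L, fn2R, g2L, g2R⟩ := ih2 _ _ _ pL
  obtain ⟨m2', fn2L', fn2R', g2L', g2R'⟩ := ih2 _ _ _ pL'
  have wfR : KdWf Γ' (.pi (J₂.sub σ) (K₂.sub (ups σ))) :=
    KdWf.pi (goodkd_wf g1L) (goodkd_wf g2R)
  refine ⟨SubKd.pi wP m1' m2', kkP, SubKd.pi wfR fn1L' fn2R', gP, ?_⟩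
  show GoodKd Γ' ((Kd.pi J₂ K₂).sub σ)
  exact goodpi_from_body p wfR g1L
    (fun Γ₃ τ τ' pk => ⟨(ih2 _ _ _ pk).2.2.1, (ih2 _ _ _ pk).2.2.2.2⟩)

theorem gv23 : ∀ {Γ : Ctx} {A : Ty} {K : Kd} (a : Kinding Γ A K),
    MG3 Γ A K a → MG6 Γ A A K (SubTy.refl a) := by
  intro Ξ A K a ih Γ' σ σ' p
  obtain ⟨t, s, kk, g⟩ := ih _ _ _ p
  exact ⟨s, s, s, t, t, kk, g⟩

theorem gv24 : ∀ {Γ : Ctx} {A B : Ty} {K : Kd} {C : Ty} (a : SubTy Γ A B K) (a1 : SubTy Γ B C K),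
    MG6 Γ A B K a → MG6 Γ B C K a1 → MG6 Γ A C K (SubTy.trans a a1) := by
  intro Ξ A B K C a a1 ih1 ih2 Γ' σ σ' p
  have sw := mpack_swap p
  obtain ⟨stm1, fnX1, fnY1, vX1, vY1, kk1, g1⟩ := ih1 _ _ _ p
  obtain ⟨stm2, fnX2, fnY2, vX2, vY2, _, _⟩ := ih2 _ _ _ p
  obtain ⟨stm1', _, _, _, _, kk1', _⟩ := ih1 _ _ _ sw
  have stm2d : SubTy Γ' (B.sub σ') (C.sub σ') (K.sub σ') :=
    (ih2 _ _ _ (mpack_diag sw)).1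
  exact ⟨SubTy.trans stm1 (SubTy.sub stm2d kk1'), fnX1, fnY2, vX1, vY2, kk1, g1⟩

theorem gv25 : ∀ {Γ : Ctx} {A B C : Ty} (a : Kinding Γ A (.intv B C)),
    MG3 Γ A (.intv B C) a → MG6 Γ A .top Kd.star (SubTy.top a) := by
  intro Ξ A B C a ih Γ' σ σ' p
  obtain ⟨t, s, kk, g⟩ := ih _ _ _ p
  have toStar : SubKd Γ' ((Kd.intv B C).sub σ) Kd.star := intv_le_star (goodkd_wf g)
  have tTop : Kinding Γ' Ty.top Kd.star := Kinding.top p.1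
  exact ⟨SubTy.top t, SubTy.sub s toStar, SubTy.refl tTop, Kinding.sub t toStar, tTop,
    subkd_refl _ (kdwf_star p.1), goodkd_star p.1⟩

theorem gv26 : ∀ {Γ : Ctx} {A B C : Ty} (a : Kinding Γ A (.intv B C)),
    MG3 Γ A (.intv B C) a → MG6 Γ .bot A Kd.star (SubTy.bot a) := by
  intro Ξ A B C a ih Γ' σ σ' p
  have sw := mpack_swap p
  obtain ⟨t, s, kk, g⟩ := ih _ _ _ p
  obtain ⟨t', s', kk', g'⟩ := ih _ _ _ sw
  have toStar : SubKd Γ' ((Kd.intv B C).sub σ) Kd.star := intv_le_star (goodkd_wf g)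
  have toStar' : SubKd Γ' ((Kd.intv B C).sub σ') Kd.star := intv_le_star (goodkd_wf g')
  have tBot : Kinding Γ' Ty.bot Kd.star := Kinding.bot p.1
  exact ⟨SubTy.bot (Kinding.sub t' kk'), SubTy.refl tBot, SubTy.sub s toStar,
    tBot, Kinding.sub t toStar, subkd_refl _ (kdwf_star p.1), goodkd_star p.1⟩

theorem gv27 : ∀ {J : Kd} {Γ : Ctx} {A : Ty} {K : Kd} {B : Ty}
    (a : Kinding (.ty J :: Γ) A K) (a1 : Kinding Γ B J),
    MG3 (.ty J :: Γ) A K a → MG3 Γ B J a1 →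
    MG6 Γ (.app (.lam J A) B) (A.subst 0 B) (K.subst 0 B) (SubTy.beta₁ a a1) := by
  intro J Ξ A K B a a1 ihA ihB Γ' σ σ' p
  have sw := mpack_swap p
  obtain ⟨tB, sB, kkB, gB⟩ := ihB _ _ _ p
  obtain ⟨tB', sB', kkB', gB'⟩ := ihB _ _ _ sw
  have pL := mpack_lift p (goodkd_wf gB) (goodkd_wf gB') gB gB' kkB kkB'
  have pL' := mpack_lift' p (goodkd_wf gB) (goodkd_wf gB') gB gB' kkB kkB'
  obtain ⟨tA, sA, kkA, gA⟩ := ihA _ _ _ pL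
  obtain ⟨tA4, sA4, kkA4, gA4⟩ := ihA _ _ _ (mpack_swap pL')
  have packC : MPack (.ty J :: Ξ) Γ' (scons (B.sub σ) σ) (scons (B.sub σ') σ') :=
    mpack_cons p ⟨tB, tB', sB, SubTy.sub sB' kkB', gB, gB', kkB, kkB'⟩
  obtain ⟨tC, sC, kkC, gC⟩ := ihA _ _ _ packC
  obtain ⟨tC', sC', kkC', gC'⟩ := ihA _ _ _ (mpack_swap packC)
  -- beta steps
  have e1 : SubTy Γ' (.app (.lam (J.sub σ) (A.sub (ups σ))) (B.sub σ))
      ((A.sub (ups σ)).subst 0 (B.sub σ)) ((K.sub (ups σ)).subst 0 (B.sub σ)) :=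
    SubTy.beta₁ tA tB
  have e3 : SubTy Γ' ((A.sub (ups σ')).subst 0 (B.sub σ'))
      (.app (.lam (J.sub σ') (A.sub (ups σ'))) (B.sub σ'))
      ((K.sub (ups σ')).subst 0 (B.sub σ')) :=
    SubTy.beta₂ tA4 tB'
  rw [ty_ups_sgl, kd_ups_sgl] at e1
  rw [ty_ups_sgl, kd_ups_sgl] at e3
  have e3' : SubTy Γ' (A.sub (scons (B.sub σ') σ'))
      (.app (.lam (J.sub σ') (A.sub (ups σ'))) (B.sub σ')) (K.sub (scons (B.sub σ) σ)) :=
    SubTy.sub e3 kkC'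
  have eA : (A.subst 0 B).sub σ = A.sub (scons (B.sub σ) σ) := ty_beta_sub _ _ _
  have eA' : (A.subst 0 B).sub σ' = A.sub (scons (B.sub σ') σ') := ty_beta_sub _ _ _
  have eK : (K.subst 0 B).sub σ = K.sub (scons (B.sub σ) σ) := kd_beta_sub _ _ _
  have eK' : (K.subst 0 B).sub σ' = K.sub (scons (B.sub σ') σ') := kd_beta_sub _ _ _
  -- redex kinding
  have vredex : Kinding Γ' ((Ty.app (.lam J A) B).sub σ) (K.sub (scons (B.sub σ) σ)) := by
    have := Kinding.app (Kinding.abs (goodkd_wf gB) tA) tB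
    rw [kd_ups_sgl] at this
    exact this
  refine ⟨?_, ?_, ?_, ?_, ?_, ?_, ?_⟩
  · rw [eA', eK]; exact SubTy.trans e1 sC
  · rw [eK]; exact SubTy.trans e1 (SubTy.trans sC e3')
  · rw [eA, eA', eK]; exact sC
  · rw [eK]; exact vredex
  · rw [eA, eK]; exact tC
  · rw [eK, eK']; exact kkC
  · rw [eK]; exact gC

theorem gv28 : ∀ {J : Kd} {Γ : Ctx} {A : Ty} {K : Kd} {B : Ty}
    (a : Kinding (.ty J :: Γ) A K) (a1 : Kinding Γ B J),
    MG3 (.ty J :: Γ) A K a → MG3 Γ B J a1 →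
    MG6 Γ (A.subst 0 B) (.app (.lam J A) B) (K.subst 0 B) (SubTy.beta₂ a a1) := by
  intro J Ξ A K B a a1 ihA ihB Γ' σ σ' p
  have sw := mpack_swap p
  obtain ⟨tB, sB, kkB, gB⟩ := ihB _ _ _ p
  obtain ⟨tB', sB', kkB', gB'⟩ := ihB _ _ _ sw
  have pL := mpack_lift p (goodkd_wf gB) (goodkd_wf gB') gB gB' kkB kkB'
  have pL' := mpack_lift' p (goodkd_wf gB) (goodkd_wf gB') gB gB' kkB kkB'
  obtain ⟨tA, sA, kkA, gA⟩ := ihA _ _ _ pL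
  obtain ⟨tA4, sA4, kkA4, gA4⟩ := ihA _ _ _ (mpack_swap pL')
  have packC : MPack (.ty J :: Ξ) Γ' (scons (B.sub σ) σ) (scons (B.sub σ') σ') :=
    mpack_cons p ⟨tB, tB', sB, SubTy.sub sB' kkB', gB, gB', kkB, kkB'⟩
  obtain ⟨tC, sC, kkC, gC⟩ := ihA _ _ _ packC
  obtain ⟨tC', sC', kkC', gC'⟩ := ihA _ _ _ (mpack_swap packC)
  have e1 : SubTy Γ' (.app (.lam (J.sub σ) (A.sub (ups σ))) (B.sub σ))
      ((A.sub (ups σ)).subst 0 (B.sub σ)) ((K.sub (ups σ)).subst 0 (B.sub σ)) :=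
    SubTy.beta₁ tA tB
  have e3 : SubTy Γ' ((A.sub (ups σ')).subst 0 (B.sub σ'))
      (.app (.lam (J.sub σ') (A.sub (ups σ'))) (B.sub σ'))
      ((K.sub (ups σ')).subst 0 (B.sub σ')) :=
    SubTy.beta₂ tA4 tB'
  rw [ty_ups_sgl, kd_ups_sgl] at e1
  rw [ty_ups_sgl, kd_ups_sgl] at e3
  have e3' : SubTy Γ' (A.sub (scons (B.sub σ') σ'))
      (.app (.lam (J.sub σ') (A.sub (ups σ'))) (B.sub σ')) (K.sub (scons (B.sub σ) σ)) :=
    SubTy.sub e3 kkC'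
  have eA : (A.subst 0 B).sub σ = A.sub (scons (B.sub σ) σ) := ty_beta_sub _ _ _
  have eA' : (A.subst 0 B).sub σ' = A.sub (scons (B.sub σ') σ') := ty_beta_sub _ _ _
  have eK : (K.subst 0 B).sub σ = K.sub (scons (B.sub σ) σ) := kd_beta_sub _ _ _
  have eK' : (K.subst 0 B).sub σ' = K.sub (scons (B.sub σ') σ') := kd_beta_sub _ _ _
  have vredex : Kinding Γ' ((Ty.app (.lam J A) B).sub σ) (K.sub (scons (B.sub σ) σ)) := by
    have := Kinding.app (Kinding.abs (goodkd_wf gB) tA) tB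
    rw [kd_ups_sgl] at this
    exact this
  refine ⟨?_, ?_, ?_, ?_, ?_, ?_, ?_⟩
  · rw [eA, eK]; exact SubTy.trans sC e3'
  · rw [eA, eA', eK]; exact sC
  · rw [eK]; exact SubTy.trans e1 (SubTy.trans sC e3')
  · rw [eA, eK]; exact tC
  · rw [eK]; exact vredex
  · rw [eK, eK']; exact kkC
  · rw [eK]; exact gC

theorem gv29 : ∀ {Γ : Ctx} {A : Ty} {J K : Kd} (a : Kinding Γ A (.pi J K)),
    MG3 Γ A (.pi J K) a →
    MG6 Γ (.lam J (.app (A.shift 0) (.var 0))) A (.pi J K) (SubTy.eta₁ a) := by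
  intro Ξ A J K a ih Γ' σ σ' p
  have sw := mpack_swap p
  obtain ⟨t, s, kk, g⟩ := ih _ _ _ p
  obtain ⟨t', s', kk', g'⟩ := ih _ _ _ sw
  have gp : GoodKd Γ' (.pi (J.sub σ) (K.sub (ups σ))) := g
  have gp' : GoodKd Γ' (.pi (J.sub σ') (K.sub (ups σ'))) := g'
  have wJ : KdWf Γ' (J.sub σ) := goodkd_wf (goodkd_pi_dom gp)
  have wJ' : KdWf Γ' (J.sub σ') := goodkd_wf (goodkd_pi_dom gp')
  -- the substituted eta-expansions
  have eshift : ((A.shift 0).sub (ups σ)) = (A.sub σ).shift 0 := ty_shift0_sub _ _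
  have eshift' : ((A.shift 0).sub (ups σ')) = (A.sub σ').shift 0 := ty_shift0_sub _ _
  have eeq : ((Ty.lam J (.app (A.shift 0) (.var 0))).sub σ)
      = .lam (J.sub σ) (.app ((A.sub σ).shift 0) (.var 0)) := by
    show Ty.lam (J.sub σ) (.app ((A.shift 0).sub (ups σ)) (.var 0)) = _
    rw [eshift]
  have eeq' : ((Ty.lam J (.app (A.shift 0) (.var 0))).sub σ')
      = .lam (J.sub σ') (.app ((A.sub σ').shift 0) (.var 0)) := by
    show Ty.lam (J.sub σ') (.app ((A.shift 0).sub (ups σ')) (.var 0)) = _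
    rw [eshift']
  -- kinding of the eta-expansion
  have vlam : Kinding Γ' (.lam (J.sub σ) (.app ((A.sub σ).shift 0) (.var 0)))
      (.pi (J.sub σ) (K.sub (ups σ))) := by
    refine Kinding.abs wJ ?_
    have hwk : Kinding (.ty (J.sub σ) :: Γ') ((A.sub σ).shift 0)
        (.pi ((J.sub σ).shift 0) ((K.sub (ups σ)).shift 1)) := kinding_wk1 t wJ
    have hv : Kinding (.ty (J.sub σ) :: Γ') (.var 0) ((J.sub σ).shift 0) := by
      have := Kinding.var (x := 0) (K := J.sub σ) (CtxWf.ty p.1 wJ) (by simp)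
      rwa [kd_weaken_one] at this
    have := Kinding.app hwk hv
    rwa [kd_eta] at this
  have vlam' : Kinding Γ' (.lam (J.sub σ') (.app ((A.sub σ').shift 0) (.var 0)))
      (.pi (J.sub σ') (K.sub (ups σ'))) := by
    refine Kinding.abs wJ' ?_
    have hwk : Kinding (.ty (J.sub σ') :: Γ') ((A.sub σ').shift 0)
        (.pi ((J.sub σ').shift 0) ((K.sub (ups σ')).shift 1)) := kinding_wk1 t' wJ'
    have hv : Kinding (.ty (J.sub σ') :: Γ') (.var 0) ((J.sub σ').shift 0) := by
      have := Kinding.var (x := 0) (K := J.sub σ') (CtxWf.ty p.1 wJ') (by simp)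
      rwa [kd_weaken_one] at this
    have := Kinding.app hwk hv
    rwa [kd_eta] at this
  have fnlam : SubTy Γ' (.lam (J.sub σ) (.app ((A.sub σ).shift 0) (.var 0)))
      (.lam (J.sub σ') (.app ((A.sub σ').shift 0) (.var 0))) ((Kd.pi J K).sub σ) :=
    SubTy.trans (SubTy.eta₁ t) (SubTy.trans s (SubTy.sub (SubTy.eta₂ t') kk'))
  refine ⟨?_, ?_, ?_, ?_, ?_, ?_, ?_⟩
  · rw [eeq]; exact SubTy.trans (SubTy.eta₁ t) s
  · rw [eeq, eeq']; exact fnlam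
  · exact s
  · rw [eeq]; exact vlam
  · exact t
  · exact kk
  · exact g

theorem gv30 : ∀ {Γ : Ctx} {A : Ty} {J K : Kd} (a : Kinding Γ A (.pi J K)),
    MG3 Γ A (.pi J K) a →
    MG6 Γ A (.lam J (.app (A.shift 0) (.var 0))) (.pi J K) (SubTy.eta₂ a) := by
  intro Ξ A J K a ih Γ' σ σ' p
  have sw := mpack_swap p
  obtain ⟨t, s, kk, g⟩ := ih _ _ _ p
  obtain ⟨t', s', kk', g'⟩ := ih _ _ _ sw
  have gp : GoodKd Γ' (.pi (J.sub σ) (K.sub (ups σ))) := g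
  have gp' : GoodKd Γ' (.pi (J.sub σ') (K.sub (ups σ'))) := g'
  have wJ : KdWf Γ' (J.sub σ) := goodkd_wf (goodkd_pi_dom gp)
  have wJ' : KdWf Γ' (J.sub σ') := goodkd_wf (goodkd_pi_dom gp')
  have eshift : ((A.shift 0).sub (ups σ)) = (A.sub σ).shift 0 := ty_shift0_sub _ _
  have eshift' : ((A.shift 0).sub (ups σ')) = (A.sub σ').shift 0 := ty_shift0_sub _ _
  have eeq : ((Ty.lam J (.app (A.shift 0) (.var 0))).sub σ)
      = .lam (J.sub σ) (.app ((A.sub σ).shift 0) (.var 0)) := by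
    show Ty.lam (J.sub σ) (.app ((A.shift 0).sub (ups σ)) (.var 0)) = _
    rw [eshift]
  have eeq' : ((Ty.lam J (.app (A.shift 0) (.var 0))).sub σ')
      = .lam (J.sub σ') (.app ((A.sub σ').shift 0) (.var 0)) := by
    show Ty.lam (J.sub σ') (.app ((A.shift 0).sub (ups σ')) (.var 0)) = _
    rw [eshift']
  have vlam : Kinding Γ' (.lam (J.sub σ) (.app ((A.sub σ).shift 0) (.var 0)))
      (.pi (J.sub σ) (K.sub (ups σ))) := by
    refine Kinding.abs wJ ?_
    have hwk : Kinding (.ty (J.sub σ) :: Γ') ((A.sub σ).shift 0)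
        (.pi ((J.sub σ).shift 0) ((K.sub (ups σ)).shift 1)) := kinding_wk1 t wJ
    have hv : Kinding (.ty (J.sub σ) :: Γ') (.var 0) ((J.sub σ).shift 0) := by
      have := Kinding.var (x := 0) (K := J.sub σ) (CtxWf.ty p.1 wJ) (by simp)
      rwa [kd_weaken_one] at this
    have := Kinding.app hwk hv
    rwa [kd_eta] at this
  have fnlam : SubTy Γ' (.lam (J.sub σ) (.app ((A.sub σ).shift 0) (.var 0)))
      (.lam (J.sub σ') (.app ((A.sub σ').shift 0) (.var 0))) ((Kd.pi J K).sub σ) :=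
    SubTy.trans (SubTy.eta₁ t) (SubTy.trans s (SubTy.sub (SubTy.eta₂ t') kk'))
  refine ⟨?_, ?_, ?_, ?_, ?_, ?_, ?_⟩
  · rw [eeq']; exact SubTy.trans s (SubTy.sub (SubTy.eta₂ t') kk')
  · exact s
  · rw [eeq, eeq']; exact fnlam
  · exact t
  · rw [eeq]; exact vlam
  · exact kk
  · exact g

theorem gv31 : ∀ {Γ : Ctx} {A₂ A₁ B₁ B₂ : Ty} (a : SubTy Γ A₂ A₁ Kd.star) (a1 : SubTy Γ B₁ B₂ Kd.star),
    MG6 Γ A₂ A₁ Kd.star a → MG6 Γ B₁ B₂ Kd.star a1 →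
    MG6 Γ (.arr A₁ B₁) (.arr A₂ B₂) Kd.star (SubTy.arr a a1) := by
  intro Ξ A₂ A₁ B₁ B₂ a a1 ih1 ih2 Γ' σ σ' p
  have sw := mpack_swap p
  obtain ⟨stm1, fnX1, fnY1, vX1, vY1, _, _⟩ := ih1 _ _ _ p
  obtain ⟨stm2, fnX2, fnY2, vX2, vY2, _, _⟩ := ih2 _ _ _ p
  obtain ⟨stm1', fnX1', fnY1', _, _, _, _⟩ := ih1 _ _ _ sw
  exact ⟨SubTy.arr stm1' stm2, SubTy.arr fnY1' fnX2, SubTy.arr fnX1' fnY2,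
    Kinding.arr vY1 vX2, Kinding.arr vX1 vY2, subkd_refl _ (kdwf_star p.1), goodkd_star p.1⟩

theorem gv32 : ∀ {Γ : Ctx} {J₁ : Kd} {A₁ : Ty} {J K J₂ : Kd} {A₂ : Ty}
    (a : Kinding Γ (.lam J₁ A₁) (.pi J K)) (a1 : Kinding Γ (.lam J₂ A₂) (.pi J K))
    (a2 : SubTy (.ty J :: Γ) A₁ A₂ K),
    MG3 Γ (.lam J₁ A₁) (.pi J K) a → MG3 Γ (.lam J₂ A₂) (.pi J K) a1 →
    MG6 (.ty J :: Γ) A₁ A₂ K a2 →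
    MG6 Γ (.lam J₁ A₁) (.lam J₂ A₂) (.pi J K) (SubTy.abs a a1 a2) := by
  intro Ξ J₁ A₁ J K J₂ A₂ a a1 a2 ih1 ih2 ih3 Γ' σ σ' p
  have sw := mpack_swap p
  obtain ⟨t1, s1, kk1, g1⟩ := ih1 _ _ _ p
  obtain ⟨t1', s1', kk1', g1'⟩ := ih1 _ _ _ sw
  obtain ⟨t2, s2, _, _⟩ := ih2 _ _ _ p
  obtain ⟨t2', s2', _, _⟩ := ih2 _ _ _ sw
  have gp : GoodKd Γ' (.pi (J.sub σ) (K.sub (ups σ))) := g1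
  have gp' : GoodKd Γ' (.pi (J.sub σ') (K.sub (ups σ'))) := g1'
  have wJ : KdWf Γ' (J.sub σ) := goodkd_wf (goodkd_pi_dom gp)
  have wJ' : KdWf Γ' (J.sub σ') := goodkd_wf (goodkd_pi_dom gp')
  have kkJ : SubKd Γ' (J.sub σ) (J.sub σ') := by cases kk1' with | pi _ h _ => exact h
  have kkJ' : SubKd Γ' (J.sub σ') (J.sub σ) := by cases kk1 with | pi _ h _ => exact h
  have pL := mpack_lift p wJ wJ' (goodkd_pi_dom gp) (goodkd_pi_dom gp') kkJ kkJ'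
  obtain ⟨stm3, fnX3, fnY3, vX3, vY3, _, _⟩ := ih3 _ _ _ pL
  refine ⟨?_, ?_, ?_, t1, t2, kk1, g1⟩
  · exact SubTy.abs t1 (Kinding.sub t2' kk1') stm3
  · exact SubTy.abs t1 (Kinding.sub t1' kk1') fnX3
  · exact SubTy.abs t2 (Kinding.sub t2' kk1') fnY3

theorem gv33 : ∀ {Γ : Ctx} {K₁ : Kd} {A₁ : Ty} {K₂ : Kd} {A₂ : Ty}
    (a : Kinding Γ (.all K₁ A₁) Kd.star) (a1 : SubKd Γ K₂ K₁)
    (a2 : SubTy (.ty K₂ :: Γ) A₁ A₂ Kd.star),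
    MG3 Γ (.all K₁ A₁) Kd.star a → MG5 Γ K₂ K₁ a1 → MG6 (.ty K₂ :: Γ) A₁ A₂ Kd.star a2 →
    MG6 Γ (.all K₁ A₁) (.all K₂ A₂) Kd.star (SubTy.all a a1 a2) := by
  intro Ξ K₁ A₁ K₂ A₂ a a1 a2 ih1 ihS ih3 Γ' σ σ' p
  have sw := mpack_swap p
  obtain ⟨t1, s1, _, _⟩ := ih1 _ _ _ p
  obtain ⟨m, fnL, fnR, gL, gR⟩ := ihS _ _ _ p
  obtain ⟨m', fnL', fnR', gL', gR'⟩ := ihS _ _ _ sw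
  have pL := mpack_lift p (goodkd_wf gL) (goodkd_wf gL') gL gL' fnL fnL'
  have pL' := mpack_lift' p (goodkd_wf gL) (goodkd_wf gL') gL gL' fnL fnL'
  obtain ⟨stm3, fnX3, fnY3, vX3, vY3, _, _⟩ := ih3 _ _ _ pL
  obtain ⟨stm3', fnX3', fnY3', vX3', vY3', _, _⟩ := ih3 _ _ _ pL'
  have vY : Kinding Γ' ((Ty.all K₂ A₂).sub σ) Kd.star :=
    Kinding.all (goodkd_wf gL) vY3
  refine ⟨?_, s1, ?_, t1, vY, subkd_refl _ (kdwf_star p.1), goodkd_star p.1⟩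
  · exact SubTy.all t1 m' stm3'
  · exact SubTy.all vY fnL' fnY3'

theorem gv34 : ∀ {Γ : Ctx} {A₁ A₂ : Ty} {J K : Kd} {B₁ B₂ : Ty}
    (a : SubTy Γ A₁ A₂ (.pi J K)) (a1 : TyEq Γ B₁ B₂ J),
    MG6 Γ A₁ A₂ (.pi J K) a → MG8 Γ B₁ B₂ J a1 →
    MG6 Γ (.app A₁ B₁) (.app A₂ B₂) (K.subst 0 B₁) (SubTy.app a a1) := by
  intro Ξ A₁ A₂ J K B₁ B₂ a a1 ih1 ih2 Γ' σ σ' p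
  have sw := mpack_swap p
  obtain ⟨stm1, fnX1, fnY1, vX1, vY1, kk1, g1⟩ := ih1 _ _ _ p
  obtain ⟨stm1', fnX1', fnY1', vX1', vY1', kk1', g1'⟩ := ih1 _ _ _ sw
  obtain ⟨em, fnB1, fnB2, vB1, vB2, kkJ, gJ⟩ := ih2 _ _ _ p
  obtain ⟨em', fnB1', fnB2', vB1', vB2', kkJ', gJ'⟩ := ih2 _ _ _ sw
  obtain ⟨emD, _, _, _, _, _, _⟩ := ih2 _ _ _ (mpack_diag p)
  have g1p : GoodKd Γ' (.pi (J.sub σ) (K.sub (ups σ))) := g1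
  have g1p' : GoodKd Γ' (.pi (J.sub σ') (K.sub (ups σ'))) := g1'
  have vB1'σ : Kinding Γ' (B₁.sub σ') (J.sub σ) := Kinding.sub vB1' kkJ'
  have fnB1'σ : SubTy Γ' (B₁.sub σ') (B₁.sub σ) (J.sub σ) := SubTy.sub fnB1' kkJ'
  have eqB12 : SubTy Γ' (B₁.sub σ) (B₂.sub σ) (J.sub σ) ∧
      SubTy Γ' (B₂.sub σ) (B₁.sub σ) (J.sub σ) := by
    cases emD with | antisym h1 h2 => exact ⟨h1, h2⟩
  -- coercion between the two argument instantiations of the Π-body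
  have coerce21 := goodkd_pi_app g1p vB2 vB1 eqB12.2 eqB12.1
  have eK : (K.subst 0 B₁).sub σ = (K.sub (ups σ)).subst 0 (B₁.sub σ) := kd_subst0_sub _ _ _
  have eK' : (K.subst 0 B₁).sub σ' = (K.sub (ups σ')).subst 0 (B₁.sub σ') := kd_subst0_sub _ _ _
  -- functionality of the result kind
  have h1 := goodkd_pi_app g1p vB1 vB1'σ fnB1 fnB1'σ
  have bodySub : SubKd (.ty (J.sub σ') :: Γ') (K.sub (ups σ)) (K.sub (ups σ')) := by
    cases kk1 with | pi _ _ h => exact h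
  have h2 : SubKd Γ' ((K.sub (ups σ)).subst 0 (B₁.sub σ')) ((K.sub (ups σ')).subst 0 (B₁.sub σ')) :=
    subkd_subst1 vB1' bodySub
  have hwf2 : KdWf Γ' ((K.sub (ups σ')).subst 0 (B₁.sub σ')) :=
    goodkd_wf (goodkd_pi_app g1p' vB1' vB1' (SubTy.refl vB1') (SubTy.refl vB1')).2
  have kkfull : SubKd Γ' ((K.sub (ups σ)).subst 0 (B₁.sub σ))
      ((K.sub (ups σ')).subst 0 (B₁.sub σ')) := subkd_trans _ h1.1 h2 hwf2
  have fnB1both : TyEq Γ' (B₁.sub σ) (B₁.sub σ') (J.sub σ) := TyEq.antisym fnB1 fnB1'σ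
  have fnB2both : TyEq Γ' (B₂.sub σ) (B₂.sub σ') (J.sub σ) :=
    TyEq.antisym fnB2 (SubTy.sub fnB2' kkJ')
  refine ⟨?_, ?_, ?_, ?_, ?_, ?_, ?_⟩
  · rw [eK]; exact SubTy.app stm1 em
  · rw [eK]; exact SubTy.app fnX1 fnB1both
  · rw [eK]
    exact SubTy.sub (SubTy.app fnY1 fnB2both) coerce21.1
  · rw [eK]; exact Kinding.app vX1 vB1
  · rw [eK]
    exact Kinding.sub (Kinding.app vY1 vB2) coerce21.1
  · rw [eK, eK']; exact kkfull
  · rw [eK]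
    exact (goodkd_pi_app g1p vB1 vB1 (SubTy.refl vB1) (SubTy.refl vB1)).2

theorem gv35 : ∀ {Γ : Ctx} {A B₁ B₂ : Ty} (a : Kinding Γ A (.intv B₁ B₂)),
    MG3 Γ A (.intv B₁ B₂) a → MG6 Γ B₁ A Kd.star (SubTy.bnd₁ a) := by
  intro Ξ A B₁ B₂ a ih Γ' σ σ' p
  have sw := mpack_swap p
  obtain ⟨t, s, kk, g⟩ := ih _ _ _ p
  obtain ⟨t', s', kk', g'⟩ := ih _ _ _ sw
  have wf : KdWf Γ' (.intv (B₁.sub σ) (B₂.sub σ)) := goodkd_wf g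
  obtain ⟨hB1, hB2⟩ := kdwf_intv_inv wf
  have toStar : SubKd Γ' ((Kd.intv B₁ B₂).sub σ) Kd.star := intv_le_star wf
  have tS : Kinding Γ' (A.sub σ) Kd.star := Kinding.sub t toStar
  have sS : SubTy Γ' (A.sub σ) (A.sub σ') Kd.star := SubTy.sub s toStar
  have fnB1 : SubTy Γ' (B₁.sub σ) (B₁.sub σ') Kd.star := by
    cases kk' with | intv h1 h2 => exact h1
  refine ⟨SubTy.trans (SubTy.bnd₁ t) sS, fnB1, sS, hB1, tS,
    subkd_refl _ (kdwf_star p.1), goodkd_star p.1⟩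

theorem gv36 : ∀ {Γ : Ctx} {A B₁ B₂ : Ty} (a : Kinding Γ A (.intv B₁ B₂)),
    MG3 Γ A (.intv B₁ B₂) a → MG6 Γ A B₂ Kd.star (SubTy.bnd₂ a) := by
  intro Ξ A B₁ B₂ a ih Γ' σ σ' p
  have sw := mpack_swap p
  obtain ⟨t, s, kk, g⟩ := ih _ _ _ p
  obtain ⟨t', s', kk', g'⟩ := ih _ _ _ sw
  have wf : KdWf Γ' (.intv (B₁.sub σ) (B₂.sub σ)) := goodkd_wf g
  obtain ⟨hB1, hB2⟩ := kdwf_intv_inv wf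
  have toStar : SubKd Γ' ((Kd.intv B₁ B₂).sub σ) Kd.star := intv_le_star wf
  have tS : Kinding Γ' (A.sub σ) Kd.star := Kinding.sub t toStar
  have sS : SubTy Γ' (A.sub σ) (A.sub σ') Kd.star := SubTy.sub s toStar
  have fnB2 : SubTy Γ' (B₂.sub σ) (B₂.sub σ') Kd.star := by
    cases kk with | intv h1 h2 => exact h2
  refine ⟨SubTy.trans (SubTy.bnd₂ t) fnB2, sS, fnB2, tS, hB2,
    subkd_refl _ (kdwf_star p.1), goodkd_star p.1⟩

theorem gv37 : ∀ {Γ : Ctx} {A₁ A₂ : Ty} {B C : Ty} (a : SubTy Γ A₁ A₂ (.intv B C)),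
    MG6 Γ A₁ A₂ (.intv B C) a → MG6 Γ A₁ A₂ (.intv A₁ A₂) (SubTy.intv a) := by
  intro Ξ A₁ A₂ B C a ih Γ' σ σ' p
  have sw := mpack_swap p
  obtain ⟨stm, fnX, fnY, vX, vY, kk, g⟩ := ih _ _ _ p
  obtain ⟨stm', fnX', fnY', vX', vY', kk', g'⟩ := ih _ _ _ sw
  obtain ⟨stmD, _, _, _, _, _, _⟩ := ih _ _ _ (mpack_diag p)
  have wf : KdWf Γ' ((Kd.intv B C).sub σ) := goodkd_wf g
  have wf' : KdWf Γ' ((Kd.intv B C).sub σ') := goodkd_wf g'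
  have toStar := intv_le_star wf
  have toStar' := intv_le_star wf'
  have vXS : Kinding Γ' (A₁.sub σ) Kd.star := Kinding.sub vX toStar
  have vYS : Kinding Γ' (A₂.sub σ) Kd.star := Kinding.sub vY toStar
  have fnXS : SubTy Γ' (A₁.sub σ) (A₁.sub σ') Kd.star := SubTy.sub fnX toStar
  have fnYS : SubTy Γ' (A₂.sub σ) (A₂.sub σ') Kd.star := SubTy.sub fnY toStar
  have fnXS' : SubTy Γ' (A₁.sub σ') (A₁.sub σ) Kd.star := SubTy.sub fnX' toStar'
  have fnYS' : SubTy Γ' (A₂.sub σ') (A₂.sub σ) Kd.star := SubTy.sub fnY' toStar'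
  have stmDS : SubTy Γ' (A₁.sub σ) (A₂.sub σ) Kd.star := SubTy.sub stmD toStar
  refine ⟨?_, ?_, ?_, ?_, ?_, ?_, ?_⟩
  · exact SubTy.sub (SubTy.intv stm) (SubKd.intv (SubTy.refl vXS) fnYS')
  · exact SubTy.sub (SubTy.intv fnX)
      (SubKd.intv (SubTy.refl vXS) (SubTy.trans fnXS' stmDS))
  · exact SubTy.sub (SubTy.intv fnY) (SubKd.intv stmDS fnYS')
  · exact Kinding.sub (Kinding.sing vX) (SubKd.intv (SubTy.refl vXS) stmDS)
  · exact Kinding.sub (Kinding.sing vY) (SubKd.intv stmDS (SubTy.refl vYS))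
  · exact SubKd.intv fnXS' fnYS
  · show GoodKd Γ' (.intv (A₁.sub σ) (A₂.sub σ))
    exact goodkd_intv (KdWf.intv vXS vYS)

theorem gv38 : ∀ {Γ : Ctx} {A₁ A₂ : Ty} {J K : Kd} (a : SubTy Γ A₁ A₂ J) (a1 : SubKd Γ J K),
    MG6 Γ A₁ A₂ J a → MG5 Γ J K a1 → MG6 Γ A₁ A₂ K (SubTy.sub a a1) := by
  intro Ξ A₁ A₂ J K a a1 ih ihS Γ' σ σ' p
  obtain ⟨stm, fnX, fnY, vX, vY, kk0, g0⟩ := ih _ _ _ p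
  obtain ⟨m, fnL, fnR, gL, gR⟩ := ihS _ _ _ p
  have mD : SubKd Γ' (J.sub σ) (K.sub σ) := (ihS _ _ _ (mpack_diag p)).1
  exact ⟨SubTy.sub stm mD, SubTy.sub fnX mD, SubTy.sub fnY mD,
    Kinding.sub vX mD, Kinding.sub vY mD, fnR, gR⟩

theorem gv39 : ∀ {Γ : Ctx} {J K : Kd} (a : SubKd Γ J K) (a1 : SubKd Γ K J),
    MG5 Γ J K a → MG5 Γ K J a1 → MG7 Γ J K (KdEq.antisym a a1) := fun _ _ _ _ => trivial

theorem gv40 : ∀ {Γ : Ctx} {A B : Ty} {K : Kd} (a : SubTy Γ A B K) (a1 : SubTy Γ B A K),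
    MG6 Γ A B K a → MG6 Γ B A K a1 → MG8 Γ A B K (TyEq.antisym a a1) := by
  intro Ξ A B K a a1 ih1 ih2 Γ' σ σ' p
  have sw := mpack_swap p
  obtain ⟨stm1, fnX1, fnY1, vX1, vY1, kk1, g1⟩ := ih1 _ _ _ p
  obtain ⟨stm2', _, _, _, _, _, _⟩ := ih2 _ _ _ sw
  obtain ⟨_, _, _, _, _, kk1', _⟩ := ih1 _ _ _ sw
  exact ⟨TyEq.antisym stm1 (SubTy.sub stm2' kk1'), fnX1, fnY1, vX1, vY1, kk1, g1⟩

end MegaCases2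
theorem mega_kinding {Ξ : Ctx} {A : Ty} {K : Kd} (h : Kinding Ξ A K) :
    ∀ {Γ' σ σ'}, MPack Ξ Γ' σ σ' → KOut Γ' σ σ' A K :=
  fun {Γ' σ σ'} p =>
    Kinding.rec (motive_1 := MG1) (motive_2 := MG2) (motive_3 := MG3) (motive_4 := MG4)
      (motive_5 := MG5) (motive_6 := MG6) (motive_7 := MG7) (motive_8 := MG8)
      gv1 gv2 gv3 gv4 gv5 gv6 gv7 gv8 gv9 gv10 gv11 gv12 gv13 gv14 gv15 gv16 gv17 gv18 gv19 gv20
      gv21 gv22 gv23 gv24 gv25 gv26 gv27 gv28 gv29 gv30 gv31 gv32 gv33 gv34 gv35 gv36 gv37 gv38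
      gv39 gv40 h Γ' σ σ' p

theorem mega_kdwf {Ξ : Ctx} {K : Kd} (h : KdWf Ξ K) :
    ∀ {Γ' σ σ'}, MPack Ξ Γ' σ σ' → WOut Γ' σ σ' K :=
  fun {Γ' σ σ'} p =>
    KdWf.rec (motive_1 := MG1) (motive_2 := MG2) (motive_3 := MG3) (motive_4 := MG4)
      (motive_5 := MG5) (motive_6 := MG6) (motive_7 := MG7) (motive_8 := MG8)
      gv1 gv2 gv3 gv4 gv5 gv6 gv7 gv8 gv9 gv10 gv11 gv12 gv13 gv14 gv15 gv16 gv17 gv18 gv19 gv20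
      gv21 gv22 gv23 gv24 gv25 gv26 gv27 gv28 gv29 gv30 gv31 gv32 gv33 gv34 gv35 gv36 gv37 gv38
      gv39 gv40 h Γ' σ σ' p

/-! identity packs -/

theorem mpack_liftTm {Ξ Γ' σ σ'} (p : MPack Ξ Γ' σ σ') {A : Ty}
    (w1 : Kinding Γ' (A.sub σ) Kd.star) :
    MPack (.tm A :: Ξ) (.tm (A.sub σ) :: Γ') (ups σ) (ups σ') := by
  have hw : CtxWf (.tm (A.sub σ) :: Γ') := CtxWf.tm p.1 w1
  have wfb : WfB Γ' (.tm (A.sub σ)) := w1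
  refine ⟨hw, fun x K hx => ?_⟩
  cases x with
  | zero => simp at hx
  | succ x =>
      have hx' : Ξ[x]? = some (.ty K) := by simpa using hx
      obtain ⟨k1, k2, s12, s21, gg1, gg2, kkk12, kkk21⟩ := p.2 x K hx'
      rw [kd_weaken_succ_sub, kd_weaken_succ_sub]
      show MPe _ ((σ x).ren (· + 1)) ((σ' x).ren (· + 1)) _ _
      rw [← ty_shift0_eq, ← ty_shift0_eq]
      refine ⟨kinding_wk1 k1 wfb, kinding_wk1 k2 wfb, subty_wk1 s12 wfb, subty_wk1 s21 wfb,
        ?_, ?_, subkd_wk1 kkk12 wfb, subkd_wk1 kkk21 wfb⟩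
      · rw [kd_shift0_eq]; exact goodkd_thin gg1 (thin_wk1 wfb)
      · rw [kd_shift0_eq]; exact goodkd_thin gg2 (thin_wk1 wfb)

theorem ups_var_eq : ups Ty.var = Ty.var := funext ups_var

theorem mpack_id : ∀ {Γ : Ctx}, CtxWf Γ → MPack Γ Γ Ty.var Ty.var := by
  intro Γ hw
  induction Γ with
  | nil => exact ⟨hw, fun x K hx => by simp at hx⟩
  | cons b Γ ih =>
      cases hw with
      | ty hw hK =>
          have p0 := ih hw
          obtain ⟨wfK, kkK, gK⟩ := mega_kdwf hK p0
          rw [Kd.sub_id] at wfK kkK gK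
          have := mpack_lift (J := _) p0 (by rwa [Kd.sub_id]) (by rwa [Kd.sub_id])
            (by rwa [Kd.sub_id]) (by rwa [Kd.sub_id]) (by rwa [Kd.sub_id]) (by rwa [Kd.sub_id])
          rwa [Kd.sub_id, ups_var_eq] at this
      | tm hw hA =>
          have p0 := ih hw
          have := mpack_liftTm (A := _) p0 (by rwa [Ty.sub_id])
          rwa [Ty.sub_id, ups_var_eq] at this

/-! validity -/

theorem kinding_validity {Γ : Ctx} {A : Ty} {K : Kd} (h : Kinding Γ A K) : GoodKd Γ K := by
  have p := mpack_id (kinding_ctxwf h)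
  have := (mega_kinding h p).2.2.2
  rwa [Kd.sub_id] at this

theorem kinding_valid_wf {Γ : Ctx} {A : Ty} {K : Kd} (h : Kinding Γ A K) : KdWf Γ K :=
  goodkd_wf (kinding_validity h)

theorem sgl0_eq_scons (B : Ty) : sgl 0 B = scons B Ty.var := by
  funext x
  cases x with
  | zero => simp [sgl, scons]
  | succ x => simp [sgl, scons]

/-- Functionality of kind formation. -/
theorem kdwf_functionality {Γ : Ctx} {J K : Kd} {B B' : Ty}
    (hK : KdWf (.ty J :: Γ) K) (hB : Kinding Γ B J) (hB' : Kinding Γ B' J)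
    (s1 : SubTy Γ B B' J) (s2 : SubTy Γ B' B J) :
    SubKd Γ (K.subst 0 B) (K.subst 0 B') ∧ KdWf Γ (K.subst 0 B) := by
  have hw := kinding_ctxwf hB
  have p0 := mpack_id hw
  have gJ : GoodKd Γ J := kinding_validity hB
  have wJ : KdWf Γ J := goodkd_wf gJ
  have e : MPe Γ B B' (J.sub Ty.var) (J.sub Ty.var) := by
    rw [Kd.sub_id]
    exact ⟨hB, hB', s1, s2, gJ, gJ, subkd_refl _ wJ, subkd_refl _ wJ⟩
  have pc : MPack (.ty J :: Γ) Γ (scons B Ty.var) (scons B' Ty.var) := mpack_cons p0 e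
  obtain ⟨wfK, kkK, gK⟩ := mega_kdwf hK pc
  have eB : K.sub (scons B Ty.var) = K.subst 0 B := by
    rw [Kd.subst_eq, sgl0_eq_scons]
  have eB' : K.sub (scons B' Ty.var) = K.subst 0 B' := by
    rw [Kd.subst_eq, sgl0_eq_scons]
  rw [eB, eB'] at kkK
  rw [eB] at wfK
  exact ⟨kkK, wfK⟩
/-! ### Inversion of `lam` kinding -/

abbrev ML3 : ∀ (Γ : Ctx) (A : Ty) (K : Kd), Kinding Γ A K → Prop :=
  fun Γ T P _ => ∀ J₀ A₀ J K, T = .lam J₀ A₀ → P = .pi J K → KdWf Γ (.pi J K) →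
    ∃ K₀, Kinding (.ty J₀ :: Γ) A₀ K₀ ∧ SubKd Γ J J₀ ∧ SubKd (.ty J :: Γ) K₀ K ∧ KdWf Γ J₀

theorem lam_inv {Γ : Ctx} {T : Ty} {P : Kd} (h : Kinding Γ T P) :
    ML3 Γ T P h := by
  refine Kinding.rec (motive_1 := fun _ _ => True) (motive_2 := fun _ _ _ => True)
    (motive_3 := ML3) (motive_4 := fun _ _ _ _ => True) (motive_5 := fun _ _ _ _ => True)
    (motive_6 := fun _ _ _ _ _ => True) (motive_7 := fun _ _ _ _ => True)
    (motive_8 := fun _ _ _ _ _ => True)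
    ?_ ?_ ?_ ?_ ?_ ?_ ?_ ?_ ?_ ?_ ?_ ?_ ?_ ?_ ?_ ?_ ?_ ?_ ?_ ?_
    ?_ ?_ ?_ ?_ ?_ ?_ ?_ ?_ ?_ ?_ ?_ ?_ ?_ ?_ ?_ ?_ ?_ ?_ ?_ ?_ h
  case _ => trivial
  case _ => intros; trivial
  case _ => intros; trivial
  case _ => intros; trivial
  case _ => intros; trivial
  -- Kinding.var
  case _ => intro Γ x K a a1 _ J₀ A₀ J K' h1 h2 h3; cases h1
  -- top / bot
  case _ => intro Γ a _ J₀ A₀ J K' h1 h2 h3; cases h1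
  case _ => intro Γ a _ J₀ A₀ J K' h1 h2 h3; cases h1
  -- arr
  case _ => intro Γ A B a a1 _ _ J₀ A₀ J K' h1 h2 h3; cases h1
  -- abs
  case _ =>
    intro Γ J A K a a1 _ _ J₀ A₀ J' K' h1 h2 h3
    cases h1
    cases h2
    refine ⟨K, a1, subkd_refl _ a, subkd_refl _ (kinding_valid_wf a1), a⟩
  -- sing
  case _ => intro Γ A B C a _ J₀ A₀ J K' h1 h2 h3; cases h2
  -- all
  case _ => intro Γ K A a a1 _ _ J₀ A₀ J K' h1 h2 h3; cases h2
  -- app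
  case _ => intro Γ A J K B a a1 _ _ J₀ A₀ J' K' h1 h2 h3; cases h1
  -- sub
  case _ =>
    intro Γ A J K a a1 ih _ J₀ A₀ J' K' h1 h2 h3
    subst h1
    subst h2
    cases a1 with
    | pi c0 c1 c2 =>
        obtain ⟨K₀, hA, hJ, hK, wfJ₀⟩ := ih J₀ A₀ _ _ rfl rfl c0
        have wfJ' : KdWf Γ J' := by cases h3 with | pi w _ => exact w
        have wfK' : KdWf (.ty J' :: Γ) K' := by cases h3 with | pi _ w => exact w
        refine ⟨K₀, hA, subkd_trans _ c1 hJ wfJ₀, ?_, wfJ₀⟩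
        exact subkd_trans _ (subkd_narrow wfJ' c1 hK) c2 wfK'
  -- Typing cases
  case _ => intros; trivial
  case _ => intros; trivial
  case _ => intros; trivial
  case _ => intros; trivial
  case _ => intros; trivial
  case _ => intros; trivial
  -- SubKd / SubTy / eq cases
  all_goals intros; trivial
/-! ### Subject reduction -/

abbrev N2 : ∀ (Γ : Ctx) (K : Kd), KdWf Γ K → Prop :=
  fun Γ K _ => ∀ K', KdStep K K' → KdWf Γ K' ∧ KdEq Γ K K'
abbrev N3 : ∀ (Γ : Ctx) (A : Ty) (K : Kd), Kinding Γ A K → Prop :=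
  fun Γ A K _ => ∀ A', TyStep A A' → Kinding Γ A' K ∧ TyEq Γ A A' K

section SubjRed

theorem sr4 : ∀ {Γ : Ctx} {A B : Ty} (a : Kinding Γ A Kd.star) (a1 : Kinding Γ B Kd.star),
    N3 Γ A Kd.star a → N3 Γ B Kd.star a1 → N2 Γ (.intv A B) (KdWf.intv a a1) := by
  intro Γ A B a a1 ihA ihB K' st
  cases st with
  | intv₁ h =>
      obtain ⟨t', eq⟩ := ihA _ h
      obtain ⟨s12, s21⟩ : _ ∧ _ := by cases eq with | antisym u v => exact ⟨u, v⟩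
      exact ⟨KdWf.intv t' a1,
        KdEq.antisym (SubKd.intv s21 (SubTy.refl a1)) (SubKd.intv s12 (SubTy.refl a1))⟩
  | intv₂ h =>
      obtain ⟨t', eq⟩ := ihB _ h
      obtain ⟨s12, s21⟩ : _ ∧ _ := by cases eq with | antisym u v => exact ⟨u, v⟩
      exact ⟨KdWf.intv a t',
        KdEq.antisym (SubKd.intv (SubTy.refl a) s12) (SubKd.intv (SubTy.refl a) s21)⟩

theorem sr5 : ∀ {Γ : Ctx} {J K : Kd} (a : KdWf Γ J) (a1 : KdWf (.ty J :: Γ) K),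
    N2 Γ J a → N2 (.ty J :: Γ) K a1 → N2 Γ (.pi J K) (KdWf.pi a a1) := by
  intro Γ J K a a1 ihJ ihK K' st
  cases st with
  | pi₁ h =>
      obtain ⟨wJ', eq⟩ := ihJ _ h
      obtain ⟨kd12, kd21⟩ : _ ∧ _ := by cases eq with | antisym u v => exact ⟨u, v⟩
      have nar := kdwf_narrow wJ' kd21 a1
      refine ⟨KdWf.pi wJ' nar, KdEq.antisym ?_ ?_⟩
      · exact SubKd.pi (KdWf.pi a a1) kd21 (subkd_refl _ nar)
      · exact SubKd.pi (KdWf.pi wJ' nar) kd12 (subkd_refl _ a1)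
  | pi₂ h =>
      obtain ⟨wK', eq⟩ := ihK _ h
      obtain ⟨kk12, kk21⟩ : _ ∧ _ := by cases eq with | antisym u v => exact ⟨u, v⟩
      refine ⟨KdWf.pi a wK', KdEq.antisym ?_ ?_⟩
      · exact SubKd.pi (KdWf.pi a a1) (subkd_refl _ a) kk12
      · exact SubKd.pi (KdWf.pi a wK') (subkd_refl _ a) kk21

theorem sr9 : ∀ {Γ : Ctx} {A B : Ty} (a : Kinding Γ A Kd.star) (a1 : Kinding Γ B Kd.star),
    N3 Γ A Kd.star a → N3 Γ B Kd.star a1 → N3 Γ (.arr A B) Kd.star (Kinding.arr a a1) := by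
  intro Γ A B a a1 ihA ihB T' st
  cases st with
  | arr₁ h =>
      obtain ⟨t', eq⟩ := ihA _ h
      obtain ⟨s12, s21⟩ : _ ∧ _ := by cases eq with | antisym u v => exact ⟨u, v⟩
      exact ⟨Kinding.arr t' a1,
        TyEq.antisym (SubTy.arr s21 (SubTy.refl a1)) (SubTy.arr s12 (SubTy.refl a1))⟩
  | arr₂ h =>
      obtain ⟨t', eq⟩ := ihB _ h
      obtain ⟨s12, s21⟩ : _ ∧ _ := by cases eq with | antisym u v => exact ⟨u, v⟩
      exact ⟨Kinding.arr a t',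
        TyEq.antisym (SubTy.arr (SubTy.refl a) s12) (SubTy.arr (SubTy.refl a) s21)⟩

theorem sr10 : ∀ {Γ : Ctx} {J : Kd} {A : Ty} {K : Kd} (a : KdWf Γ J) (a1 : Kinding (.ty J :: Γ) A K),
    N2 Γ J a → N3 (.ty J :: Γ) A K a1 → N3 Γ (.lam J A) (.pi J K) (Kinding.abs a a1) := by
  intro Γ J A K a a1 ihJ ihA T' st
  cases st with
  | lam₁ h =>
      obtain ⟨wJ', eq⟩ := ihJ _ h
      obtain ⟨kd12, kd21⟩ : _ ∧ _ := by cases eq with | antisym u v => exact ⟨u, v⟩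
      have wfK : KdWf (.ty J :: Γ) K := kinding_valid_wf a1
      have nar := kinding_narrow wJ' kd21 a1
      have wfK' := kdwf_narrow wJ' kd21 wfK
      have t' : Kinding Γ (.lam _ A) (.pi J K) :=
        Kinding.sub (Kinding.abs wJ' nar)
          (SubKd.pi (KdWf.pi wJ' wfK') kd12 (subkd_refl _ wfK))
      refine ⟨t', TyEq.antisym ?_ ?_⟩
      · exact SubTy.abs (Kinding.abs a a1) t' (SubTy.refl a1)
      · exact SubTy.abs t' (Kinding.abs a a1) (SubTy.refl a1)
  | lam₂ h =>
      obtain ⟨t', eq⟩ := ihA _ h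
      obtain ⟨s12, s21⟩ : _ ∧ _ := by cases eq with | antisym u v => exact ⟨u, v⟩
      exact ⟨Kinding.abs a t',
        TyEq.antisym (SubTy.abs (Kinding.abs a a1) (Kinding.abs a t') s12)
          (SubTy.abs (Kinding.abs a t') (Kinding.abs a a1) s21)⟩

theorem sr11 : ∀ {Γ : Ctx} {A B C : Ty} (a : Kinding Γ A (.intv B C)),
    N3 Γ A (.intv B C) a → N3 Γ A (.intv A A) (Kinding.sing a) := by
  intro Γ A B C a ih T' st
  obtain ⟨t', eq⟩ := ih _ st
  obtain ⟨s12, s21⟩ : _ ∧ _ := by cases eq with | antisym u v => exact ⟨u, v⟩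
  have wf : KdWf Γ (.intv B C) := kinding_valid_wf a
  have toStar := intv_le_star wf
  have tS : Kinding Γ A Kd.star := Kinding.sub a toStar
  have tS' : Kinding Γ T' Kd.star := Kinding.sub t' toStar
  have s12S : SubTy Γ A T' Kd.star := SubTy.sub s12 toStar
  have s21S : SubTy Γ T' A Kd.star := SubTy.sub s21 toStar
  refine ⟨Kinding.sub (Kinding.sing t') (SubKd.intv s12S s21S), TyEq.antisym ?_ ?_⟩
  · exact SubTy.sub (SubTy.intv s12) (SubKd.intv (SubTy.refl tS) s21S)
  · exact SubTy.sub (SubTy.intv s21) (SubKd.intv s12S (SubTy.refl tS))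

theorem sr12 : ∀ {Γ : Ctx} {K : Kd} {A : Ty} (a : KdWf Γ K) (a1 : Kinding (.ty K :: Γ) A Kd.star),
    N2 Γ K a → N3 (.ty K :: Γ) A Kd.star a1 → N3 Γ (.all K A) Kd.star (Kinding.all a a1) := by
  intro Γ K A a a1 ihK ihA T' st
  cases st with
  | all₁ h =>
      obtain ⟨wK', eq⟩ := ihK _ h
      obtain ⟨kd12, kd21⟩ : _ ∧ _ := by cases eq with | antisym u v => exact ⟨u, v⟩
      have nar := kinding_narrow wK' kd21 a1
      refine ⟨Kinding.all wK' nar, TyEq.antisym ?_ ?_⟩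
      · exact SubTy.all (Kinding.all a a1) kd21 (SubTy.refl nar)
      · exact SubTy.all (Kinding.all wK' nar) kd12 (SubTy.refl a1)
  | all₂ h =>
      obtain ⟨t', eq⟩ := ihA _ h
      obtain ⟨s12, s21⟩ : _ ∧ _ := by cases eq with | antisym u v => exact ⟨u, v⟩
      refine ⟨Kinding.all a t', TyEq.antisym ?_ ?_⟩
      · exact SubTy.all (Kinding.all a a1) (subkd_refl _ a) s12
      · exact SubTy.all (Kinding.all a t') (subkd_refl _ a) s21

theorem sr13 : ∀ {Γ : Ctx} {A : Ty} {J K : Kd} {B : Ty} (a : Kinding Γ A (.pi J K)) (a1 : Kinding Γ B J),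
    N3 Γ A (.pi J K) a → N3 Γ B J a1 → N3 Γ (.app A B) (K.subst 0 B) (Kinding.app a a1) := by
  intro Γ A J K B a a1 ihA ihB T' st
  cases st with
  | @beta J₀ A₀ _ =>
      have wfP : KdWf Γ (.pi J K) := kinding_valid_wf a
      obtain ⟨K₀, hA₀, hJJ₀, hK₀K, wfJ₀⟩ := lam_inv a J₀ A₀ J K rfl rfl wfP
      have wfJ : KdWf Γ J := by cases wfP with | pi w _ => exact w
      have hBJ₀ : Kinding Γ B J₀ := Kinding.sub a1 hJJ₀
      have narA₀ : Kinding (.ty J :: Γ) A₀ K₀ := kinding_narrow wfJ hJJ₀ hA₀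
      have kdc : SubKd Γ (K₀.subst 0 B) (K.subst 0 B) := subkd_subst1 a1 hK₀K
      refine ⟨kinding_subst1 a1 (Kinding.sub narA₀ hK₀K), TyEq.antisym ?_ ?_⟩
      · exact SubTy.sub (SubTy.beta₁ hA₀ hBJ₀) kdc
      · exact SubTy.sub (SubTy.beta₂ hA₀ hBJ₀) kdc
  | app₁ h =>
      obtain ⟨tA', eq⟩ := ihA _ h
      obtain ⟨s12, s21⟩ : _ ∧ _ := by cases eq with | antisym u v => exact ⟨u, v⟩
      have eqB : TyEq Γ B B J := TyEq.antisym (SubTy.refl a1) (SubTy.refl a1)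
      exact ⟨Kinding.app tA' a1,
        TyEq.antisym (SubTy.app s12 eqB) (SubTy.app s21 eqB)⟩
  | app₂ h =>
      obtain ⟨tB', eq⟩ := ihB _ h
      obtain ⟨s12, s21⟩ : _ ∧ _ := by cases eq with | antisym u v => exact ⟨u, v⟩
      have gP : GoodKd Γ (.pi J K) := kinding_validity a
      have wfbody : KdWf (.ty J :: Γ) K := goodkd_pi_wfbody (goodkd_wf gP)
      have kk := (kdwf_functionality wfbody a1 tB' s12 s21).1
      have kk' := (kdwf_functionality wfbody tB' a1 s21 s12).1
      refine ⟨Kinding.sub (Kinding.app a tB') kk', TyEq.antisym ?_ ?_⟩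
      · exact SubTy.app (SubTy.refl a) (TyEq.antisym s12 s21)
      · exact SubTy.sub (SubTy.app (SubTy.refl a) (TyEq.antisym s21 s12)) kk'

theorem sr14 : ∀ {Γ : Ctx} {A : Ty} {J K : Kd} (a : Kinding Γ A J) (a1 : SubKd Γ J K),
    N3 Γ A J a → (fun _ _ _ _ => True : ∀ (Γ : Ctx) (J K : Kd), SubKd Γ J K → Prop) Γ J K a1 →
    N3 Γ A K (Kinding.sub a a1) := by
  intro Γ A J K a a1 ih _ T' st
  obtain ⟨t', eq⟩ := ih _ st
  obtain ⟨s12, s21⟩ : _ ∧ _ := by cases eq with | antisym u v => exact ⟨u, v⟩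
  exact ⟨Kinding.sub t' a1, TyEq.antisym (SubTy.sub s12 a1) (SubTy.sub s21 a1)⟩

end SubjRed

theorem main_kdwf {Γ : Ctx} {K : Kd} (h : KdWf Γ K) :
    ∀ K', KdStep K K' → KdWf Γ K' ∧ KdEq Γ K K' := by
  refine KdWf.rec (motive_1 := fun _ _ => True) (motive_2 := N2) (motive_3 := N3)
    (motive_4 := fun _ _ _ _ => True) (motive_5 := fun _ _ _ _ => True)
    (motive_6 := fun _ _ _ _ _ => True) (motive_7 := fun _ _ _ _ => True)
    (motive_8 := fun _ _ _ _ _ => True)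
    trivial (fun _ _ _ _ => trivial) (fun _ _ _ _ => trivial)
    sr4 sr5
    (fun a a1 _ A' st => by cases st) (fun a _ A' st => by cases st) (fun a _ A' st => by cases st)
    sr9 sr10 sr11 sr12 sr13 sr14
    (fun _ _ _ => trivial) (fun _ _ _ _ _ _ => trivial) (fun _ _ _ _ => trivial)
    (fun _ _ _ _ => trivial) (fun _ _ _ _ => trivial) (fun _ _ _ _ => trivial)
    (fun _ _ _ _ => trivial) (fun _ _ _ _ _ _ => trivial)
    (fun _ _ => trivial) (fun _ _ _ _ => trivial) (fun _ _ => trivial) (fun _ _ => trivial)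
    (fun _ _ _ _ => trivial) (fun _ _ _ _ => trivial) (fun _ _ => trivial) (fun _ _ => trivial)
    (fun _ _ _ _ => trivial) (fun _ _ _ _ _ _ => trivial) (fun _ _ _ _ _ _ => trivial)
    (fun _ _ _ _ => trivial) (fun _ _ => trivial) (fun _ _ => trivial) (fun _ _ => trivial)
    (fun _ _ _ _ => trivial) (fun _ _ _ _ => trivial) (fun _ _ _ _ => trivial) h

theorem main_kinding {Γ : Ctx} {A : Ty} {K : Kd} (h : Kinding Γ A K) :
    ∀ A', TyStep A A' → Kinding Γ A' K ∧ TyEq Γ A A' K := by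
  refine Kinding.rec (motive_1 := fun _ _ => True) (motive_2 := N2) (motive_3 := N3)
    (motive_4 := fun _ _ _ _ => True) (motive_5 := fun _ _ _ _ => True)
    (motive_6 := fun _ _ _ _ _ => True) (motive_7 := fun _ _ _ _ => True)
    (motive_8 := fun _ _ _ _ _ => True)
    trivial (fun _ _ _ _ => trivial) (fun _ _ _ _ => trivial)
    sr4 sr5
    (fun a a1 _ A' st => by cases st) (fun a _ A' st => by cases st) (fun a _ A' st => by cases st)
    sr9 sr10 sr11 sr12 sr13 sr14
    (fun _ _ _ => trivial) (fun _ _ _ _ _ _ => trivial) (fun _ _ _ _ => trivial)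
    (fun _ _ _ _ => trivial) (fun _ _ _ _ => trivial) (fun _ _ _ _ => trivial)
    (fun _ _ _ _ => trivial) (fun _ _ _ _ _ _ => trivial)
    (fun _ _ => trivial) (fun _ _ _ _ => trivial) (fun _ _ => trivial) (fun _ _ => trivial)
    (fun _ _ _ _ => trivial) (fun _ _ _ _ => trivial) (fun _ _ => trivial) (fun _ _ => trivial)
    (fun _ _ _ _ => trivial) (fun _ _ _ _ _ _ => trivial) (fun _ _ _ _ _ _ => trivial)
    (fun _ _ _ _ => trivial) (fun _ _ => trivial) (fun _ _ => trivial) (fun _ _ => trivial)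
    (fun _ _ _ _ => trivial) (fun _ _ _ _ => trivial) (fun _ _ _ _ => trivial) h
/-- **Subject reduction for well-kinded types** (Theorem 1 and its corollary):
one-step β-reductions of well-formed kinds and well-kinded types can be lifted
to declarative kind resp. type equality; consequently kind formation and
kinding are preserved by β-reduction. -/
theorem beta_red_teq :
    (∀ (Γ : Ctx) (J K : Kd), KdWf Γ J → KdStep J K → KdEq Γ J K) ∧
    (∀ (Γ : Ctx) (A B : Ty) (K : Kd), Kinding Γ A K → TyStep A B → TyEq Γ A B K) ∧
    (∀ (Γ : Ctx) (J K : Kd), KdWf Γ J → Relation.ReflTransGen KdStep J K → KdWf Γ K) ∧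
    (∀ (Γ : Ctx) (A B : Ty) (K : Kd), Kinding Γ A K →
      Relation.ReflTransGen TyStep A B → Kinding Γ B K) := by
  refine ⟨fun Γ J K h st => (main_kdwf h K st).2,
    fun Γ A B K h st => (main_kinding h B st).2, ?_, ?_⟩
  · intro Γ J K h hsteps
    induction hsteps with
    | refl => exact h
    | tail _ st ih => exact (main_kdwf ih _ st).1
  · intro Γ A B K h hsteps
    induction hsteps with
    | refl => exact h
    | tail _ st ih => exact (main_kinding ih _ st).1
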